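/- arXiv:2303.04369 — 8 statements merged into one kernel-verified Lean document; each statement's English description precedes it below -/
import Mathlib

section
/- Let (Ω, F, P) be a probability space, G ⊆ F a sub-σ-algebra, and ξ, η : Ω → ℝ^d square-integrable random variables. Then E[W₂(L_{ξ|G}, L_{η|G})²] ≤ E[E(|ξ − η|² | G)] = E[|ξ − η|²]. -/
open MeasureTheory ProbabilityTheory ENNReal

/-- The squared `L²`-Wasserstein distance between two measures:
`W₂(μ,ν)² = inf { ∫ dist(x,y)² dπ : π a coupling of μ and ν }`. -/
noncomputable def W2sq {E : Type*} [MeasurableSpace E] [PseudoEMetricSpace E]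
    (μ ν : Measure E) : ℝ≥0∞ :=
  ⨅ π ∈ {π : Measure (E × E) | IsProbabilityMeasure π ∧
      π.map Prod.fst = μ ∧ π.map Prod.snd = ν},
    ∫⁻ p, edist p.1 p.2 ^ 2 ∂π

section Aux

open Set

/-- If a Markov kernel `κ` satisfies the disintegration property of the conditional
distribution of `f` given `X`, then `P.map (fun ω => (X ω, f ω)) = (P.map X) ⊗ₘ κ`. -/
lemma aux_compProd {Ω Ω' E : Type*} [MeasurableSpace Ω] [MeasurableSpace Ω']
    [MeasurableSpace E]
    (P : Measure Ω) [IsFiniteMeasure P] (X : Ω → Ω') (hX : Measurable X)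
    (f : Ω → E) (hf : Measurable f) (κ : Kernel Ω' E) [IsMarkovKernel κ]
    (hκ : ∀ A : Set E, MeasurableSet A → ∀ t : Set Ω', MeasurableSet t →
      ∫⁻ ω in X ⁻¹' t, κ (X ω) A ∂P = P (X ⁻¹' t ∩ f ⁻¹' A)) :
    P.map (fun ω => (X ω, f ω)) = (P.map X) ⊗ₘ κ := by
  have hXf : Measurable fun ω => (X ω, f ω) := hX.prodMk hf
  have h1 : IsFiniteMeasure (P.map fun ω => (X ω, f ω)) :=
    Measure.isFiniteMeasure_map _ _
  refine MeasureTheory.ext_of_generate_finite _ generateFrom_prod.symm isPiSystem_prod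
    ?_ ?_
  · rintro s ⟨t, ht, A, hA, rfl⟩
    rw [Measure.map_apply hXf ((ht : MeasurableSet t).prod hA),
      Measure.compProd_apply_prod ht hA, mk_preimage_prod, ← hκ A hA t ht,
      Measure.restrict_map hX ht, lintegral_map (κ.measurable_coe hA) hX]
  · rw [Measure.map_apply hXf MeasurableSet.univ, ← Set.univ_prod_univ,
      Measure.compProd_apply_prod MeasurableSet.univ MeasurableSet.univ]
    simp [Measure.restrict_map hX MeasurableSet.univ,
      lintegral_map (κ.measurable_coe MeasurableSet.univ) hX,
      Measure.map_apply hX MeasurableSet.univ]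

/-- A Markov kernel satisfying the disintegration property of the conditional distribution
of `f` given `X` agrees `P`-a.e. with `condDistrib f X P`. -/
lemma aux_ae_eq_condDistrib {Ω Ω' E : Type*} [MeasurableSpace Ω] [MeasurableSpace Ω']
    [MeasurableSpace E] [StandardBorelSpace E] [Nonempty E]
    (P : Measure Ω) [IsFiniteMeasure P] (X : Ω → Ω') (hX : Measurable X)
    (f : Ω → E) (hf : Measurable f) (κ : Kernel Ω' E) [IsMarkovKernel κ]
    (hκ : ∀ A : Set E, MeasurableSet A → ∀ t : Set Ω', MeasurableSet t →
      ∫⁻ ω in X ⁻¹' t, κ (X ω) A ∂P = P (X ⁻¹' t ∩ f ⁻¹' A)) :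
    ∀ᵐ ω ∂P, κ (X ω) = condDistrib f X P (X ω) :=
  ae_of_ae_map hX.aemeasurable
    (condDistrib_ae_eq_of_measure_eq_compProd_of_measurable hX hf (aux_compProd P X hX f hf κ hκ)).symm

end Aux

/-- For square-integrable `ξ, η : Ω → ℝ^d` and a sub-σ-algebra `G ⊆ F`, if `κξ, κη` are
regular conditional distributions of `ξ` resp. `η` given `G`, then
`E[W₂(L_{ξ|G}, L_{η|G})²] ≤ E[E(|ξ - η|² | G)] = E[|ξ - η|²]`. -/
theorem conditional_wasserstein_le_conditional_second_moment
    {d : ℕ} {Ω : Type*} (G : MeasurableSpace Ω) (F : MeasurableSpace Ω) (hG : G ≤ F)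
    (P : Measure Ω) [IsProbabilityMeasure P]
    (ξ η : Ω → EuclideanSpace ℝ (Fin d))
    (hξm : Measurable ξ) (hηm : Measurable η)
    (hξ : MemLp ξ 2 P) (hη : MemLp η 2 P)
    (κξ κη : @Kernel Ω (EuclideanSpace ℝ (Fin d)) G _)
    [IsMarkovKernel κξ] [IsMarkovKernel κη]
    (hκξ : ∀ A : Set (EuclideanSpace ℝ (Fin d)), MeasurableSet A →
      ∀ B : Set Ω, MeasurableSet[G] B → ∫⁻ ω in B, κξ ω A ∂P = P (B ∩ ξ ⁻¹' A))
    (hκη : ∀ A : Set (EuclideanSpace ℝ (Fin d)), MeasurableSet A →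
      ∀ B : Set Ω, MeasurableSet[G] B → ∫⁻ ω in B, κη ω A ∂P = P (B ∩ η ⁻¹' A)) :
    (∫⁻ ω, W2sq (κξ ω) (κη ω) ∂P
        ≤ ENNReal.ofReal (∫ ω, (P[fun ω' => ‖ξ ω' - η ω'‖ ^ 2 | G]) ω ∂P)) ∧
    ∫ ω, (P[fun ω' => ‖ξ ω' - η ω'‖ ^ 2 | G]) ω ∂P = ∫ ω, ‖ξ ω - η ω‖ ^ 2 ∂P := by
  -- `X` is the identity, measurable from `F` to `G`.
  have hX : @Measurable Ω Ω F G id := measurable_id'' hG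
  have hY : Measurable (fun ω => (ξ ω, η ω)) := hξm.prodMk hηm
  -- the joint conditional distribution kernel
  set κ : @Kernel Ω (EuclideanSpace ℝ (Fin d) × EuclideanSpace ℝ (Fin d)) G _ :=
    @condDistrib Ω Ω (EuclideanSpace ℝ (Fin d) × EuclideanSpace ℝ (Fin d)) _ _ _ F G
      (fun ω => (ξ ω, η ω)) id P _ with hκdef
  haveI hκMarkov : IsMarkovKernel κ := by
    rw [hκdef]; infer_instance
  haveI : IsFiniteMeasure P := inferInstance
  -- the conditional distribution of ξ given G, and a.e. identification with κξ
  have h1 : ∀ᵐ ω ∂P, κξ (id ω) =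
      (@condDistrib Ω Ω (EuclideanSpace ℝ (Fin d)) _ _ _ F G ξ id P _) (id ω) := by
    refine @aux_ae_eq_condDistrib Ω Ω (EuclideanSpace ℝ (Fin d)) F G _ _ _ P _ id hX
      ξ hξm κξ _ ?_
    intro A hA t ht
    exact hκξ A hA t ht
  have h2 : ∀ᵐ ω ∂P, (κ.map Prod.fst) (id ω) =
      (@condDistrib Ω Ω (EuclideanSpace ℝ (Fin d)) _ _ _ F G ξ id P _) (id ω) := by
    haveI : IsMarkovKernel (κ.map Prod.fst) := Kernel.IsMarkovKernel.map κ measurable_fst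
    refine @aux_ae_eq_condDistrib Ω Ω (EuclideanSpace ℝ (Fin d)) F G _ _ _ P _ id hX
      ξ hξm (κ.map Prod.fst) _ ?_
    intro A hA t ht
    have h := setLIntegral_preimage_condDistrib (μ := P) (X := id)
      (Y := fun ω => (ξ ω, η ω)) hX hY.aemeasurable (measurable_fst hA) ht
    simp only [Kernel.map_apply' κ measurable_fst _ hA]
    rw [hκdef]
    exact h
  have h1' : ∀ᵐ ω ∂P, κη (id ω) =
      (@condDistrib Ω Ω (EuclideanSpace ℝ (Fin d)) _ _ _ F G η id P _) (id ω) := by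
    refine @aux_ae_eq_condDistrib Ω Ω (EuclideanSpace ℝ (Fin d)) F G _ _ _ P _ id hX
      η hηm κη _ ?_
    intro A hA t ht
    exact hκη A hA t ht
  have h2' : ∀ᵐ ω ∂P, (κ.map Prod.snd) (id ω) =
      (@condDistrib Ω Ω (EuclideanSpace ℝ (Fin d)) _ _ _ F G η id P _) (id ω) := by
    haveI : IsMarkovKernel (κ.map Prod.snd) := Kernel.IsMarkovKernel.map κ measurable_snd
    refine @aux_ae_eq_condDistrib Ω Ω (EuclideanSpace ℝ (Fin d)) F G _ _ _ P _ id hX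
      η hηm (κ.map Prod.snd) _ ?_
    intro A hA t ht
    have h := setLIntegral_preimage_condDistrib (μ := P) (X := id)
      (Y := fun ω => (ξ ω, η ω)) hX hY.aemeasurable (measurable_snd hA) ht
    simp only [Kernel.map_apply' κ measurable_snd _ hA]
    rw [hκdef]
    exact h
  -- a.e. bound on W2sq by the cost of the coupling κ ω
  have hW : ∀ᵐ ω ∂P, W2sq (κξ ω) (κη ω) ≤ ∫⁻ p, edist p.1 p.2 ^ 2 ∂(κ ω) := by
    filter_upwards [h1, h2, h1', h2'] with ω e1 e2 e1' e2'
    have hfst : (κ ω).map Prod.fst = κξ ω := by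
      rw [← Kernel.map_apply κ measurable_fst ω]
      exact e2.trans e1.symm
    have hsnd : (κ ω).map Prod.snd = κη ω := by
      rw [← Kernel.map_apply κ measurable_snd ω]
      exact e2'.trans e1'.symm
    exact iInf₂_le (κ ω) ⟨inferInstance, hfst, hsnd⟩
  -- measurability of the cost function
  have hg : Measurable (fun p : (EuclideanSpace ℝ (Fin d)) × (EuclideanSpace ℝ (Fin d)) =>
      edist p.1 p.2 ^ 2) := (measurable_edist).pow_const 2
  -- integrability of ‖ξ - η‖²
  have hint : Integrable (fun ω => ‖ξ ω - η ω‖ ^ 2) P := by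
    have h := (hξ.sub hη).integrable_norm_rpow two_ne_zero ENNReal.ofNat_ne_top
    simp only [ENNReal.toReal_ofNat, Pi.sub_apply] at h
    have : ∀ ω : Ω, ‖ξ ω - η ω‖ ^ (2 : ℝ) = ‖ξ ω - η ω‖ ^ (2 : ℕ) := fun ω => by
      rw [← Real.rpow_natCast]; norm_num
    simpa [this] using h
  -- key computation: the iterated integral equals E[|ξ-η|²]
  have hkey : ∫⁻ ω, (∫⁻ p, edist p.1 p.2 ^ 2 ∂(κ ω)) ∂P
      = ∫⁻ ω, edist (ξ ω) (η ω) ^ 2 ∂P := by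
    have hmeas : Measurable[G] (fun x => ∫⁻ p, edist p.1 p.2 ^ 2 ∂(κ x)) :=
      Measurable.lintegral_kernel_prod_right' (κ := κ) (hg.comp measurable_snd)
    have hcomp : (@Measure.map Ω Ω F G id P) ⊗ₘ κ
        = @Measure.map Ω (Ω × (EuclideanSpace ℝ (Fin d) × EuclideanSpace ℝ (Fin d))) F
            (@Prod.instMeasurableSpace Ω _ G _) (fun ω => (id ω, (ξ ω, η ω))) P := by
      refine (@aux_compProd Ω Ω (EuclideanSpace ℝ (Fin d) × EuclideanSpace ℝ (Fin d)) F G _ P _ id hX (fun ω => (ξ ω, η ω)) hY κ _ ?_).symm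
      intro A hA t ht
      have h := setLIntegral_preimage_condDistrib (μ := P) (X := id)
        (Y := fun ω => (ξ ω, η ω)) hX hY.aemeasurable hA ht
      rw [hκdef]
      exact h
    calc ∫⁻ ω, (∫⁻ p, edist p.1 p.2 ^ 2 ∂(κ ω)) ∂P
        = ∫⁻ x, (∫⁻ p, edist p.1 p.2 ^ 2 ∂(κ x)) ∂(@Measure.map Ω Ω F G id P) :=
          (@lintegral_map Ω Ω F G P _ _ hmeas hX).symm
      _ = ∫⁻ q, edist q.2.1 q.2.2 ^ 2 ∂((@Measure.map Ω Ω F G id P) ⊗ₘ κ) :=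
          (Measure.lintegral_compProd (hg.comp measurable_snd)).symm
      _ = ∫⁻ q, edist q.2.1 q.2.2 ^ 2
            ∂(@Measure.map Ω (Ω × (EuclideanSpace ℝ (Fin d) × EuclideanSpace ℝ (Fin d))) F
              (@Prod.instMeasurableSpace Ω _ G _) (fun ω => (id ω, (ξ ω, η ω))) P) := by
          rw [hcomp]
      _ = ∫⁻ ω, edist (ξ ω) (η ω) ^ 2 ∂P :=
          @lintegral_map Ω _ F (@Prod.instMeasurableSpace Ω _ G _) P _ _ (hg.comp measurable_snd) (hX.prodMk hY)
  -- identification with the real integral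
  have hreal : ∫⁻ ω, edist (ξ ω) (η ω) ^ 2 ∂P
      = ENNReal.ofReal (∫ ω, ‖ξ ω - η ω‖ ^ 2 ∂P) := by
    rw [ofReal_integral_eq_lintegral_ofReal hint
      (Filter.Eventually.of_forall fun ω => pow_nonneg (norm_nonneg _) 2)]
    refine lintegral_congr fun ω => ?_
    rw [edist_eq_enorm_sub, ENNReal.ofReal_pow (norm_nonneg _),
      ofReal_norm]
  -- the equality of integrals via the conditional expectation
  haveI : IsFiniteMeasure (P.trim hG) := isFiniteMeasure_trim hG
  have heq : ∫ ω, (P[fun ω' => ‖ξ ω' - η ω'‖ ^ 2 | G]) ω ∂P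
      = ∫ ω, ‖ξ ω - η ω‖ ^ 2 ∂P := integral_condExp hG
  refine ⟨?_, heq⟩
  rw [heq, ← hreal, ← hkey]
  exact lintegral_mono_ae hW
end

section
/- For any probability measures μ and ν on a measurable space E, Ent(ν|μ) = sup { ∫ log f dν − log ∫ f dμ : f : E → ℝ bounded measurable with inf f > 0 }, where both sides may equal +∞ simultaneously (in particular both sides are +∞ when ν is not absolutely continuous with respect to μ). -/
open MeasureTheory ENNReal Classical

/-- Relative entropy `Ent(ν|μ) = ∫ log (dν/dμ) dν` if `ν ≪ μ` (and the integral exists),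
and `Ent(ν|μ) = ∞` otherwise. -/

noncomputable def Ent {E : Type*} [MeasurableSpace E] (ν μ : Measure E) : ℝ≥0∞ :=
  if ν ≪ μ ∧ Integrable (fun x => Real.log (ν.rnDeriv μ x).toReal) ν
  then ENNReal.ofReal (∫ x, Real.log (ν.rnDeriv μ x).toReal ∂ν)
  else ⊤

section EntHelpers

variable {E : Type*} [MeasurableSpace E] (ν μ : Measure E)

lemma Ent.key_bound [SigmaFinite μ] [SigmaFinite ν]
    (hac : ν ≪ μ) {f : E → ℝ} (hf : Measurable f) :
    ∫⁻ x, ENNReal.ofReal (f x / (ν.rnDeriv μ x).toReal) ∂ν ≤ ∫⁻ x, ENNReal.ofReal (f x) ∂μ := by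
  set r := ν.rnDeriv μ with hr
  have hrm : Measurable r := Measure.measurable_rnDeriv ν μ
  have hνd : ν = μ.withDensity r := (Measure.withDensity_rnDeriv_eq ν μ hac).symm
  rw [hνd, lintegral_withDensity_eq_lintegral_mul _ hrm
    (show Measurable fun x => ENNReal.ofReal (f x / (r x).toReal) from
      (hf.div hrm.ennreal_toReal).ennreal_ofReal)]
  refine lintegral_mono_ae ?_
  filter_upwards [Measure.rnDeriv_lt_top ν μ] with x hx
  rw [← hr] at hx
  simp only [Pi.mul_apply]
  rcases eq_or_ne (r x) 0 with h0 | h0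
  · simp [h0]
  · have ht : 0 < (r x).toReal := ENNReal.toReal_pos h0 hx.ne
    rw [← ENNReal.ofReal_toReal hx.ne, ← ENNReal.ofReal_mul ht.le,
      ENNReal.toReal_ofReal ht.le, mul_div_cancel₀ _ ht.ne']

lemma Ent.rpos [SigmaFinite μ] [SigmaFinite ν] (hac : ν ≪ μ) :
    ∀ᵐ x ∂ν, 0 < (ν.rnDeriv μ x).toReal := by
  filter_upwards [Measure.rnDeriv_pos hac, (Measure.rnDeriv_lt_top ν μ).filter_mono hac.ae_le]
    with x h1 h2
  exact ENNReal.toReal_pos h1.ne' h2.ne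

lemma Ent.int_bounded [IsProbabilityMeasure μ] {f : E → ℝ} (hf : Measurable f) {a C : ℝ}
    (hC : ∀ x, f x ≤ C) (hε : ∀ x, a ≤ f x) : Integrable f μ := by
  refine Integrable.mono' (integrable_const (max |a| |C|)) hf.aestronglyMeasurable ?_
  refine Filter.Eventually.of_forall fun x => abs_le.2 ⟨?_, ?_⟩
  · calc -max |a| |C| ≤ -|a| := by simp
      _ ≤ a := neg_abs_le a
      _ ≤ f x := hε x
  · exact (hC x).trans ((le_abs_self C).trans (le_max_right _ _))

lemma Ent.per_f_bound [IsProbabilityMeasure μ] [IsProbabilityMeasure ν] (hac : ν ≪ μ)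
    (hint : Integrable (fun x => Real.log (ν.rnDeriv μ x).toReal) ν)
    {f : E → ℝ} (hf : Measurable f) {C ε : ℝ} (hC : ∀ x, f x ≤ C)
    (hε : 0 < ε) (hεf : ∀ x, ε ≤ f x) :
    ∫ x, Real.log (f x) ∂ν - Real.log (∫ x, f x ∂μ)
      ≤ ∫ x, Real.log (ν.rnDeriv μ x).toReal ∂ν := by
  set r : E → ℝ := fun x => (ν.rnDeriv μ x).toReal with hr
  have hrm : Measurable r := (Measure.measurable_rnDeriv ν μ).ennreal_toReal
  have hfμ : Integrable f μ := Ent.int_bounded μ hf hC hεf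
  have hfpos : ∀ x, 0 < f x := fun x => hε.trans_le (hεf x)
  set I : ℝ := ∫ x, f x ∂μ with hI
  have hIpos : 0 < I := by
    have : ∫ (_ : E), ε ∂μ ≤ I := integral_mono (integrable_const ε) hfμ hεf
    simpa using hε.trans_le (by simpa using this)
  set g : E → ℝ := fun x => f x / r x with hg
  have hgm : Measurable g := hf.div hrm
  have hgnn : ∀ x, 0 ≤ g x := fun x => div_nonneg (hfpos x).le (ENNReal.toReal_nonneg)
  have hfl : ∫⁻ x, ENNReal.ofReal (f x) ∂μ ≤ ENNReal.ofReal C := by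
    calc ∫⁻ x, ENNReal.ofReal (f x) ∂μ ≤ ∫⁻ _, ENNReal.ofReal C ∂μ :=
          lintegral_mono fun x => ENNReal.ofReal_le_ofReal (hC x)
      _ = ENNReal.ofReal C := by simp
  have hlin : ∫⁻ x, ENNReal.ofReal (g x) ∂ν ≤ ENNReal.ofReal C :=
    (Ent.key_bound ν μ hac hf).trans hfl
  have hgint : Integrable g ν := by
    refine ⟨hgm.aestronglyMeasurable, ?_⟩
    rw [hasFiniteIntegral_iff_ofReal (Filter.Eventually.of_forall hgnn)]
    exact hlin.trans_lt ENNReal.ofReal_lt_top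
  have hgI : ∫ x, g x ∂ν ≤ I := by
    rw [integral_eq_lintegral_of_nonneg_ae (Filter.Eventually.of_forall hgnn)
      hgm.aestronglyMeasurable, hI,
      integral_eq_lintegral_of_nonneg_ae (Filter.Eventually.of_forall fun x => (hfpos x).le)
      hf.aestronglyMeasurable]
    exact ENNReal.toReal_mono (hfl.trans_lt ENNReal.ofReal_lt_top).ne (Ent.key_bound ν μ hac hf)
  have hlogf : Integrable (fun x => Real.log (f x)) ν :=
    Ent.int_bounded ν (Real.measurable_log.comp hf)
      (fun x => Real.log_le_log (hfpos x) (hC x))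
      (fun x => Real.log_le_log hε (hεf x))
  have hkey : ∀ᵐ x ∂ν, Real.log (f x) - Real.log (r x) ≤ g x / I - 1 + Real.log I := by
    filter_upwards [Ent.rpos ν μ hac] with x hx
    have hgx : 0 < g x := div_pos (hfpos x) hx
    have h1 : Real.log (f x) - Real.log (r x) = Real.log (g x) :=
      (Real.log_div (hfpos x).ne' hx.ne').symm
    have h2 : Real.log (g x) - Real.log I ≤ g x / I - 1 := by
      have := Real.log_le_sub_one_of_pos (div_pos hgx hIpos)
      rwa [Real.log_div hgx.ne' hIpos.ne'] at this
    linarith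
  have h1 : Integrable (fun x => g x / I - 1) ν :=
    (hgint.div_const I).sub (integrable_const 1)
  have hrhs : Integrable (fun x => g x / I - 1 + Real.log I) ν :=
    h1.add (integrable_const _)
  have hmain : ∫ x, (Real.log (f x) - Real.log (r x)) ∂ν
      ≤ ∫ x, (g x / I - 1 + Real.log I) ∂ν :=
    integral_mono_ae (hlogf.sub hint) hrhs hkey
  have hRHS : ∫ x, (g x / I - 1 + Real.log I) ∂ν ≤ Real.log I := by
    rw [integral_add h1 (integrable_const _),
      integral_sub (hgint.div_const I) (integrable_const 1), integral_div, integral_const,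
      integral_const]
    have : (∫ x, g x ∂ν) / I ≤ 1 := by
      rw [div_le_one hIpos]; exact hgI
    simp only [probReal_univ, ENNReal.toReal_one, one_smul, smul_eq_mul, one_mul]
    linarith
  rw [integral_sub hlogf hint] at hmain
  linarith [hmain.trans hRHS]

lemma Ent.abs_log_trunc {t ε c : ℝ} (ht : 0 < t) (hε : 0 < ε) (hε1 : ε ≤ 1) (hc : 1 ≤ c) :
    |Real.log (min (max t ε) c)| ≤ |Real.log t| := by
  rcases le_total t ε with h | h
  · rw [max_eq_right h, min_eq_left (hε1.trans hc)]
    have h1 : Real.log ε ≤ 0 := Real.log_nonpos hε.le hε1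
    have h2 : Real.log t ≤ Real.log ε := Real.log_le_log ht h
    rw [abs_of_nonpos h1, abs_of_nonpos (h2.trans h1)]
    linarith
  · rw [max_eq_left h]
    rcases le_total t c with h2 | h2
    · rw [min_eq_left h2]
    · rw [min_eq_right h2]
      have hc0 : 0 < c := lt_of_lt_of_le one_pos hc
      have h3 : (0:ℝ) ≤ Real.log c := Real.log_nonneg hc
      have h4 : Real.log c ≤ Real.log t := Real.log_le_log hc0 h2
      rw [abs_of_nonneg h3, abs_of_nonneg (h3.trans h4)]
      exact h4

lemma Ent.log_trunc_eq {t : ℝ} (ht : 0 ≤ t) (c : ℝ) (hc : 1 ≤ c) :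
    Real.log (min (max t 1) c) = min (max (Real.log t) 0) (Real.log c) := by
  have hlc : 0 ≤ Real.log c := Real.log_nonneg hc
  rcases le_total t 1 with h | h
  · rw [max_eq_right h, min_eq_left hc, Real.log_one,
      max_eq_right (Real.log_nonpos ht h), min_eq_left hlc]
  · rw [max_eq_left h]
    have ht0 : 0 < t := lt_of_lt_of_le one_pos h
    have hlt : 0 ≤ Real.log t := Real.log_nonneg h
    rw [max_eq_left hlt]
    rcases le_total t c with h2 | h2
    · rw [min_eq_left h2, min_eq_left (Real.log_le_log ht0 h2)]
    · rw [min_eq_right h2, min_eq_right (Real.log_le_log (lt_of_lt_of_le one_pos hc) h2)]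

end EntHelpers

/-- Variational (Donsker–Varadhan) formula:
`Ent(ν|μ) = sup { ∫ log f dν − log ∫ f dμ : f bounded measurable, inf f > 0 }`,
where both sides may simultaneously be `+∞`. -/
theorem ent_eq_iSup_integral_log
    {E : Type*} [MeasurableSpace E] (ν μ : Measure E)
    [IsProbabilityMeasure μ] [IsProbabilityMeasure ν] :
    Ent ν μ =
      ⨆ (f : E → ℝ) (_ : Measurable f) (_ : ∃ C : ℝ, ∀ x, f x ≤ C)
        (_ : ∃ ε > (0 : ℝ), ∀ x, ε ≤ f x),
        ENNReal.ofReal (∫ x, Real.log (f x) ∂ν - Real.log (∫ x, f x ∂μ)) := by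
  set S := ⨆ (f : E → ℝ) (_ : Measurable f) (_ : ∃ C : ℝ, ∀ x, f x ≤ C)
        (_ : ∃ ε > (0 : ℝ), ∀ x, ε ≤ f x),
        ENNReal.ofReal (∫ x, Real.log (f x) ∂ν - Real.log (∫ x, f x ∂μ)) with hS
  set r : E → ℝ := fun x => (ν.rnDeriv μ x).toReal with hrdef
  have hrm : Measurable r := (Measure.measurable_rnDeriv ν μ).ennreal_toReal
  -- Each admissible f contributes a lower bound to S
  have le_S : ∀ (f : E → ℝ), Measurable f → (∃ C : ℝ, ∀ x, f x ≤ C) →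
      (∃ ε > (0 : ℝ), ∀ x, ε ≤ f x) →
      ENNReal.ofReal (∫ x, Real.log (f x) ∂ν - Real.log (∫ x, f x ∂μ)) ≤ S := by
    intro f hf hb hl
    rw [hS]
    exact le_iSup_of_le f (le_iSup_of_le hf (le_iSup_of_le hb (le_iSup_of_le hl le_rfl)))
  -- If there are admissible f's of arbitrarily large value, S = ⊤
  have S_top : (∀ M : ℝ, ∃ f : E → ℝ, Measurable f ∧ (∃ C : ℝ, ∀ x, f x ≤ C) ∧
      (∃ ε > (0 : ℝ), ∀ x, ε ≤ f x) ∧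
      M ≤ ∫ x, Real.log (f x) ∂ν - Real.log (∫ x, f x ∂μ)) → S = ⊤ := by
    intro h
    refine ENNReal.eq_top_of_forall_nnreal_le fun q => ?_
    obtain ⟨f, hf, hb, hl, hM⟩ := h q
    calc (q : ℝ≥0∞) = ENNReal.ofReal (q : ℝ) := by simp
      _ ≤ ENNReal.ofReal (∫ x, Real.log (f x) ∂ν - Real.log (∫ x, f x ∂μ)) :=
          ENNReal.ofReal_le_ofReal hM
      _ ≤ S := le_S f hf hb hl
  have hrint : Integrable r μ := Measure.integrable_toReal_rnDeriv
  have hrI : ∫ x, r x ∂μ ≤ 1 := by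
    have := Measure.setIntegral_toReal_rnDeriv_le (μ := ν) (ν := μ) (s := Set.univ)
      (measure_ne_top ν _)
    simpa using this
  by_cases hcond : ν ≪ μ ∧ Integrable (fun x => Real.log (ν.rnDeriv μ x).toReal) ν
  · -- finite case
    obtain ⟨hac, hint⟩ := hcond
    rw [Ent, if_pos ⟨hac, hint⟩]
    refine le_antisymm ?_ ?_
    · -- Ent ≤ S via truncations
      set F : ℕ → E → ℝ := fun n x => min (max (r x) (1/((n:ℝ)+1))) ((n:ℝ)+1) with hF
      have hn1 : ∀ n : ℕ, (0:ℝ) < 1/((n:ℝ)+1) := by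
        intro n; positivity
      have hn2 : ∀ n : ℕ, (1:ℝ)/((n:ℝ)+1) ≤ 1 := by
        intro n
        rw [div_le_one (by positivity)]
        simp
      have hn3 : ∀ n : ℕ, (1:ℝ) ≤ (n:ℝ)+1 := by intro n; simp
      have hFm : ∀ n, Measurable (F n) := fun n =>
        (hrm.max measurable_const).min measurable_const
      have hFub : ∀ (n : ℕ) (x : E), F n x ≤ (n:ℝ)+1 := fun n x => min_le_right _ _
      have hFlb : ∀ (n : ℕ) (x : E), 1/((n:ℝ)+1) ≤ F n x := fun n x =>
        le_min (le_max_right _ _) ((hn2 n).trans (hn3 n))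
      have hFint : ∀ n, Integrable (F n) μ := fun n =>
        Ent.int_bounded μ (hFm n) (hFub n) (hFlb n)
      have hFI_le : ∀ n, ∫ x, F n x ∂μ ≤ 1 + 1/((n:ℝ)+1) := by
        intro n
        have hptw : ∀ x, F n x ≤ r x + 1/((n:ℝ)+1) := by
          intro x
          refine (min_le_left _ _).trans (max_le ?_ ?_)
          · have : (0:ℝ) ≤ 1/((n:ℝ)+1) := (hn1 n).le
            linarith
          · have : (0:ℝ) ≤ r x := ENNReal.toReal_nonneg
            linarith
        calc ∫ x, F n x ∂μ ≤ ∫ x, (r x + 1/((n:ℝ)+1)) ∂μ :=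
              integral_mono (hFint n) (hrint.add (integrable_const _)) hptw
          _ = ∫ x, r x ∂μ + 1/((n:ℝ)+1) := by
              rw [integral_add hrint (integrable_const _), integral_const]; simp
          _ ≤ 1 + 1/((n:ℝ)+1) := by linarith
      have hFI_pos : ∀ n, 0 < ∫ x, F n x ∂μ := by
        intro n
        have : ∫ (_ : E), 1/((n:ℝ)+1) ∂μ ≤ ∫ x, F n x ∂μ :=
          integral_mono (integrable_const _) (hFint n) (hFlb n)
        simp only [integral_const, probReal_univ, ENNReal.toReal_one, one_smul] at this
        exact (hn1 n).trans_le this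
      -- dominated convergence for ∫ log (F n) dν
      have hlog_tendsto : Filter.Tendsto (fun n => ∫ x, Real.log (F n x) ∂ν)
          Filter.atTop (nhds (∫ x, Real.log (r x) ∂ν)) := by
        refine tendsto_integral_of_dominated_convergence (fun x => |Real.log (r x)|)
          (fun n => (Real.measurable_log.comp (hFm n)).aestronglyMeasurable)
          hint.abs ?_ ?_
        · intro n
          filter_upwards [Ent.rpos ν μ hac] with x hx
          rw [Real.norm_eq_abs]
          exact Ent.abs_log_trunc hx (hn1 n) (hn2 n) (hn3 n)
        · filter_upwards [Ent.rpos ν μ hac] with x hx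
          obtain ⟨N, hN⟩ := exists_nat_ge (max (1/(r x)) (r x))
          refine Filter.Tendsto.congr' ?_ tendsto_const_nhds
          filter_upwards [Filter.eventually_ge_atTop N] with n hn
          have h1 : 1/((n:ℝ)+1) ≤ r x := by
            have hNx : 1/(r x) ≤ (N:ℝ) := (le_max_left _ _).trans hN
            have hn' : (N:ℝ) ≤ (n:ℝ) := Nat.cast_le.mpr hn
            rw [div_le_iff₀ (by positivity)]
            rw [div_le_iff₀ hx] at hNx
            nlinarith [ENNReal.toReal_nonneg (a := ν.rnDeriv μ x)]
          have h2 : r x ≤ (n:ℝ)+1 := by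
            have := (le_max_right (1/(r x)) (r x)).trans hN
            have hn' : (N:ℝ) ≤ (n:ℝ) := Nat.cast_le.mpr hn
            linarith
          rw [hF]
          simp only [max_eq_left h1, min_eq_left h2]
      have hcorr : Filter.Tendsto (fun n : ℕ => Real.log (1 + 1/((n:ℝ)+1)))
          Filter.atTop (nhds 0) := by
        have h0 : Filter.Tendsto (fun n : ℕ => 1 + 1/((n:ℝ)+1)) Filter.atTop (nhds 1) := by
          have := tendsto_one_div_add_atTop_nhds_zero_nat (𝕜 := ℝ)
          simpa using (tendsto_const_nhds (x := (1:ℝ)) (f := Filter.atTop)).add this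
        have := (Real.continuousAt_log (x := 1) one_ne_zero).tendsto.comp h0
        simpa [Function.comp_def, one_div] using this
      have hW : Filter.Tendsto
          (fun n : ℕ => ENNReal.ofReal (∫ x, Real.log (F n x) ∂ν - Real.log (1 + 1/((n:ℝ)+1))))
          Filter.atTop (nhds (ENNReal.ofReal (∫ x, Real.log (r x) ∂ν))) := by
        have : Filter.Tendsto
            (fun n : ℕ => ∫ x, Real.log (F n x) ∂ν - Real.log (1 + 1/((n:ℝ)+1)))
            Filter.atTop (nhds (∫ x, Real.log (r x) ∂ν)) := by
          simpa using hlog_tendsto.sub hcorr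
        exact (ENNReal.continuous_ofReal.tendsto _).comp this
      refine le_of_tendsto hW (Filter.Eventually.of_forall fun n => ?_)
      refine le_trans (ENNReal.ofReal_le_ofReal ?_)
        (le_S (F n) (hFm n) ⟨(n:ℝ)+1, hFub n⟩ ⟨1/((n:ℝ)+1), hn1 n, hFlb n⟩)
      have : Real.log (∫ x, F n x ∂μ) ≤ Real.log (1 + 1/((n:ℝ)+1)) :=
        Real.log_le_log (hFI_pos n) (hFI_le n)
      linarith
    · -- S ≤ Ent
      refine iSup_le fun f => iSup_le fun hf => iSup_le fun hb => iSup_le fun hl => ?_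
      obtain ⟨C, hC⟩ := hb
      obtain ⟨ε, hε, hεf⟩ := hl
      exact ENNReal.ofReal_le_ofReal (Ent.per_f_bound ν μ hac hint hf hC hε hεf)
  · -- infinite case
    rw [Ent, if_neg hcond]
    refine (S_top ?_).symm
    by_cases hac : ν ≪ μ
    · -- ν ≪ μ but log r not integrable
      have hint : ¬ Integrable (fun x => Real.log (ν.rnDeriv μ x).toReal) ν :=
        fun h => hcond ⟨hac, h⟩
      -- negative part has finite lintegral
      have hneg : ∫⁻ x, ENNReal.ofReal (max (-Real.log (r x)) 0) ∂ν ≤ 1 := by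
        have h1 : ∫⁻ x, ENNReal.ofReal ((1:ℝ) / r x) ∂ν ≤ ∫⁻ _, ENNReal.ofReal (1:ℝ) ∂μ :=
          Ent.key_bound ν μ hac measurable_const
        have h2 : ∫⁻ (_ : E), ENNReal.ofReal (1:ℝ) ∂μ = 1 := by simp
        refine le_trans (lintegral_mono_ae ?_) (h1.trans h2.le)
        filter_upwards [Ent.rpos ν μ hac] with x hx
        refine ENNReal.ofReal_le_ofReal (max_le ?_ (by positivity))
        have := Real.log_le_sub_one_of_pos (show (0:ℝ) < 1 / r x by positivity)
        rw [Real.log_div one_ne_zero hx.ne', Real.log_one] at this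
        linarith
      have hpos_top : ∫⁻ x, ENNReal.ofReal (max (Real.log (r x)) 0) ∂ν = ⊤ := by
        by_contra hne
        refine hint ⟨(Real.measurable_log.comp hrm).aestronglyMeasurable, ?_⟩
        rw [hasFiniteIntegral_iff_norm]
        have hptw : ∀ x, ENNReal.ofReal ‖Real.log (r x)‖ ≤
            ENNReal.ofReal (max (Real.log (r x)) 0) + ENNReal.ofReal (max (-Real.log (r x)) 0) := by
          intro x
          rw [← ENNReal.ofReal_add (le_max_right _ _) (le_max_right _ _)]
          refine ENNReal.ofReal_le_ofReal ?_
          rw [Real.norm_eq_abs]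
          rcases le_total (Real.log (r x)) 0 with h | h
          · rw [abs_of_nonpos h, max_eq_right h, max_eq_left (by linarith)]; linarith
          · rw [abs_of_nonneg h, max_eq_left h, max_eq_right (by linarith)]; linarith
        calc ∫⁻ x, ENNReal.ofReal ‖Real.log (r x)‖ ∂ν
            ≤ ∫⁻ x, (ENNReal.ofReal (max (Real.log (r x)) 0)
                + ENNReal.ofReal (max (-Real.log (r x)) 0)) ∂ν := lintegral_mono hptw
          _ ≤ ∫⁻ x, ENNReal.ofReal (max (Real.log (r x)) 0) ∂ν
                + ∫⁻ x, ENNReal.ofReal (max (-Real.log (r x)) 0) ∂ν :=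
              le_of_eq (lintegral_add_left
                ((Real.measurable_log.comp hrm).max measurable_const).ennreal_ofReal _)
          _ < ⊤ := ENNReal.add_lt_top.2 ⟨lt_top_iff_ne_top.2 hne, hneg.trans_lt one_lt_top⟩
      -- truncated functions
      set G : ℕ → E → ℝ := fun n x => min (max (r x) 1) ((n:ℝ)+1) with hG
      have hGm : ∀ n, Measurable (G n) := fun n =>
        (hrm.max measurable_const).min measurable_const
      have hGub : ∀ (n : ℕ) (x : E), G n x ≤ (n:ℝ)+1 := fun n x => min_le_right _ _
      have hGlb : ∀ (n : ℕ) (x : E), (1:ℝ) ≤ G n x := fun n x =>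
        le_min (le_max_right _ _) (by simp)
      have hGlog : ∀ (n : ℕ) (x : E), Real.log (G n x)
          = min (max (Real.log (r x)) 0) (Real.log ((n:ℝ)+1)) := fun n x =>
        Ent.log_trunc_eq ENNReal.toReal_nonneg _ (by simp)
      have hGint : ∀ n, Integrable (G n) μ := fun n =>
        Ent.int_bounded μ (hGm n) (hGub n) (hGlb n)
      have hGI_le : ∀ n, ∫ x, G n x ∂μ ≤ 2 := by
        intro n
        have hptw : ∀ x, G n x ≤ r x + 1 := by
          intro x
          refine (min_le_left _ _).trans (max_le ?_ ?_)
          · linarith [ENNReal.toReal_nonneg (a := ν.rnDeriv μ x)]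
          · linarith [ENNReal.toReal_nonneg (a := ν.rnDeriv μ x)]
        calc ∫ x, G n x ∂μ ≤ ∫ x, (r x + 1) ∂μ :=
              integral_mono (hGint n) (hrint.add (integrable_const _)) hptw
          _ = ∫ x, r x ∂μ + 1 := by
              rw [integral_add hrint (integrable_const _), integral_const]; simp
          _ ≤ 2 := by linarith
      have hGI_pos : ∀ n, 0 < ∫ x, G n x ∂μ := by
        intro n
        have : ∫ (_ : E), (1:ℝ) ∂μ ≤ ∫ x, G n x ∂μ :=
          integral_mono (integrable_const _) (hGint n) (hGlb n)
        simp only [integral_const, probReal_univ, ENNReal.toReal_one, one_smul] at this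
        linarith
      -- lintegrals tend to ⊤
      set L : ℕ → ℝ≥0∞ := fun n => ∫⁻ x, ENNReal.ofReal (Real.log (G n x)) ∂ν with hL
      have hL_lt : ∀ n, L n < ⊤ := by
        intro n
        have : L n ≤ ∫⁻ _, ENNReal.ofReal (Real.log ((n:ℝ)+1)) ∂ν := by
          refine lintegral_mono fun x => ENNReal.ofReal_le_ofReal ?_
          rw [hGlog n x]; exact min_le_right _ _
        refine this.trans_lt ?_
        simp [lintegral_const]
      have hL_tendsto : Filter.Tendsto L Filter.atTop (nhds ⊤) := by
        rw [hL]
        have := lintegral_tendsto_of_tendsto_of_monotone (μ := ν)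
          (f := fun n x => ENNReal.ofReal (Real.log (G n x)))
          (F := fun x => ENNReal.ofReal (max (Real.log (r x)) 0))
          (fun n => (Real.measurable_log.comp (hGm n)).ennreal_ofReal.aemeasurable)
          ?_ ?_
        · rw [hpos_top] at this; exact this
        · refine Filter.Eventually.of_forall fun x => ?_
          intro a b hab
          refine ENNReal.ofReal_le_ofReal ?_
          rw [hGlog a x, hGlog b x]
          refine min_le_min le_rfl (Real.log_le_log (by positivity) ?_)
          have : (a:ℝ) ≤ (b:ℝ) := Nat.cast_le.mpr hab
          linarith
        · refine Filter.Eventually.of_forall fun x => ?_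
          obtain ⟨N, hN⟩ := exists_nat_ge (Real.exp (max (Real.log (r x)) 0))
          refine Filter.Tendsto.congr' ?_ tendsto_const_nhds
          filter_upwards [Filter.eventually_ge_atTop N] with n hn
          rw [hGlog n x]
          have hexp : Real.exp (max (Real.log (r x)) 0) ≤ (n:ℝ)+1 := by
            have : (N:ℝ) ≤ (n:ℝ) := Nat.cast_le.mpr hn
            linarith
          have : max (Real.log (r x)) 0 ≤ Real.log ((n:ℝ)+1) := by
            calc max (Real.log (r x)) 0 = Real.log (Real.exp (max (Real.log (r x)) 0)) :=
                  (Real.log_exp _).symm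
              _ ≤ Real.log ((n:ℝ)+1) := Real.log_le_log (Real.exp_pos _) hexp
          rw [min_eq_left this]
      -- conclude
      intro M
      have hev : ∀ᶠ n in Filter.atTop, ENNReal.ofReal (M + Real.log 2) < L n :=
        hL_tendsto.eventually (eventually_gt_nhds (ENNReal.ofReal_lt_top))
      obtain ⟨n, hn⟩ := hev.exists
      refine ⟨G n, hGm n, ⟨(n:ℝ)+1, hGub n⟩, ⟨1, one_pos, hGlb n⟩, ?_⟩
      have hInt_eq : ∫ x, Real.log (G n x) ∂ν = (L n).toReal := by
        rw [hL]
        exact integral_eq_lintegral_of_nonneg_ae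
          (Filter.Eventually.of_forall fun x => Real.log_nonneg (hGlb n x))
          (Real.measurable_log.comp (hGm n)).aestronglyMeasurable
      have h1 : M + Real.log 2 ≤ (L n).toReal := by
        rw [← ENNReal.ofReal_le_iff_le_toReal (hL_lt n).ne]
        exact hn.le
      have h2 : Real.log (∫ x, G n x ∂μ) ≤ Real.log 2 :=
        Real.log_le_log (hGI_pos n) (hGI_le n)
      rw [hInt_eq]
      linarith
    · -- ν not ≪ μ
      have hs : ∃ s, μ s = 0 ∧ ν s ≠ 0 := by
        by_contra hcon
        push_neg at hcon
        exact hac fun s hs => hcon s hs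
      obtain ⟨s, hμs, hνs⟩ := hs
      set t := toMeasurable μ s with ht
      have htm : MeasurableSet t := measurableSet_toMeasurable μ s
      have hμt : μ t = 0 := by rw [ht, measure_toMeasurable]; exact hμs
      have hνt : ν t ≠ 0 := fun h =>
        hνs (le_antisymm (le_trans (measure_mono (subset_toMeasurable μ s)) h.le) zero_le)
      set a : ℝ := (ν t).toReal with ha
      have hapos : 0 < a := ENNReal.toReal_pos hνt (measure_ne_top ν t)
      intro M
      set c : ℝ := Real.exp (M / a) with hc
      have hcpos : 0 < c := Real.exp_pos _
      refine ⟨fun x => t.indicator (fun _ => c) x + 1,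
        ((measurable_const.indicator htm).add measurable_const), ⟨c + 1, ?_⟩,
        ⟨1, one_pos, ?_⟩, ?_⟩
      · intro x
        by_cases hx : x ∈ t <;> simp [Set.indicator, hx, hcpos.le]
      · intro x
        by_cases hx : x ∈ t <;> simp [Set.indicator, hx, hcpos.le]
      · have hμint : ∫ x, (t.indicator (fun _ => c) x + 1) ∂μ = 1 := by
          have hae : (fun x => t.indicator (fun _ => c) x + 1) =ᵐ[μ] fun _ => (1:ℝ) := by
            filter_upwards [measure_eq_zero_iff_ae_notMem.1 hμt] with x hx
            simp [Set.indicator, hx]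
          rw [integral_congr_ae hae]
          simp
        have hνint : ∫ x, Real.log (t.indicator (fun _ => c) x + 1) ∂ν = a * Real.log (c + 1) := by
          have heq : (fun x => Real.log (t.indicator (fun _ => c) x + 1))
              = fun x => t.indicator (fun _ => Real.log (c + 1)) x := by
            funext x
            by_cases hx : x ∈ t <;> simp [Set.indicator, hx]
          rw [heq, integral_indicator_const _ htm]
          simp [ha, mul_comm, measureReal_def]
        rw [hμint, hνint, Real.log_one, sub_zero]
        have hlog : M / a ≤ Real.log (c + 1) := by
          calc M / a = Real.log c := (Real.log_exp _).symm
            _ ≤ Real.log (c + 1) := Real.log_le_log hcpos (by linarith)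
        calc M = a * (M / a) := by field_simp
          _ ≤ a * Real.log (c + 1) := by
              exact mul_le_mul_of_nonneg_left hlog hapos.le
end

section
/- Let (Ω, G, P) be a probability space and let κ, η be Markov kernels from (Ω, G) to a standard Borel space E such that ω ↦ Ent(κ(ω)|η(ω)) is measurable (as a function with values in [0, ∞]). Let P∘κ and P∘η denote the mixture probability measures on E defined by (P∘κ)(A) = ∫ κ(ω)(A) P(dω) and (P∘η)(A) = ∫ η(ω)(A) P(dω). Then Ent(P∘κ | P∘η) ≤ ∫ Ent(κ(ω)|η(ω)) P(dω). -/
open MeasureTheory ProbabilityTheory ENNReal Classical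


section AuxForEnt
open Real


lemma aux_log_le (s : ℝ) (hs : 0 < s) : Real.log s ≤ s * Real.exp (-1) := by
  have h := Real.log_le_sub_one_of_pos (mul_pos hs (Real.exp_pos (-1)))
  rw [Real.log_mul hs.ne' (Real.exp_pos _).ne', Real.log_exp] at h
  linarith

lemma aux_mul_neg_log (t : ℝ) (ht : 0 ≤ t) : t * (-Real.log t) ≤ Real.exp (-1) := by
  rcases eq_or_lt_of_le ht with h | h
  · simp [← h, (Real.exp_pos (-1)).le]
  · rw [← Real.log_inv]
    calc t * Real.log t⁻¹ ≤ t * (t⁻¹ * Real.exp (-1)) :=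
          mul_le_mul_of_nonneg_left (aux_log_le _ (inv_pos.mpr h)) ht
      _ = Real.exp (-1) := by field_simp

lemma aux_ennreal (u : ℝ≥0∞) (hu : u ≠ ∞) :
    u * ENNReal.ofReal (-Real.log u.toReal) ≤ ENNReal.ofReal (Real.exp (-1)) := by
  by_cases hlog : -Real.log u.toReal ≤ 0
  · simp [ENNReal.ofReal_eq_zero.mpr hlog]
  · have heq : u * ENNReal.ofReal (-Real.log u.toReal)
        = ENNReal.ofReal (u.toReal * (-Real.log u.toReal)) := by
      rw [ENNReal.ofReal_mul ENNReal.toReal_nonneg, ENNReal.ofReal_toReal hu]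
    rw [heq]
    exact ENNReal.ofReal_le_ofReal (aux_mul_neg_log _ ENNReal.toReal_nonneg)

variable {E : Type*} [MeasurableSpace E]

/-- negative part of llr has lintegral bounded by `exp (-1)`. -/
lemma lintegral_ofReal_neg_llr_le {ν μ : Measure E} [IsProbabilityMeasure ν]
    [IsProbabilityMeasure μ] (h : ν ≪ μ) :
    ∫⁻ x, ENNReal.ofReal (-Real.log (ν.rnDeriv μ x).toReal) ∂ν
      ≤ ENNReal.ofReal (Real.exp (-1)) := by
  have hmeas : Measurable fun x => ENNReal.ofReal (-Real.log (ν.rnDeriv μ x).toReal) :=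
    (((Measure.measurable_rnDeriv ν μ).ennreal_toReal.log).neg).ennreal_ofReal
  set f : E → ℝ≥0∞ := fun x => ENNReal.ofReal (-Real.log (ν.rnDeriv μ x).toReal) with hfdef
  have hrw : ∫⁻ x, f x ∂ν = ∫⁻ x, (ν.rnDeriv μ * f) x ∂μ := by
    conv_lhs => rw [← Measure.withDensity_rnDeriv_eq ν μ h]
    rw [lintegral_withDensity_eq_lintegral_mul μ (Measure.measurable_rnDeriv ν μ) hmeas]
  rw [hrw]
  calc ∫⁻ x, (ν.rnDeriv μ * f) x ∂μ
      ≤ ∫⁻ _, ENNReal.ofReal (Real.exp (-1)) ∂μ := by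
        refine lintegral_mono_ae ?_
        filter_upwards [Measure.rnDeriv_lt_top ν μ] with x hx
        exact aux_ennreal _ hx.ne
    _ = ENNReal.ofReal (Real.exp (-1)) := by simp

/-- Gibbs inequality : the relative entropy integral is nonneg. -/
lemma integral_llr_nonneg' {ν μ : Measure E} [IsProbabilityMeasure ν] [IsProbabilityMeasure μ]
    (h : ν ≪ μ) (hint : Integrable (fun x => Real.log (ν.rnDeriv μ x).toReal) ν) :
    0 ≤ ∫ x, Real.log (ν.rnDeriv μ x).toReal ∂ν := by
  set g := ν.rnDeriv μ with hg
  set k : E → ℝ := fun x => Real.exp (-Real.log (g x).toReal) with hk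
  have hkm : Measurable k := ((Measure.measurable_rnDeriv ν μ).ennreal_toReal.log.neg).exp
  have hklint : ∫⁻ x, ENNReal.ofReal (k x) ∂ν ≤ 1 := by
    have h1 : ∀ᵐ x ∂ν, ENNReal.ofReal (k x) = (g x)⁻¹ := by
      filter_upwards [Measure.rnDeriv_pos h, h.ae_le (Measure.rnDeriv_lt_top ν μ)]
        with x hx0 hxt
      have ht : 0 < (g x).toReal := ENNReal.toReal_pos hx0.ne' hxt.ne
      rw [hk]
      simp only
      rw [Real.exp_neg, Real.exp_log ht, ENNReal.ofReal_inv_of_pos ht,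
        ENNReal.ofReal_toReal hxt.ne]
    rw [lintegral_congr_ae h1]
    conv_lhs => rw [← Measure.withDensity_rnDeriv_eq ν μ h]
    rw [lintegral_withDensity_eq_lintegral_mul μ (Measure.measurable_rnDeriv ν μ)
      (show Measurable fun x => (g x)⁻¹ from (Measure.measurable_rnDeriv ν μ).inv)]
    calc ∫⁻ x, (g * fun x => (g x)⁻¹) x ∂μ ≤ ∫⁻ _, 1 ∂μ := by
          refine lintegral_mono fun x => ?_
          simp only [Pi.mul_apply]
          rcases eq_or_ne (g x) 0 with h0 | h0
          · simp [h0]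
          rcases eq_or_ne (g x) ∞ with ht | ht
          · simp [ht]
          · rw [ENNReal.mul_inv_cancel h0 ht]
      _ = 1 := by simp
  have hkint : Integrable k ν := by
    refine ⟨hkm.aestronglyMeasurable, ?_⟩
    rw [hasFiniteIntegral_iff_ofReal (ae_of_all _ fun x => (Real.exp_pos _).le)]
    exact lt_of_le_of_lt hklint one_lt_top
  have hpt : ∀ x, -Real.log (g x).toReal ≤ k x - 1 := fun x => by
    have := Real.add_one_le_exp (-Real.log (g x).toReal)
    simp only [hk]; linarith
  have h2 : ∫ x, -Real.log ((g x)).toReal ∂ν ≤ ∫ x, (k x - 1) ∂ν :=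
    integral_mono hint.neg (hkint.sub (integrable_const 1)) hpt
  have h3 : ∫ x, (k x - 1) ∂ν ≤ 0 := by
    rw [integral_sub hkint (integrable_const 1), integral_const]
    simp only [measure_univ, probReal_univ, ENNReal.toReal_one, smul_eq_mul, one_mul]
    have : ∫ x, k x ∂ν ≤ 1 := by
      rw [integral_eq_lintegral_of_nonneg_ae (ae_of_all _ fun x => (Real.exp_pos _).le)
        hkm.aestronglyMeasurable]
      calc (∫⁻ x, ENNReal.ofReal (k x) ∂ν).toReal ≤ (1 : ℝ≥0∞).toReal :=
            ENNReal.toReal_mono one_ne_top hklint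
        _ = 1 := by simp
    linarith
  rw [integral_neg] at h2
  linarith

lemma ennnorm_eq_ofReal_add (y : ℝ) :
    (‖y‖₊ : ℝ≥0∞) = ENNReal.ofReal y + ENNReal.ofReal (-y) := by
  rw [← enorm_eq_nnnorm, Real.enorm_eq_ofReal_abs]
  rcases le_or_gt 0 y with h | h
  · simp [abs_of_nonneg h, ENNReal.ofReal_eq_zero.mpr (neg_nonpos.mpr h)]
  · simp [abs_of_neg h, ENNReal.ofReal_eq_zero.mpr h.le]


lemma ofReal_abs_eq (y : ℝ) :
    ENNReal.ofReal |y| = ENNReal.ofReal y + ENNReal.ofReal (-y) := by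
  rcases le_or_gt 0 y with h | h
  · simp [abs_of_nonneg h, ENNReal.ofReal_eq_zero.mpr (neg_nonpos.mpr h)]
  · simp [abs_of_neg h, ENNReal.ofReal_eq_zero.mpr h.le]

variable {E : Type*} [MeasurableSpace E]

lemma key_omega {ρ σ : Measure E} [IsProbabilityMeasure ρ] [IsProbabilityMeasure σ]
    (hac : ρ ≪ σ) (hint : Integrable (fun x => Real.log (ρ.rnDeriv σ x).toReal) ρ)
    {g : E → ℝ≥0∞} (hg : Measurable g)
    (hg0 : ρ {x | g x = 0} = 0) (hgtop : ρ {x | g x = ∞} = 0)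
    (hc : ∫⁻ x, g x ∂σ ≠ ∞)
    (hb : ∫⁻ x, ENNReal.ofReal (-Real.log (g x).toReal) ∂ρ ≠ ∞) :
    Integrable (fun x => Real.log (g x).toReal) ρ ∧
      ∫ x, Real.log (g x).toReal ∂ρ ≤
        (∫ x, Real.log (ρ.rnDeriv σ x).toReal ∂ρ) + (∫⁻ x, g x ∂σ).toReal - 1 ∧
      ∫⁻ x, ENNReal.ofReal (Real.log (g x).toReal) ∂ρ ≤
        ENNReal.ofReal (∫ x, Real.log (ρ.rnDeriv σ x).toReal ∂ρ)
          + ENNReal.ofReal (Real.exp (-1)) + ∫⁻ x, g x ∂σ := by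
  have hfm : Measurable (ρ.rnDeriv σ) := Measure.measurable_rnDeriv ρ σ
  have haef : ∀ᵐ x ∂ρ, 0 < ρ.rnDeriv σ x := Measure.rnDeriv_pos hac
  have haef2 : ∀ᵐ x ∂ρ, ρ.rnDeriv σ x < ∞ := hac.ae_le (Measure.rnDeriv_lt_top ρ σ)
  have haeg0 : ∀ᵐ x ∂ρ, g x ≠ 0 := by
    rw [ae_iff]; simpa using hg0
  have haegt : ∀ᵐ x ∂ρ, g x ≠ ∞ := by
    rw [ae_iff]; simpa using hgtop
  set L : E → ℝ := fun x => Real.log (g x).toReal with hL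
  set ℓ : E → ℝ := fun x => Real.log (ρ.rnDeriv σ x).toReal with hℓ
  set k : E → ℝ := fun x => Real.exp (L x - ℓ x) with hk
  have hLm : Measurable L := hg.ennreal_toReal.log
  have hℓm : Measurable ℓ := hfm.ennreal_toReal.log
  have hkm : Measurable k := (hLm.sub hℓm).exp
  have hofk : ∀ᵐ x ∂ρ, ENNReal.ofReal (k x) = g x / ρ.rnDeriv σ x := by
    filter_upwards [haef, haef2, haeg0, haegt] with x h1 h2 h3 h4
    have hft : 0 < (ρ.rnDeriv σ x).toReal := ENNReal.toReal_pos h1.ne' h2.ne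
    have hgt : 0 < (g x).toReal := ENNReal.toReal_pos h3 h4
    simp only [hk, hL, hℓ]
    rw [Real.exp_sub, Real.exp_log hgt, Real.exp_log hft, ENNReal.ofReal_div_of_pos hft,
      ENNReal.ofReal_toReal h4, ENNReal.ofReal_toReal h2.ne]
  have hklt : ∫⁻ x, ENNReal.ofReal (k x) ∂ρ ≤ ∫⁻ x, g x ∂σ := by
    rw [lintegral_congr_ae hofk]
    have hgen : ∀ d : E → ℝ≥0∞, Measurable d →
        ∫⁻ x, d x ∂ρ = ∫⁻ x, (ρ.rnDeriv σ * d) x ∂σ := by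
      intro d hd
      conv_lhs => rw [← Measure.withDensity_rnDeriv_eq ρ σ hac]
      rw [lintegral_withDensity_eq_lintegral_mul σ hfm hd]
    rw [hgen (fun x => g x / ρ.rnDeriv σ x) (hg.div hfm)]
    exact lintegral_mono fun x => ENNReal.mul_div_le
  have hkof : ∫⁻ x, ENNReal.ofReal (k x) ∂ρ ≠ ∞ := (lt_of_le_of_lt hklt hc.lt_top).ne
  have hkint : Integrable k ρ := by
    refine ⟨hkm.aestronglyMeasurable, ?_⟩
    rw [hasFiniteIntegral_iff_ofReal (ae_of_all _ fun x => (Real.exp_pos _).le)]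
    exact hkof.lt_top
  have hpt : ∀ x, L x ≤ ℓ x + (k x - 1) := fun x => by
    have := Real.add_one_le_exp (L x - ℓ x)
    simp only [hk]; linarith
  have hLof : ∫⁻ x, ENNReal.ofReal (L x) ∂ρ ≠ ∞ := by
    have hℓof : ∫⁻ x, ENNReal.ofReal (ℓ x) ∂ρ ≠ ∞ := by
      have h1 := hint.hasFiniteIntegral
      rw [hasFiniteIntegral_iff_norm] at h1
      refine (lt_of_le_of_lt (lintegral_mono fun x => ?_) h1).ne
      exact ENNReal.ofReal_le_ofReal (le_abs_self _)
    have hmono : ∫⁻ x, ENNReal.ofReal (L x) ∂ρ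
        ≤ ∫⁻ x, ENNReal.ofReal (ℓ x) ∂ρ + ∫⁻ x, ENNReal.ofReal (k x) ∂ρ := by
      rw [← lintegral_add_left hℓm.ennreal_ofReal]
      refine lintegral_mono fun x => ?_
      refine le_trans (ENNReal.ofReal_le_ofReal ?_) (ENNReal.ofReal_add_le)
      have := hpt x; linarith
    exact (lt_of_le_of_lt hmono
      (ENNReal.add_lt_top.mpr ⟨hℓof.lt_top, hkof.lt_top⟩)).ne
  have hLint : Integrable L ρ := by
    refine ⟨hLm.aestronglyMeasurable, ?_⟩
    rw [hasFiniteIntegral_iff_norm]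
    simp_rw [Real.norm_eq_abs]
    have heq : ∫⁻ x, ENNReal.ofReal |L x| ∂ρ
        = ∫⁻ x, ENNReal.ofReal (L x) ∂ρ + ∫⁻ x, ENNReal.ofReal (-(L x)) ∂ρ := by
      rw [← lintegral_add_left hLm.ennreal_ofReal]
      congr 1; ext x; exact ofReal_abs_eq (L x)
    rw [heq]
    exact ENNReal.add_lt_top.mpr ⟨hLof.lt_top, hb.lt_top⟩
  have hq_le : ∫⁻ x, ENNReal.ofReal (-ℓ x) ∂ρ ≤ ENNReal.ofReal (Real.exp (-1)) :=
    lintegral_ofReal_neg_llr_le hac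
  have hAbound : ∫⁻ x, ENNReal.ofReal (L x) ∂ρ ≤
      ENNReal.ofReal (∫ x, ℓ x ∂ρ) + ENNReal.ofReal (Real.exp (-1)) + ∫⁻ x, g x ∂σ := by
    have hp_le : ∫⁻ x, ENNReal.ofReal (ℓ x) ∂ρ
        ≤ ENNReal.ofReal (∫ x, ℓ x ∂ρ) + ∫⁻ x, ENNReal.ofReal (-ℓ x) ∂ρ := by
      have hpne : ∫⁻ x, ENNReal.ofReal (ℓ x) ∂ρ ≠ ∞ := by
        have h1 := hint.hasFiniteIntegral
        rw [hasFiniteIntegral_iff_norm] at h1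
        refine (lt_of_le_of_lt (lintegral_mono fun x => ?_) h1).ne
        exact ENNReal.ofReal_le_ofReal (le_abs_self _)
      have hqne : ∫⁻ x, ENNReal.ofReal (-ℓ x) ∂ρ ≠ ∞ :=
        (lt_of_le_of_lt hq_le ENNReal.ofReal_lt_top).ne
      have hval := integral_eq_lintegral_pos_part_sub_lintegral_neg_part hint
      have h2 : (∫⁻ x, ENNReal.ofReal (ℓ x) ∂ρ).toReal
          = (∫ x, ℓ x ∂ρ) + (∫⁻ x, ENNReal.ofReal (-ℓ x) ∂ρ).toReal := by
        rw [hval]; ring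
      calc ∫⁻ x, ENNReal.ofReal (ℓ x) ∂ρ
          = ENNReal.ofReal ((∫ x, ℓ x ∂ρ) + (∫⁻ x, ENNReal.ofReal (-ℓ x) ∂ρ).toReal) := by
            rw [← h2, ENNReal.ofReal_toReal hpne]
        _ ≤ ENNReal.ofReal (∫ x, ℓ x ∂ρ)
            + ENNReal.ofReal ((∫⁻ x, ENNReal.ofReal (-ℓ x) ∂ρ).toReal) :=
            ENNReal.ofReal_add_le
        _ = ENNReal.ofReal (∫ x, ℓ x ∂ρ) + ∫⁻ x, ENNReal.ofReal (-ℓ x) ∂ρ := by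
            rw [ENNReal.ofReal_toReal hqne]
    calc ∫⁻ x, ENNReal.ofReal (L x) ∂ρ
        ≤ ∫⁻ x, ENNReal.ofReal (ℓ x) ∂ρ + ∫⁻ x, ENNReal.ofReal (k x) ∂ρ := by
          rw [← lintegral_add_left hℓm.ennreal_ofReal]
          refine lintegral_mono fun x => ?_
          refine le_trans (ENNReal.ofReal_le_ofReal ?_) (ENNReal.ofReal_add_le)
          have := hpt x; linarith
      _ ≤ (ENNReal.ofReal (∫ x, ℓ x ∂ρ) + ∫⁻ x, ENNReal.ofReal (-ℓ x) ∂ρ)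
            + ∫⁻ x, g x ∂σ := add_le_add hp_le hklt
      _ ≤ ENNReal.ofReal (∫ x, ℓ x ∂ρ) + ENNReal.ofReal (Real.exp (-1))
            + ∫⁻ x, g x ∂σ := by
          gcongr
  refine ⟨hLint, ?_, hAbound⟩
  have hkval : ∫ x, k x ∂ρ ≤ (∫⁻ x, g x ∂σ).toReal := by
    rw [integral_eq_lintegral_of_nonneg_ae (ae_of_all _ fun x => (Real.exp_pos _).le)
      hkm.aestronglyMeasurable]
    exact ENNReal.toReal_mono hc hklt
  calc ∫ x, L x ∂ρ ≤ ∫ x, (ℓ x + (k x - 1)) ∂ρ :=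
        integral_mono hLint (hint.add (hkint.sub (integrable_const 1))) hpt
    _ = ∫ x, ℓ x ∂ρ + (∫ x, k x ∂ρ - 1) := by
        rw [integral_add hint
            (show Integrable (fun x => k x - 1) ρ from hkint.sub (integrable_const 1)),
          integral_sub hkint (integrable_const 1), integral_const]
        simp
    _ ≤ (∫ x, ℓ x ∂ρ) + (∫⁻ x, g x ∂σ).toReal - 1 := by linarith
end AuxForEnt

/-- For Markov kernels `κ, η` from `(Ω, G)` to a standard Borel space `E` such that
`ω ↦ Ent(κ(ω)|η(ω))` is measurable, the relative entropy of the mixtures satisfies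
`Ent(P∘κ | P∘η) ≤ ∫ Ent(κ(ω)|η(ω)) P(dω)`. -/
theorem ent_mixture_le_lintegral_ent
    {Ω E : Type*} [MeasurableSpace Ω] [MeasurableSpace E] [StandardBorelSpace E]
    (P : Measure Ω) [IsProbabilityMeasure P]
    (κ η : Kernel Ω E) [IsMarkovKernel κ] [IsMarkovKernel η]
    (hmeas : Measurable fun ω => Ent (κ ω) (η ω)) :
    Ent (P.bind fun ω => κ ω) (P.bind fun ω => η ω) ≤ ∫⁻ ω, Ent (κ ω) (η ω) ∂P := by
  set ν := P.bind fun ω => κ ω with hνdef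
  set μ := P.bind fun ω => η ω with hμdef
  haveI hνP : IsProbabilityMeasure ν :=
    ⟨by rw [hνdef, Measure.bind_apply MeasurableSet.univ κ.measurable.aemeasurable]; simp⟩
  haveI hμP : IsProbabilityMeasure μ :=
    ⟨by rw [hμdef, Measure.bind_apply MeasurableSet.univ η.measurable.aemeasurable]; simp⟩
  by_cases hR : ∫⁻ ω, Ent (κ ω) (η ω) ∂P = ⊤
  · rw [hR]; exact le_top
  -- pointwise (in ω) structure of finite entropy
  have hωprop : ∀ᵐ ω ∂P, (κ ω ≪ η ω) ∧
      Integrable (fun x => Real.log ((κ ω).rnDeriv (η ω) x).toReal) (κ ω) ∧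
      Ent (κ ω) (η ω)
        = ENNReal.ofReal (∫ x, Real.log ((κ ω).rnDeriv (η ω) x).toReal ∂(κ ω)) := by
    filter_upwards [ae_lt_top hmeas hR] with ω hω
    rw [Ent] at hω ⊢
    split_ifs at hω ⊢ with h
    · exact ⟨h.1, h.2, rfl⟩
    · simp at hω
  -- absolute continuity of the mixtures
  have hacν : ν ≪ μ := by
    intro s hs
    have hts : s ⊆ toMeasurable μ s := subset_toMeasurable μ s
    have htm : MeasurableSet (toMeasurable μ s) := measurableSet_toMeasurable μ s
    have htμ : μ (toMeasurable μ s) = 0 := by rwa [measure_toMeasurable]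
    rw [hμdef, Measure.bind_apply htm η.measurable.aemeasurable] at htμ
    have hη0 := (lintegral_eq_zero_iff (η.measurable_coe htm)).mp htμ
    have hκ0 : ∀ᵐ ω ∂P, κ ω (toMeasurable μ s) = 0 := by
      filter_upwards [hη0, hωprop] with ω h1 h2 using h2.1 h1
    refine measure_mono_null hts ?_
    rw [hνdef, Measure.bind_apply htm κ.measurable.aemeasurable]
    exact (lintegral_eq_zero_iff (κ.measurable_coe htm)).mpr hκ0
  set g : E → ℝ≥0∞ := ν.rnDeriv μ with hgdef
  have hgm : Measurable g := Measure.measurable_rnDeriv ν μ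
  have hmeasSetTop : MeasurableSet {x | g x = ∞} := hgm (measurableSet_singleton ⊤)
  have hmeasSet0 : MeasurableSet {x | g x = 0} := hgm (measurableSet_singleton 0)
  have hgtopμ : μ {x | g x = ∞} = 0 := by
    have h1 := Measure.rnDeriv_lt_top ν μ
    rw [ae_iff] at h1
    simpa [not_lt, top_le_iff] using h1
  have hg0ν : ν {x | g x = 0} = 0 := by
    have h1 := Measure.rnDeriv_pos hacν
    rw [ae_iff] at h1
    simpa [not_lt, le_zero_iff] using h1
  have hηtop : ∀ᵐ ω ∂P, η ω {x | g x = ∞} = 0 := by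
    rw [hμdef, Measure.bind_apply hmeasSetTop η.measurable.aemeasurable] at hgtopμ
    filter_upwards [(lintegral_eq_zero_iff (η.measurable_coe hmeasSetTop)).mp hgtopμ]
      with ω h using h
  have hκ0' : ∀ᵐ ω ∂P, κ ω {x | g x = 0} = 0 := by
    rw [hνdef, Measure.bind_apply hmeasSet0 κ.measurable.aemeasurable] at hg0ν
    filter_upwards [(lintegral_eq_zero_iff (κ.measurable_coe hmeasSet0)).mp hg0ν]
      with ω h using h
  have hκtop : ∀ᵐ ω ∂P, κ ω {x | g x = ∞} = 0 := by
    filter_upwards [hηtop, hωprop] with ω h1 h2 using h2.1 h1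
  -- the functions b and c
  set c : Ω → ℝ≥0∞ := fun ω => ∫⁻ x, g x ∂(η ω) with hcdef
  have hcm : Measurable c :=
    Measurable.lintegral_kernel_prod_right (κ := η) (f := fun _ x => g x)
      (hgm.comp measurable_snd)
  have hCle : ∫⁻ ω, c ω ∂P ≤ 1 := by
    have h1 : ∫⁻ ω, c ω ∂P = ∫⁻ x, g x ∂μ :=
      (Measure.lintegral_bind η.measurable.aemeasurable hgm.aemeasurable).symm
    rw [h1, Measure.lintegral_rnDeriv hacν]
    simp
  have hCne : ∫⁻ ω, c ω ∂P ≠ ⊤ := (lt_of_le_of_lt hCle one_lt_top).ne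
  have hbintegrand : Measurable fun x => ENNReal.ofReal (-Real.log (g x).toReal) :=
    (hgm.ennreal_toReal.log.neg).ennreal_ofReal
  set b : Ω → ℝ≥0∞ := fun ω => ∫⁻ x, ENNReal.ofReal (-Real.log (g x).toReal) ∂(κ ω)
    with hbdef
  have hbm : Measurable b :=
    Measurable.lintegral_kernel_prod_right (κ := κ)
      (f := fun _ x => ENNReal.ofReal (-Real.log (g x).toReal))
      (hbintegrand.comp measurable_snd)
  have hB_bind : ∫⁻ x, ENNReal.ofReal (-Real.log (g x).toReal) ∂ν = ∫⁻ ω, b ω ∂P :=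
    Measure.lintegral_bind κ.measurable.aemeasurable hbintegrand.aemeasurable
  have hBle : ∫⁻ ω, b ω ∂P ≤ ENNReal.ofReal (Real.exp (-1)) := by
    rw [← hB_bind]
    exact lintegral_ofReal_neg_llr_le hacν
  have hBne : ∫⁻ ω, b ω ∂P ≠ ⊤ := (lt_of_le_of_lt hBle ENNReal.ofReal_lt_top).ne
  have hbfin : ∀ᵐ ω ∂P, b ω ≠ ⊤ := by
    filter_upwards [ae_lt_top hbm hBne] with ω h using h.ne
  have hcfin : ∀ᵐ ω ∂P, c ω ≠ ⊤ := by
    filter_upwards [ae_lt_top hcm hCne] with ω h using h.ne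
  -- the key pointwise-in-ω facts
  have hkey : ∀ᵐ ω ∂P, Integrable (fun x => Real.log (g x).toReal) (κ ω) ∧
      ∫ x, Real.log (g x).toReal ∂(κ ω) ≤
        (∫ x, Real.log ((κ ω).rnDeriv (η ω) x).toReal ∂(κ ω)) + (c ω).toReal - 1 ∧
      ∫⁻ x, ENNReal.ofReal (Real.log (g x).toReal) ∂(κ ω) ≤
        ENNReal.ofReal (∫ x, Real.log ((κ ω).rnDeriv (η ω) x).toReal ∂(κ ω))
          + ENNReal.ofReal (Real.exp (-1)) + c ω := by
    filter_upwards [hωprop, hκ0', hκtop, hbfin, hcfin] with ω h1 h2 h3 h4 h5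
    exact key_omega h1.1 h1.2.1 hgm h2 h3 h5 h4
  -- the function a
  have haintegrand : Measurable fun x => ENNReal.ofReal (Real.log (g x).toReal) :=
    hgm.ennreal_toReal.log.ennreal_ofReal
  set a : Ω → ℝ≥0∞ := fun ω => ∫⁻ x, ENNReal.ofReal (Real.log (g x).toReal) ∂(κ ω)
    with hadef
  have ham : Measurable a :=
    Measurable.lintegral_kernel_prod_right (κ := κ)
      (f := fun _ x => ENNReal.ofReal (Real.log (g x).toReal))
      (haintegrand.comp measurable_snd)
  have hA_bind : ∫⁻ x, ENNReal.ofReal (Real.log (g x).toReal) ∂ν = ∫⁻ ω, a ω ∂P :=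
    Measure.lintegral_bind κ.measurable.aemeasurable haintegrand.aemeasurable
  have hAne : ∫⁻ ω, a ω ∂P ≠ ⊤ := by
    have hle : ∫⁻ ω, a ω ∂P
        ≤ ∫⁻ ω, (Ent (κ ω) (η ω) + ENNReal.ofReal (Real.exp (-1)) + c ω) ∂P := by
      refine lintegral_mono_ae ?_
      filter_upwards [hkey, hωprop] with ω h1 h2
      calc a ω ≤ ENNReal.ofReal (∫ x, Real.log ((κ ω).rnDeriv (η ω) x).toReal ∂(κ ω))
            + ENNReal.ofReal (Real.exp (-1)) + c ω := h1.2.2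
        _ = Ent (κ ω) (η ω) + ENNReal.ofReal (Real.exp (-1)) + c ω := by rw [h2.2.2]
    have heq : ∫⁻ ω, (Ent (κ ω) (η ω) + ENNReal.ofReal (Real.exp (-1)) + c ω) ∂P
        = (∫⁻ ω, Ent (κ ω) (η ω) ∂P) + ENNReal.ofReal (Real.exp (-1)) * P Set.univ
          + ∫⁻ ω, c ω ∂P := by
      rw [lintegral_add_left (show Measurable fun ω => Ent (κ ω) (η ω) + ENNReal.ofReal (Real.exp (-1))
          from hmeas.add measurable_const) c, lintegral_add_left hmeas,
        lintegral_const]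
    refine (lt_of_le_of_lt hle ?_).ne
    rw [heq]
    refine ENNReal.add_lt_top.mpr ⟨ENNReal.add_lt_top.mpr ⟨lt_top_iff_ne_top.mpr hR, ?_⟩, hCne.lt_top⟩
    exact ENNReal.mul_lt_top ENNReal.ofReal_lt_top (measure_lt_top _ _)
  -- global integrability of log g
  have hLintν : Integrable (fun x => Real.log (g x).toReal) ν := by
    refine ⟨(hgm.ennreal_toReal.log).aestronglyMeasurable, ?_⟩
    rw [hasFiniteIntegral_iff_norm]
    simp_rw [Real.norm_eq_abs]
    have heq : ∫⁻ x, ENNReal.ofReal |Real.log (g x).toReal| ∂ν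
        = ∫⁻ x, ENNReal.ofReal (Real.log (g x).toReal) ∂ν
          + ∫⁻ x, ENNReal.ofReal (-Real.log (g x).toReal) ∂ν := by
      rw [← lintegral_add_left haintegrand]
      congr 1; ext x; exact ofReal_abs_eq _
    rw [heq, hA_bind, hB_bind]
    exact ENNReal.add_lt_top.mpr ⟨hAne.lt_top, hBne.lt_top⟩
  -- final computation
  have haInt : Integrable (fun ω => (a ω).toReal) P :=
    integrable_toReal_of_lintegral_ne_top ham.aemeasurable hAne
  have hbInt : Integrable (fun ω => (b ω).toReal) P :=
    integrable_toReal_of_lintegral_ne_top hbm.aemeasurable hBne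
  have hstep : ∫ x, Real.log (g x).toReal ∂ν
      = ∫ ω, ((a ω).toReal - (b ω).toReal) ∂P := by
    rw [integral_sub haInt hbInt,
      integral_toReal ham.aemeasurable (ae_lt_top ham hAne),
      integral_toReal hbm.aemeasurable (ae_lt_top hbm hBne),
      integral_eq_lintegral_pos_part_sub_lintegral_neg_part hLintν, hA_bind, hB_bind]
  have hIω : ∀ᵐ ω ∂P, (a ω).toReal - (b ω).toReal = ∫ x, Real.log (g x).toReal ∂(κ ω) := by
    filter_upwards [hkey] with ω h
    exact (integral_eq_lintegral_pos_part_sub_lintegral_neg_part h.1).symm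
  have hEnttoReal : ∀ᵐ ω ∂P, ∫ x, Real.log ((κ ω).rnDeriv (η ω) x).toReal ∂(κ ω)
      = (Ent (κ ω) (η ω)).toReal := by
    filter_upwards [hωprop] with ω h
    rw [h.2.2, ENNReal.toReal_ofReal (integral_llr_nonneg' h.1 h.2.1)]
  have hEntInt : Integrable (fun ω => (Ent (κ ω) (η ω)).toReal) P :=
    integrable_toReal_of_lintegral_ne_top hmeas.aemeasurable hR
  have hcInt : Integrable (fun ω => (c ω).toReal) P :=
    integrable_toReal_of_lintegral_ne_top hcm.aemeasurable hCne
  have hmono : ∫ ω, ((a ω).toReal - (b ω).toReal) ∂P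
      ≤ ∫ ω, ((Ent (κ ω) (η ω)).toReal + (c ω).toReal - 1) ∂P := by
    refine integral_mono_ae (haInt.sub hbInt)
      ((hEntInt.add hcInt).sub (integrable_const 1)) ?_
    filter_upwards [hIω, hkey, hEnttoReal] with ω h1 h2 h3
    rw [h1, ← h3]
    have := h2.2.1
    linarith
  have hfinal : ∫ x, Real.log (g x).toReal ∂ν
      ≤ (∫⁻ ω, Ent (κ ω) (η ω) ∂P).toReal := by
    rw [hstep]
    refine le_trans hmono ?_
    rw [integral_sub (show Integrable (fun ω => (Ent (κ ω) (η ω)).toReal + (c ω).toReal) P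
        from hEntInt.add hcInt) (integrable_const 1),
      integral_add hEntInt hcInt, integral_const]
    have h1 : ∫ ω, (Ent (κ ω) (η ω)).toReal ∂P = (∫⁻ ω, Ent (κ ω) (η ω) ∂P).toReal :=
      integral_toReal hmeas.aemeasurable (ae_lt_top hmeas hR)
    have h2 : ∫ ω, (c ω).toReal ∂P ≤ 1 := by
      rw [integral_toReal hcm.aemeasurable (ae_lt_top hcm hCne)]
      calc (∫⁻ ω, c ω ∂P).toReal ≤ (1 : ℝ≥0∞).toReal := ENNReal.toReal_mono one_ne_top hCle
        _ = 1 := by simp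
    simp only [measure_univ, probReal_univ, ENNReal.toReal_one, smul_eq_mul, one_mul]
    linarith [h1 ▸ le_refl (∫ ω, (Ent (κ ω) (η ω)).toReal ∂P)]
  rw [Ent, if_pos ⟨hacν, hLintν⟩]
  calc ENNReal.ofReal (∫ x, Real.log (ν.rnDeriv μ x).toReal ∂ν)
      ≤ ENNReal.ofReal ((∫⁻ ω, Ent (κ ω) (η ω) ∂P).toReal) :=
        ENNReal.ofReal_le_ofReal hfinal
    _ = ∫⁻ ω, Ent (κ ω) (η ω) ∂P := ENNReal.ofReal_toReal hR
end

section
/- Let N ≥ 1, 1 ≤ k ≤ N, and let μ, ν be exchangeable probability measures on (ℝ^d)^N with finite second moments. Let π_k : (ℝ^d)^N → (ℝ^d)^k denote the projection onto the first k coordinates. Then W₂((π_k)_*μ, (π_k)_*ν)² ≤ (k/N) W₂(μ, ν)². -/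
open MeasureTheory ENNReal

/-- Product σ-algebra on the `L²`-product space. -/
instance {ι : Type*} {E : ι → Type*} [∀ i, MeasurableSpace (E i)] :
    MeasurableSpace (PiLp 2 E) := MeasurableSpace.comap (fun x : PiLp 2 E => WithLp.ofLp x) MeasurableSpace.pi

lemma aux_edist_sq {ι : Type*} [Fintype ι] {β : ι → Type*}
    [∀ i, SeminormedAddCommGroup (β i)] (x y : PiLp 2 β) :
    edist x y ^ 2 = ∑ i, edist (x i) (y i) ^ 2 := by
  rw [PiLp.edist_eq_of_L2, ← ENNReal.rpow_natCast _ 2, ← ENNReal.rpow_mul]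
  norm_num

lemma aux_meas_reindex {d m n : ℕ} (f : Fin m → Fin n) :
    Measurable (fun v : PiLp 2 fun _ : Fin n => EuclideanSpace ℝ (Fin d) =>
      (WithLp.toLp 2 (fun i => v (f i)) : PiLp 2 fun _ : Fin m => EuclideanSpace ℝ (Fin d))) :=
  (WithLp.measurable_toLp _ _).comp (measurable_pi_lambda _ fun i => (measurable_pi_apply (f i)).comp (WithLp.measurable_ofLp _ _))

lemma aux_meas_coord {d n : ℕ} (a b : Fin n) :
    Measurable (fun p : (PiLp 2 fun _ : Fin n => EuclideanSpace ℝ (Fin d)) ×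
      (PiLp 2 fun _ : Fin n => EuclideanSpace ℝ (Fin d)) => edist (p.1 a) (p.2 b) ^ 2) := by
  apply Measurable.pow_const
  have hfst : Measurable (Prod.fst : (PiLp 2 fun _ : Fin n => EuclideanSpace ℝ (Fin d)) ×
      (PiLp 2 fun _ : Fin n => EuclideanSpace ℝ (Fin d)) →
      (PiLp 2 fun _ : Fin n => EuclideanSpace ℝ (Fin d))) := measurable_fst
  have hsnd : Measurable (Prod.snd : (PiLp 2 fun _ : Fin n => EuclideanSpace ℝ (Fin d)) ×
      (PiLp 2 fun _ : Fin n => EuclideanSpace ℝ (Fin d)) →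
      (PiLp 2 fun _ : Fin n => EuclideanSpace ℝ (Fin d))) := measurable_snd
  exact ((measurable_pi_apply a).comp ((WithLp.measurable_ofLp _ _).comp hfst)).edist
    ((measurable_pi_apply b).comp ((WithLp.measurable_ofLp _ _).comp hsnd))

lemma aux_meas_edist_sq {d n : ℕ} :
    Measurable (fun p : (PiLp 2 fun _ : Fin n => EuclideanSpace ℝ (Fin d)) ×
      (PiLp 2 fun _ : Fin n => EuclideanSpace ℝ (Fin d)) => edist p.1 p.2 ^ 2) := by
  have h : (fun p : (PiLp 2 fun _ : Fin n => EuclideanSpace ℝ (Fin d)) ×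
      (PiLp 2 fun _ : Fin n => EuclideanSpace ℝ (Fin d)) => edist p.1 p.2 ^ 2) =
      fun p => ∑ i, edist (p.1 i) (p.2 i) ^ 2 := funext fun p => aux_edist_sq p.1 p.2
  rw [h]
  exact Finset.measurable_sum _ fun i _ => aux_meas_coord i i

lemma aux_min_le {N : ℕ} [NeZero N] (I : Fin N → ℝ≥0∞) (a c : ℝ≥0∞) (k : ℕ)
    (hle : ∀ j, a ≤ I j) (hsum : ∑ j, I j = k * c) : a ≤ (k : ℝ≥0∞) / N * c := by
  have hN0 : (N : ℝ≥0∞) ≠ 0 := Nat.cast_ne_zero.mpr (NeZero.ne N)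
  have hNt : (N : ℝ≥0∞) ≠ ∞ := natCast_ne_top N
  have h1 : a * N ≤ (k : ℝ≥0∞) * c := by
    rw [← hsum]
    have h2 := Finset.card_nsmul_le_sum (Finset.univ : Finset (Fin N)) I a (fun j _ => hle j)
    simpa [Finset.card_univ, nsmul_eq_mul, mul_comm] using h2
  have h3 : a ≤ (k : ℝ≥0∞) * c / N := (ENNReal.le_div_iff_mul_le (Or.inl hN0) (Or.inl hNt)).mpr h1
  calc a ≤ (k : ℝ≥0∞) * c / N := h3
    _ = (k : ℝ≥0∞) / N * c := by rw [div_eq_mul_inv, div_eq_mul_inv]; ring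

/-- For `1 ≤ k ≤ N` and exchangeable probability measures `μ, ν` on `(ℝ^d)^N` (with the
`L²`-product metric) with finite second moments, the projections onto the first `k`
coordinates satisfy `W₂((π_k)_*μ, (π_k)_*ν)² ≤ (k/N)·W₂(μ,ν)²`. -/
theorem w2sq_marginal_le_of_exchangeable {d N k : ℕ} (hk : 1 ≤ k) (hkN : k ≤ N)
    (μ ν : Measure (PiLp 2 fun _ : Fin N => EuclideanSpace ℝ (Fin d)))
    [IsProbabilityMeasure μ] [IsProbabilityMeasure ν]
    (hμ2 : ∫⁻ v, edist v 0 ^ 2 ∂μ < ⊤) (hν2 : ∫⁻ v, edist v 0 ^ 2 ∂ν < ⊤)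
    (hμexch : ∀ σ : Equiv.Perm (Fin N),
      μ.map (fun v => (WithLp.toLp 2 (fun i => v (σ i)) : PiLp 2 fun _ : Fin N => EuclideanSpace ℝ (Fin d))) = μ)
    (hνexch : ∀ σ : Equiv.Perm (Fin N),
      ν.map (fun v => (WithLp.toLp 2 (fun i => v (σ i)) : PiLp 2 fun _ : Fin N => EuclideanSpace ℝ (Fin d))) = ν)
    (πk : PiLp 2 (fun _ : Fin N => EuclideanSpace ℝ (Fin d)) →
      PiLp 2 fun _ : Fin k => EuclideanSpace ℝ (Fin d))
    (hπk : ∀ v i, πk v i = v (Fin.castLE hkN i)) :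
    W2sq (μ.map πk) (ν.map πk) ≤ (k : ℝ≥0∞) / N * W2sq μ ν := by
  haveI : NeZero N := ⟨by omega⟩
  have hc0 : (k : ℝ≥0∞) / N ≠ 0 := by
    simp only [ne_eq, ENNReal.div_eq_zero_iff, Nat.cast_eq_zero, natCast_ne_top, or_false]
    omega
  have hct : (k : ℝ≥0∞) / N ≠ ∞ :=
    (ENNReal.div_lt_top (natCast_ne_top k) (Nat.cast_ne_zero.mpr (NeZero.ne N))).ne
  have hπk_eq : πk = fun v => (WithLp.toLp 2 (fun i => v (Fin.castLE hkN i)) :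
      PiLp 2 fun _ : Fin k => EuclideanSpace ℝ (Fin d)) := by
    funext v
    apply PiLp.ext; intro i
    exact hπk v i
  have hπk_meas : Measurable πk := by rw [hπk_eq]; exact aux_meas_reindex _
  have hmain : ∀ π : Measure ((PiLp 2 fun _ : Fin N => EuclideanSpace ℝ (Fin d)) ×
      (PiLp 2 fun _ : Fin N => EuclideanSpace ℝ (Fin d))),
      IsProbabilityMeasure π → π.map Prod.fst = μ → π.map Prod.snd = ν →
      W2sq (μ.map πk) (ν.map πk) ≤ (k : ℝ≥0∞) / N * ∫⁻ p, edist p.1 p.2 ^ 2 ∂π := by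
    intro π hπprob hπ1 hπ2
    haveI := hπprob
    have hF : ∀ j : Fin N, Measurable (fun v : PiLp 2 fun _ : Fin N => EuclideanSpace ℝ (Fin d) =>
        (WithLp.toLp 2 (fun i => v (j + i)) : PiLp 2 fun _ : Fin N => EuclideanSpace ℝ (Fin d))) :=
      fun j => aux_meas_reindex _
    have hfst : Measurable (Prod.fst : (PiLp 2 fun _ : Fin N => EuclideanSpace ℝ (Fin d)) ×
        (PiLp 2 fun _ : Fin N => EuclideanSpace ℝ (Fin d)) →
        (PiLp 2 fun _ : Fin N => EuclideanSpace ℝ (Fin d))) := measurable_fst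
    have hsnd : Measurable (Prod.snd : (PiLp 2 fun _ : Fin N => EuclideanSpace ℝ (Fin d)) ×
        (PiLp 2 fun _ : Fin N => EuclideanSpace ℝ (Fin d)) →
        (PiLp 2 fun _ : Fin N => EuclideanSpace ℝ (Fin d))) := measurable_snd
    have hμshift : ∀ j : Fin N, μ.map (fun v : PiLp 2 fun _ : Fin N => EuclideanSpace ℝ (Fin d) =>
        (WithLp.toLp 2 (fun i => v (j + i)) : PiLp 2 fun _ : Fin N => EuclideanSpace ℝ (Fin d))) = μ := by
      intro j
      simpa [Equiv.coe_addLeft] using hμexch (Equiv.addLeft j)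
    have hνshift : ∀ j : Fin N, ν.map (fun v : PiLp 2 fun _ : Fin N => EuclideanSpace ℝ (Fin d) =>
        (WithLp.toLp 2 (fun i => v (j + i)) : PiLp 2 fun _ : Fin N => EuclideanSpace ℝ (Fin d))) = ν := by
      intro j
      simpa [Equiv.coe_addLeft] using hνexch (Equiv.addLeft j)
    have hTmeas : ∀ j : Fin N, Measurable (fun p :
        (PiLp 2 fun _ : Fin N => EuclideanSpace ℝ (Fin d)) ×
        (PiLp 2 fun _ : Fin N => EuclideanSpace ℝ (Fin d)) =>
        ((πk (WithLp.toLp 2 fun i => p.1 (j + i)), πk (WithLp.toLp 2 fun i => p.2 (j + i))) :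
          (PiLp 2 fun _ : Fin k => EuclideanSpace ℝ (Fin d)) ×
          (PiLp 2 fun _ : Fin k => EuclideanSpace ℝ (Fin d)))) := by
      intro j
      exact (hπk_meas.comp ((hF j).comp hfst)).prodMk (hπk_meas.comp ((hF j).comp hsnd))
    have hmarg1 : ∀ j : Fin N,
        (π.map (fun p : (PiLp 2 fun _ : Fin N => EuclideanSpace ℝ (Fin d)) ×
          (PiLp 2 fun _ : Fin N => EuclideanSpace ℝ (Fin d)) =>
          ((πk (WithLp.toLp 2 fun i => p.1 (j + i)), πk (WithLp.toLp 2 fun i => p.2 (j + i))) :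
            (PiLp 2 fun _ : Fin k => EuclideanSpace ℝ (Fin d)) ×
            (PiLp 2 fun _ : Fin k => EuclideanSpace ℝ (Fin d))))).map Prod.fst = μ.map πk := by
      intro j
      rw [Measure.map_map measurable_fst (hTmeas j)]
      have h1 : (Prod.fst ∘ fun p : (PiLp 2 fun _ : Fin N => EuclideanSpace ℝ (Fin d)) ×
          (PiLp 2 fun _ : Fin N => EuclideanSpace ℝ (Fin d)) =>
          ((πk (WithLp.toLp 2 fun i => p.1 (j + i)), πk (WithLp.toLp 2 fun i => p.2 (j + i))) :
            (PiLp 2 fun _ : Fin k => EuclideanSpace ℝ (Fin d)) ×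
            (PiLp 2 fun _ : Fin k => EuclideanSpace ℝ (Fin d)))) =
          (πk ∘ (fun v : PiLp 2 fun _ : Fin N => EuclideanSpace ℝ (Fin d) =>
            (WithLp.toLp 2 (fun i => v (j + i)) : PiLp 2 fun _ : Fin N => EuclideanSpace ℝ (Fin d)))) ∘
            Prod.fst := rfl
      rw [h1, ← Measure.map_map (hπk_meas.comp (hF j)) measurable_fst, hπ1,
        ← Measure.map_map hπk_meas (hF j), hμshift j]
    have hmarg2 : ∀ j : Fin N,
        (π.map (fun p : (PiLp 2 fun _ : Fin N => EuclideanSpace ℝ (Fin d)) ×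
          (PiLp 2 fun _ : Fin N => EuclideanSpace ℝ (Fin d)) =>
          ((πk (WithLp.toLp 2 fun i => p.1 (j + i)), πk (WithLp.toLp 2 fun i => p.2 (j + i))) :
            (PiLp 2 fun _ : Fin k => EuclideanSpace ℝ (Fin d)) ×
            (PiLp 2 fun _ : Fin k => EuclideanSpace ℝ (Fin d))))).map Prod.snd = ν.map πk := by
      intro j
      rw [Measure.map_map measurable_snd (hTmeas j)]
      have h1 : (Prod.snd ∘ fun p : (PiLp 2 fun _ : Fin N => EuclideanSpace ℝ (Fin d)) ×
          (PiLp 2 fun _ : Fin N => EuclideanSpace ℝ (Fin d)) =>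
          ((πk (WithLp.toLp 2 fun i => p.1 (j + i)), πk (WithLp.toLp 2 fun i => p.2 (j + i))) :
            (PiLp 2 fun _ : Fin k => EuclideanSpace ℝ (Fin d)) ×
            (PiLp 2 fun _ : Fin k => EuclideanSpace ℝ (Fin d)))) =
          (πk ∘ (fun v : PiLp 2 fun _ : Fin N => EuclideanSpace ℝ (Fin d) =>
            (WithLp.toLp 2 (fun i => v (j + i)) : PiLp 2 fun _ : Fin N => EuclideanSpace ℝ (Fin d)))) ∘
            Prod.snd := rfl
      rw [h1, ← Measure.map_map (hπk_meas.comp (hF j)) measurable_snd, hπ2,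
        ← Measure.map_map hπk_meas (hF j), hνshift j]
    have hcost : ∀ j : Fin N,
        (∫⁻ q, edist q.1 q.2 ^ 2 ∂(π.map (fun p :
          (PiLp 2 fun _ : Fin N => EuclideanSpace ℝ (Fin d)) ×
          (PiLp 2 fun _ : Fin N => EuclideanSpace ℝ (Fin d)) =>
          ((πk (WithLp.toLp 2 fun i => p.1 (j + i)), πk (WithLp.toLp 2 fun i => p.2 (j + i))) :
            (PiLp 2 fun _ : Fin k => EuclideanSpace ℝ (Fin d)) ×
            (PiLp 2 fun _ : Fin k => EuclideanSpace ℝ (Fin d)))))) =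
          ∫⁻ p, (∑ i : Fin k, edist (p.1 (j + Fin.castLE hkN i))
            (p.2 (j + Fin.castLE hkN i)) ^ 2) ∂π := by
      intro j
      rw [lintegral_map aux_meas_edist_sq (hTmeas j)]
      congr 1
      funext p
      simp only [aux_edist_sq, hπk, WithLp.ofLp_toLp]
    have hle : ∀ j : Fin N, W2sq (μ.map πk) (ν.map πk) ≤
        ∫⁻ p, (∑ i : Fin k, edist (p.1 (j + Fin.castLE hkN i))
          (p.2 (j + Fin.castLE hkN i)) ^ 2) ∂π := by
      intro j
      rw [← hcost j, W2sq]
      exact iInf₂_le _ ⟨Measure.isProbabilityMeasure_map (hTmeas j).aemeasurable, hmarg1 j, hmarg2 j⟩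
    have hsum : ∑ j : Fin N, ∫⁻ p, (∑ i : Fin k, edist (p.1 (j + Fin.castLE hkN i))
        (p.2 (j + Fin.castLE hkN i)) ^ 2) ∂π = (k : ℝ≥0∞) * ∫⁻ p, edist p.1 p.2 ^ 2 ∂π := by
      rw [← lintegral_finset_sum _ (fun j _ =>
        Finset.measurable_sum _ fun i _ => aux_meas_coord _ _)]
      have hpt : ∀ p : (PiLp 2 fun _ : Fin N => EuclideanSpace ℝ (Fin d)) ×
          (PiLp 2 fun _ : Fin N => EuclideanSpace ℝ (Fin d)),
          ∑ j : Fin N, ∑ i : Fin k, edist (p.1 (j + Fin.castLE hkN i))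
            (p.2 (j + Fin.castLE hkN i)) ^ 2 = (k : ℝ≥0∞) * (edist p.1 p.2 ^ 2) := by
        intro p
        rw [Finset.sum_comm]
        have hrow : ∀ i : Fin k, ∑ j : Fin N, edist (p.1 (j + Fin.castLE hkN i))
            (p.2 (j + Fin.castLE hkN i)) ^ 2 = edist p.1 p.2 ^ 2 := by
          intro i
          rw [aux_edist_sq]
          exact Fintype.sum_equiv (Equiv.addRight (Fin.castLE hkN i)) _ _ (fun j => rfl)
        rw [Finset.sum_congr rfl fun i _ => hrow i, Finset.sum_const, Finset.card_univ,
          Fintype.card_fin, nsmul_eq_mul]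
      simp only [hpt]
      rw [lintegral_const_mul _ aux_meas_edist_sq]
    exact aux_min_le _ _ _ k hle hsum
  conv_rhs => rw [W2sq]
  rw [ENNReal.mul_iInf_of_ne hc0 hct]
  refine le_iInf fun π => ?_
  rw [ENNReal.mul_iInf_of_ne hc0 hct]
  exact le_iInf fun hπ => hmain π hπ.1 hπ.2.1 hπ.2.2
end

section
/- Let E be a measurable space, N ≥ 1, 1 ≤ k ≤ N, ν an exchangeable probability measure on E^N, μ a probability measure on E, and C ≥ 0. Suppose that for every bounded measurable F : E^N → ℝ with inf F > 0 one has ∫ log F dν ≤ log ∫ F dμ^{⊗N} + C. Then for every bounded measurable f : E^k → ℝ with inf f > 0, ∫ log f d((π_k)_*ν) ≤ log ∫ f dμ^{⊗k} + C/⌊N/k⌋, where π_k : E^N → E^k is the projection onto the first k coordinates and ⌊N/k⌋ is the integer part of N/k; in particular the last error term is at most (2k/N)·C. -/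
open MeasureTheory ENNReal

/-- Marginal of a product measure under an injective selection of coordinates. -/
lemma aux_pi_map_proj_inj {ι ι' E : Type*} [Fintype ι] [Fintype ι'] [MeasurableSpace E]
    (μ : Measure E) [IsProbabilityMeasure μ] {g : ι → ι'} (hg : Function.Injective g) :
    (Measure.pi fun _ : ι' => μ).map (fun v i => v (g i)) = Measure.pi fun _ : ι => μ := by
  classical
  let e : (ι ⊕ ((Set.range g)ᶜ : Set ι')) ≃ ι' :=
    (Equiv.sumCongr (Equiv.ofInjective g hg) (Equiv.refl _)).trans
      (Equiv.Set.sumCompl (Set.range g))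
  have he : ∀ i, e (Sum.inl i) = g i := fun i => by
    simp [e, Equiv.Set.sumCompl_apply_inl]
  have h1 := measurePreserving_piCongrLeft (fun _ : ι' => μ) e
  have hP : Measurable (fun (v : ι' → E) i => v (g i)) :=
    measurable_pi_lambda _ fun i => measurable_pi_apply _
  have h2 := measurePreserving_sumPiEquivProdPi_symm
    (fun _ : ι ⊕ ((Set.range g)ᶜ : Set ι') => μ)
  have hQ : Measurable (fun (w : (ι ⊕ ((Set.range g)ᶜ : Set ι')) → E) i => w (Sum.inl i)) :=
    measurable_pi_lambda _ fun i => measurable_pi_apply _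
  calc (Measure.pi fun _ : ι' => μ).map (fun v i => v (g i))
      = ((Measure.pi fun _ : ι ⊕ ((Set.range g)ᶜ : Set ι') => μ).map
          (MeasurableEquiv.piCongrLeft (fun _ : ι' => E) e)).map (fun v i => v (g i)) := by
        rw [h1.map_eq]
    _ = (Measure.pi fun _ : ι ⊕ ((Set.range g)ᶜ : Set ι') => μ).map
          ((fun v i => v (g i)) ∘ (MeasurableEquiv.piCongrLeft (fun _ : ι' => E) e)) := by
        rw [Measure.map_map hP (MeasurableEquiv.measurable _)]
    _ = (Measure.pi fun _ : ι ⊕ ((Set.range g)ᶜ : Set ι') => μ).map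
          (fun w i => w (Sum.inl i)) := by
        congr 1
        funext w
        funext i
        show (MeasurableEquiv.piCongrLeft (fun _ : ι' => E) e) w (g i) = w (Sum.inl i)
        rw [MeasurableEquiv.coe_piCongrLeft, ← he i, Equiv.piCongrLeft_apply_apply]
    _ = (((Measure.pi fun _ : ι => μ).prod
            (Measure.pi fun _ : ((Set.range g)ᶜ : Set ι') => μ)).map
          (MeasurableEquiv.sumPiEquivProdPi
            (fun _ : ι ⊕ ((Set.range g)ᶜ : Set ι') => E)).symm).map
          (fun w i => w (Sum.inl i)) := by rw [h2.map_eq]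
    _ = ((Measure.pi fun _ : ι => μ).prod
            (Measure.pi fun _ : ((Set.range g)ᶜ : Set ι') => μ)).map
          ((fun w i => w (Sum.inl i)) ∘ (MeasurableEquiv.sumPiEquivProdPi
            (fun _ : ι ⊕ ((Set.range g)ᶜ : Set ι') => E)).symm) := by
        rw [Measure.map_map hQ (MeasurableEquiv.measurable _)]
    _ = ((Measure.pi fun _ : ι => μ).prod
            (Measure.pi fun _ : ((Set.range g)ᶜ : Set ι') => μ)).map Prod.fst := rfl
    _ = Measure.pi fun _ : ι => μ := by
        rw [Measure.map_fst_prod]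
        simp

/-- Currying a product measure over a product index type. -/
lemma aux_pi_map_curry {m k : ℕ} {E : Type*} [MeasurableSpace E]
    (μ : Measure E) [IsProbabilityMeasure μ] :
    (Measure.pi fun _ : Fin m × Fin k => μ).map (fun x (j : Fin m) (i : Fin k) => x (j, i))
      = Measure.pi (fun _ : Fin m => Measure.pi fun _ : Fin k => μ) := by
  have hU : Measurable (fun (y : Fin m → Fin k → E) (p : Fin m × Fin k) => y p.1 p.2) :=
    measurable_pi_lambda _ fun p => (measurable_pi_apply p.2).comp (measurable_pi_apply p.1)
  have hcur : Measurable (fun (x : Fin m × Fin k → E) (j : Fin m) (i : Fin k) => x (j, i)) :=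
    measurable_pi_lambda _ fun j => measurable_pi_lambda _ fun i => measurable_pi_apply _
  have key : (Measure.pi (fun _ : Fin m => Measure.pi fun _ : Fin k => μ)).map
      (fun y (p : Fin m × Fin k) => y p.1 p.2) = Measure.pi fun _ : Fin m × Fin k => μ := by
    refine (Measure.pi_eq fun s hs => ?_).symm
    rw [Measure.map_apply hU (MeasurableSet.univ_pi hs)]
    have hpre : (fun (y : Fin m → Fin k → E) (p : Fin m × Fin k) => y p.1 p.2) ⁻¹'
        (Set.univ.pi s) = Set.univ.pi fun j => Set.univ.pi fun i => s (j, i) := by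
      ext y
      simp [Set.mem_univ_pi, Prod.forall]
    rw [hpre, Measure.pi_pi]
    simp_rw [Measure.pi_pi]
    rw [Fintype.prod_prod_type]
  calc (Measure.pi fun _ : Fin m × Fin k => μ).map
        (fun x (j : Fin m) (i : Fin k) => x (j, i))
      = ((Measure.pi (fun _ : Fin m => Measure.pi fun _ : Fin k => μ)).map
          (fun y (p : Fin m × Fin k) => y p.1 p.2)).map
          (fun x (j : Fin m) (i : Fin k) => x (j, i)) := by rw [key]
    _ = (Measure.pi (fun _ : Fin m => Measure.pi fun _ : Fin k => μ)).map
          ((fun x (j : Fin m) (i : Fin k) => x (j, i)) ∘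
            (fun y (p : Fin m × Fin k) => y p.1 p.2)) := Measure.map_map hcur hU
    _ = Measure.pi (fun _ : Fin m => Measure.pi fun _ : Fin k => μ) := by
        rw [show ((fun x (j : Fin m) (i : Fin k) => x (j, i)) ∘
            (fun (y : Fin m → Fin k → E) (p : Fin m × Fin k) => y p.1 p.2)) = id from rfl,
          Measure.map_id]

/-- All marginals (along injective coordinate maps) of an exchangeable measure agree. -/
lemma aux_exch_marginal {N k : ℕ} {E : Type*} [MeasurableSpace E]
    (ν : Measure (Fin N → E))
    (hνexch : ∀ σ : Equiv.Perm (Fin N), ν.map (fun v i => v (σ i)) = ν)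
    {g₁ g₂ : Fin k → Fin N} (h₁ : Function.Injective g₁) (h₂ : Function.Injective g₂) :
    ν.map (fun v i => v (g₁ i)) = ν.map (fun v i => v (g₂ i)) := by
  classical
  let e : {x // x ∈ Set.range g₁} ≃ {x // x ∈ Set.range g₂} :=
    ((Equiv.ofInjective g₁ h₁).symm.trans (Equiv.ofInjective g₂ h₂))
  let σ : Equiv.Perm (Fin N) := e.extendSubtype
  have hσ : ∀ i, σ (g₁ i) = g₂ i := by
    intro i
    have hmem : g₁ i ∈ Set.range g₁ := ⟨i, rfl⟩
    have := e.extendSubtype_apply_of_mem (g₁ i) hmem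
    rw [this]
    show ((Equiv.ofInjective g₂ h₂) ((Equiv.ofInjective g₁ h₁).symm ⟨g₁ i, hmem⟩) : Fin N) = g₂ i
    rw [show (⟨g₁ i, hmem⟩ : {x // x ∈ Set.range g₁}) = Equiv.ofInjective g₁ h₁ i from rfl,
      Equiv.symm_apply_apply]
    rfl
  have hmeas1 : Measurable (fun (v : Fin N → E) i => v (g₁ i)) :=
    measurable_pi_lambda _ fun i => measurable_pi_apply _
  have hmeasσ : Measurable (fun (v : Fin N → E) j => v (σ j)) :=
    measurable_pi_lambda _ fun j => measurable_pi_apply _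
  calc ν.map (fun v i => v (g₁ i))
      = (ν.map (fun v j => v (σ j))).map (fun v i => v (g₁ i)) := by rw [hνexch σ]
    _ = ν.map ((fun v i => v (g₁ i)) ∘ (fun v j => v (σ j))) := Measure.map_map hmeas1 hmeasσ
    _ = ν.map (fun v i => v (g₂ i)) := by
        congr 1
        funext v
        funext i
        show v (σ (g₁ i)) = v (g₂ i)
        rw [hσ i]

/-- If `ν` is an exchangeable probability measure on `E^N`, `μ` a probability measure on `E`,
and `∫ log F dν ≤ log ∫ F dμ^{⊗N} + C` for all bounded measurable `F > 0` on `E^N`, then for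
`1 ≤ k ≤ N` and all bounded measurable `f > 0` on `E^k` one has
`∫ log f d((π_k)_*ν) ≤ log ∫ f dμ^{⊗k} + C/⌊N/k⌋`, and `C/⌊N/k⌋ ≤ (2k/N)·C`. -/
theorem marginal_log_estimate_of_exchangeable
    {E : Type*} [MeasurableSpace E] {N k : ℕ} (hk : 1 ≤ k) (hkN : k ≤ N)
    (ν : Measure (Fin N → E)) [IsProbabilityMeasure ν]
    (hνexch : ∀ σ : Equiv.Perm (Fin N), ν.map (fun v i => v (σ i)) = ν)
    (μ : Measure E) [IsProbabilityMeasure μ]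
    (C : ℝ) (hC : 0 ≤ C)
    (hyp : ∀ F : (Fin N → E) → ℝ, Measurable F → (∃ M : ℝ, ∀ v, F v ≤ M) →
      (∃ ε > (0 : ℝ), ∀ v, ε ≤ F v) →
      ∫ v, Real.log (F v) ∂ν ≤ Real.log (∫ v, F v ∂(Measure.pi fun _ : Fin N => μ)) + C) :
    ∀ f : (Fin k → E) → ℝ, Measurable f → (∃ M : ℝ, ∀ w, f w ≤ M) →
      (∃ ε > (0 : ℝ), ∀ w, ε ≤ f w) →
      (∫ w, Real.log (f w) ∂(ν.map (fun v (i : Fin k) => v (Fin.castLE hkN i)))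
          ≤ Real.log (∫ w, f w ∂(Measure.pi fun _ : Fin k => μ)) + C / (N / k : ℕ))
        ∧ C / ((N / k : ℕ) : ℝ) ≤ 2 * k / N * C := by
  intro f hf hMf hεf
  classical
  obtain ⟨M, hM⟩ := hMf
  obtain ⟨ε, hε, hεle⟩ := hεf
  set m := N / k with hmdef
  have hk0 : 0 < k := hk
  have hm1 : 1 ≤ m := (Nat.one_le_div_iff hk0).mpr hkN
  -- block coordinate maps
  have hblt : ∀ (j : Fin m) (i : Fin k), (j : ℕ) * k + (i : ℕ) < N := by
    intro j i
    have h1 : (j : ℕ) * k + (i : ℕ) < ((j : ℕ) + 1) * k := by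
      have := i.2
      have : ((j : ℕ) + 1) * k = (j : ℕ) * k + k := by ring
      omega
    have h2 : ((j : ℕ) + 1) * k ≤ m * k := Nat.mul_le_mul_right k j.2
    have h3 : m * k ≤ N := Nat.div_mul_le_self N k
    omega
  let b : Fin m → Fin k → Fin N := fun j i => ⟨(j : ℕ) * k + i, hblt j i⟩
  have hbinj : Function.Injective (fun p : Fin m × Fin k => b p.1 p.2) := by
    rintro ⟨j₁, i₁⟩ ⟨j₂, i₂⟩ h
    have h'' : (j₁ : ℕ) * k + (i₁ : ℕ) = (j₂ : ℕ) * k + (i₂ : ℕ) := congrArg Fin.val h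
    have d1 : ((j₁ : ℕ) * k + (i₁ : ℕ)) / k = (j₁ : ℕ) := by
      rw [Nat.add_comm, Nat.add_mul_div_right _ _ hk0, Nat.div_eq_of_lt i₁.2, Nat.zero_add]
    have d2 : ((j₂ : ℕ) * k + (i₂ : ℕ)) / k = (j₂ : ℕ) := by
      rw [Nat.add_comm, Nat.add_mul_div_right _ _ hk0, Nat.div_eq_of_lt i₂.2, Nat.zero_add]
    have hj : (j₁ : ℕ) = (j₂ : ℕ) := by rw [← d1, ← d2, h'']
    have hi : (i₁ : ℕ) = (i₂ : ℕ) := by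
      refine Nat.add_left_cancel (n := (j₂ : ℕ) * k) ?_
      rw [← h'', hj]
    simp [Prod.ext_iff, Fin.ext_iff, hj, hi]
  have hbjinj : ∀ j : Fin m, Function.Injective (b j) := by
    intro j i₁ i₂ h
    have : ((j, i₁) : Fin m × Fin k) = (j, i₂) := hbinj h
    simpa [Prod.ext_iff] using this
  -- positivity and bounds for f
  set M' := max M 1 with hM'def
  set ε' := min ε 1 with hε'def
  have hε'pos : 0 < ε' := lt_min hε one_pos
  have hε'f : ∀ w, ε' ≤ f w := fun w => (min_le_left _ _).trans (hεle w)
  have hf0 : ∀ w, 0 < f w := fun w => lt_of_lt_of_le hε'pos (hε'f w)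
  have hfM' : ∀ w, f w ≤ M' := fun w => (hM w).trans (le_max_left _ _)
  -- the big test function
  set F : (Fin N → E) → ℝ := fun v => ∏ j : Fin m, f (fun i => v (b j i)) with hFdef
  have hprojmeas : ∀ (g : Fin k → Fin N), Measurable (fun (v : Fin N → E) i => v (g i)) :=
    fun g => measurable_pi_lambda _ fun i => measurable_pi_apply _
  have hFmeas : Measurable F :=
    Finset.measurable_prod _ fun j _ => hf.comp (hprojmeas (b j))
  have hFub : ∀ v, F v ≤ M' ^ m := by
    intro v
    calc F v ≤ ∏ _j : Fin m, M' :=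
          Finset.prod_le_prod (fun j _ => (hf0 _).le) (fun j _ => hfM' _)
      _ = M' ^ m := by simp
  have hFlb : ∀ v, ε' ^ m ≤ F v := by
    intro v
    calc ε' ^ m = ∏ _j : Fin m, ε' := by simp
      _ ≤ F v := Finset.prod_le_prod (fun _ _ => hε'pos.le) (fun j _ => hε'f _)
  have hkey := hyp F hFmeas ⟨M' ^ m, hFub⟩ ⟨ε' ^ m, pow_pos hε'pos m, hFlb⟩
  -- integrability of log ∘ f ∘ proj
  set K := max |Real.log ε'| |Real.log M'| with hKdef
  have hlogbd : ∀ w, ‖Real.log (f w)‖ ≤ K := by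
    intro w
    rw [Real.norm_eq_abs]
    have h1 : Real.log ε' ≤ Real.log (f w) := Real.log_le_log hε'pos (hε'f w)
    have h2 : Real.log (f w) ≤ Real.log M' := Real.log_le_log (hf0 w) (hfM' w)
    have h3 := neg_abs_le (Real.log ε')
    have h4 := le_abs_self (Real.log M')
    have h5 := le_max_left |Real.log ε'| |Real.log M'|
    have h6 := le_max_right |Real.log ε'| |Real.log M'|
    rw [abs_le]
    constructor <;> linarith
  have hInt : ∀ (g : Fin k → Fin N),
      Integrable (fun v => Real.log (f (fun i => v (g i)))) ν := by
    intro g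
    refine Integrable.mono' (integrable_const K)
      ((Real.measurable_log.comp (hf.comp (hprojmeas g))).aestronglyMeasurable)
      (ae_of_all _ fun v => hlogbd _)
  -- LHS computation
  have hlogF : ∀ v, Real.log (F v) = ∑ j : Fin m, Real.log (f (fun i => v (b j i))) :=
    fun v => Real.log_prod (fun j _ => (hf0 _).ne')
  set I := ∫ w, Real.log (f w) ∂(ν.map (fun v (i : Fin k) => v (Fin.castLE hkN i))) with hIdef
  have hterm : ∀ j : Fin m, ∫ v, Real.log (f (fun i => v (b j i))) ∂ν = I := by
    intro j
    have hmapeq : ν.map (fun v i => v (b j i))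
        = ν.map (fun v (i : Fin k) => v (Fin.castLE hkN i)) :=
      aux_exch_marginal ν hνexch (hbjinj j) (Fin.castLE_injective hkN)
    rw [hIdef, ← hmapeq]
    exact (integral_map (hprojmeas (b j)).aemeasurable
      ((Real.measurable_log.comp hf).aestronglyMeasurable)).symm
  have hLHS : ∫ v, Real.log (F v) ∂ν = (m : ℝ) * I := by
    calc ∫ v, Real.log (F v) ∂ν
        = ∫ v, ∑ j : Fin m, Real.log (f (fun i => v (b j i))) ∂ν := by simp_rw [hlogF]
      _ = ∑ j : Fin m, ∫ v, Real.log (f (fun i => v (b j i))) ∂ν :=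
          integral_finset_sum _ (fun j _ => hInt (b j))
      _ = ∑ _j : Fin m, I := by simp_rw [hterm]
      _ = (m : ℝ) * I := by simp [Finset.sum_const, nsmul_eq_mul]
  -- RHS computation
  set If := ∫ w, f w ∂(Measure.pi fun _ : Fin k => μ) with hIfdef
  have hT : Measurable (fun (v : Fin N → E) (j : Fin m) (i : Fin k) => v (b j i)) :=
    measurable_pi_lambda _ fun j => hprojmeas (b j)
  have hcur : Measurable (fun (x : Fin m × Fin k → E) (j : Fin m) (i : Fin k) => x (j, i)) :=
    measurable_pi_lambda _ fun j => measurable_pi_lambda _ fun i => measurable_pi_apply _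
  have hprojb : Measurable (fun (v : Fin N → E) (p : Fin m × Fin k) => v (b p.1 p.2)) :=
    measurable_pi_lambda _ fun p => measurable_pi_apply _
  have hmapT : (Measure.pi fun _ : Fin N => μ).map
      (fun (v : Fin N → E) (j : Fin m) (i : Fin k) => v (b j i))
      = Measure.pi (fun _ : Fin m => Measure.pi fun _ : Fin k => μ) := by
    have hcomp : (fun (v : Fin N → E) (j : Fin m) (i : Fin k) => v (b j i))
        = (fun x (j : Fin m) (i : Fin k) => x (j, i)) ∘
          (fun v (p : Fin m × Fin k) => v (b p.1 p.2)) := rfl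
    rw [hcomp, ← Measure.map_map hcur hprojb, aux_pi_map_proj_inj μ hbinj, aux_pi_map_curry]
  have hG : Measurable (fun (y : Fin m → Fin k → E) => ∏ j : Fin m, f (y j)) :=
    Finset.measurable_prod _ fun j _ => hf.comp (measurable_pi_apply _)
  have hRHS : ∫ v, F v ∂(Measure.pi fun _ : Fin N => μ) = If ^ m := by
    letI : MeasureSpace (Fin k → E) := ⟨Measure.pi fun _ : Fin k => μ⟩
    haveI : IsProbabilityMeasure (volume : Measure (Fin k → E)) :=
      inferInstanceAs (IsProbabilityMeasure (Measure.pi fun _ : Fin k => μ))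
    have hvol : (volume : Measure (Fin m → Fin k → E))
        = Measure.pi (fun _ : Fin m => Measure.pi fun _ : Fin k => μ) := rfl
    calc ∫ v, F v ∂(Measure.pi fun _ : Fin N => μ)
        = ∫ y, ∏ j : Fin m, f (y j)
            ∂((Measure.pi fun _ : Fin N => μ).map
              (fun (v : Fin N → E) (j : Fin m) (i : Fin k) => v (b j i))) := by
          rw [integral_map hT.aemeasurable hG.aestronglyMeasurable]
      _ = ∫ y : Fin m → Fin k → E, ∏ j : Fin m, f (y j) := by rw [hmapT, ← hvol]
      _ = (∫ w, f w) ^ Fintype.card (Fin m) :=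
          MeasureTheory.integral_fintype_prod_eq_pow (ι := Fin m) f
      _ = If ^ m := by rw [Fintype.card_fin]; rfl
  -- positivity of If
  have hfint : Integrable f (Measure.pi fun _ : Fin k => μ) := by
    refine Integrable.mono' (integrable_const M') hf.aestronglyMeasurable
      (ae_of_all _ fun w => ?_)
    rw [Real.norm_eq_abs, abs_of_pos (hf0 w)]
    exact hfM' w
  have hIfpos : 0 < If := by
    have h1 : ∫ _w, ε' ∂(Measure.pi fun _ : Fin k => μ) ≤ If :=
      integral_mono (integrable_const _) hfint hε'f
    rw [integral_const] at h1
    simp only [measure_univ, ENNReal.toReal_one, probReal_univ, smul_eq_mul, one_mul] at h1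
    linarith
  -- put things together
  have hm0 : (0 : ℝ) < (m : ℝ) := by exact_mod_cast hm1
  have hkey' : (m : ℝ) * I ≤ (m : ℝ) * Real.log If + C := by
    rw [hLHS, hRHS] at hkey
    rwa [Real.log_pow] at hkey
  constructor
  · have hdiv : I - Real.log If ≤ C / (m : ℝ) := by
      rw [le_div_iff₀ hm0]
      nlinarith
    have : I ≤ Real.log If + C / (m : ℝ) := by linarith
    exact this
  · have hN0 : (0 : ℝ) < (N : ℝ) := by
      have : 0 < N := lt_of_lt_of_le hk0 hkN
      exact_mod_cast this
    have hNnat : N ≤ 2 * (k * m) := by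
      have h2 := Nat.div_add_mod N k
      have hmod : N % k < k := Nat.mod_lt N hk0
      have ht : k ≤ k * m := Nat.le_mul_of_pos_right k hm1
      have h2' : k * m + N % k = N := h2
      linarith
    have hNle : (N : ℝ) ≤ 2 * (k : ℝ) * (m : ℝ) := by
      have := (Nat.cast_le (α := ℝ)).mpr hNnat
      push_cast at this
      linarith
    have heq : 2 * (k : ℝ) / (N : ℝ) * C = (2 * k * C) / (N : ℝ) := by ring
    rw [heq, div_le_div_iff₀ hm0 hN0]
    nlinarith [mul_le_mul_of_nonneg_left hNle hC]
end

section
/- Let E be a measurable space, N ≥ 1, 1 ≤ k ≤ N, ν an exchangeable probability measure on E^N and μ a probability measure on E. Then the relative entropy of the k-dimensional marginal satisfies Ent((π_k)_*ν | μ^{⊗k}) ≤ ⌊N/k⌋^{−1} Ent(ν | μ^{⊗N}) ≤ (2k/N) Ent(ν | μ^{⊗N}), where π_k : E^N → E^k is the projection onto the first k coordinates and ⌊N/k⌋ is the integer part of N/k. -/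
open MeasureTheory ENNReal Classical

section Aux

variable {X : Type*} [MeasurableSpace X]

/-- Pointwise: `max (-t) 0 ≤ exp (-t)` and `1 - t ≤ exp (-t)`. -/
lemma aux_max_neg_le_exp (t : ℝ) : max (-t) 0 ≤ Real.exp (-t) := by
  rcases le_total (-t) 0 with h | h
  · simpa [max_eq_right h] using (Real.exp_pos (-t)).le
  · rw [max_eq_left h]
    linarith [Real.add_one_le_exp (-t)]

/-- If `∫ exp (-D) dν ≤ 1` for a probability measure `ν`, then the negative part of `D`
is integrable. -/
lemma gibbs_neg_int (ν : Measure X) [IsProbabilityMeasure ν] {D : X → ℝ}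
    (hm : Measurable D) (h1 : ∫⁻ x, ENNReal.ofReal (Real.exp (-D x)) ∂ν ≤ 1) :
    Integrable (fun x => max (-D x) 0) ν := by
  refine ⟨(hm.neg.max measurable_const).aestronglyMeasurable,
    (hasFiniteIntegral_iff_ofReal (Filter.Eventually.of_forall fun x => le_max_right _ _)).mpr ?_⟩
  refine lt_of_le_of_lt (le_trans (lintegral_mono fun x => ?_) h1) one_lt_top
  exact ENNReal.ofReal_le_ofReal (aux_max_neg_le_exp (D x))

/-- Gibbs-type inequality: if `∫ exp (-D) dν ≤ 1` and `D` is integrable, then `0 ≤ ∫ D dν`. -/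
lemma gibbs_nonneg (ν : Measure X) [IsProbabilityMeasure ν] {D : X → ℝ}
    (hm : Measurable D) (hD : Integrable D ν)
    (h1 : ∫⁻ x, ENNReal.ofReal (Real.exp (-D x)) ∂ν ≤ 1) :
    0 ≤ ∫ x, D x ∂ν := by
  have hexp_int : Integrable (fun x => Real.exp (-D x)) ν := by
    exact ⟨(hm.neg.exp).aestronglyMeasurable,
      (hasFiniteIntegral_iff_ofReal (Filter.Eventually.of_forall fun x => (Real.exp_pos _).le)).mpr
        (lt_of_le_of_lt h1 one_lt_top)⟩
  have hle : ∫ x, (1 - D x) ∂ν ≤ ∫ x, Real.exp (-D x) ∂ν := by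
    refine integral_mono ((integrable_const 1).sub hD) hexp_int fun x => ?_
    nlinarith [Real.add_one_le_exp (-D x)]
  have hexp_le : ∫ x, Real.exp (-D x) ∂ν ≤ 1 := by
    rw [integral_eq_lintegral_of_nonneg_ae (f := fun x => Real.exp (-D x))
      (Filter.Eventually.of_forall fun x => (Real.exp_pos _).le)
      (hm.neg.exp).aestronglyMeasurable]
    exact_mod_cast ENNReal.toReal_le_of_le_ofReal zero_le_one (by simpa using h1)
  have : ∫ x, (1 - D x) ∂ν = 1 - ∫ x, D x ∂ν := by
    rw [integral_sub (integrable_const 1) hD, integral_const]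
    simp
  linarith

/-- pushforward of withDensity along a measurable equiv. -/
lemma withDensity_map_equiv {Y : Type*} [MeasurableSpace Y] (ω : Measure X) (T : X ≃ᵐ Y)
    {f : X → ℝ≥0∞} (hf : Measurable f) :
    (ω.withDensity f).map T = (ω.map T).withDensity (f ∘ T.symm) := by
  ext s hs
  rw [Measure.map_apply T.measurable hs, withDensity_apply _ (T.measurable hs),
    withDensity_apply _ hs, setLIntegral_map hs (hf.comp T.symm.measurable) T.measurable]
  refine setLIntegral_congr_fun (T.measurable hs) (fun x _ => ?_)
  simp

/-- absolute continuity is preserved by maps. -/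
lemma ac_map {Y : Type*} [MeasurableSpace Y] {μ ν : Measure X} (h : μ ≪ ν) {f : X → Y}
    (hf : Measurable f) : μ.map f ≪ ν.map f := by
  refine Measure.AbsolutelyContinuous.mk fun s hs h0 => ?_
  rw [Measure.map_apply hf hs] at h0 ⊢
  exact h h0

end Aux

lemma real_mul_neg_log_le (t : ℝ) (ht : 0 ≤ t) : t * max (-Real.log t) 0 ≤ Real.exp (-1) := by
  rcases le_or_gt 1 t with h | h
  · rw [max_eq_right (by simpa using Real.log_nonneg h), mul_zero]
    exact (Real.exp_pos _).le
  rcases eq_or_lt_of_le ht with h0 | h0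
  · rw [← h0, zero_mul]
    exact (Real.exp_pos _).le
  · -- 0 < t < 1
    have hlog : Real.log t ≤ 0 := Real.log_nonpos ht h.le
    rw [max_eq_left (by linarith)]
    have hinv : -Real.log t = Real.log t⁻¹ := by rw [Real.log_inv]
    have hle : Real.log t⁻¹ ≤ t⁻¹ / Real.exp 1 := by
      have h2 := Real.log_le_sub_one_of_pos (x := t⁻¹ / Real.exp 1) (by positivity)
      rw [Real.log_div (by positivity) (Real.exp_ne_zero 1), Real.log_exp] at h2
      linarith
    rw [hinv]
    calc t * Real.log t⁻¹ ≤ t * (t⁻¹ / Real.exp 1) := by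
          exact mul_le_mul_of_nonneg_left hle ht
      _ = (t * t⁻¹) / Real.exp 1 := by ring
      _ = Real.exp (-1) := by
          rw [mul_inv_cancel₀ h0.ne', Real.exp_neg]
          simp [one_div]

/-- The negative part of the log-likelihood ratio is always integrable
(for probability measures with `ν ≪ μ`). -/
lemma integrable_neg_part_llr {X : Type*} [MeasurableSpace X] (ν' μ' : Measure X)
    [IsProbabilityMeasure ν'] [IsProbabilityMeasure μ'] (h : ν' ≪ μ') :
    Integrable (fun y => max (-llr ν' μ' y) 0) ν' := by
  have hfin : ∫⁻ a, ENNReal.ofReal (max (-llr ν' μ' a) 0) ∂ν' < ⊤ := ?_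
  · exact ⟨((measurable_llr ν' μ').neg.max measurable_const).aestronglyMeasurable,
      (hasFiniteIntegral_iff_ofReal
        (Filter.Eventually.of_forall fun x => le_max_right _ _)).mpr (by exact hfin)⟩
  have hg : Measurable (ν'.rnDeriv μ') := Measure.measurable_rnDeriv _ _
  have key := lintegral_withDensity_eq_lintegral_mul (f := ν'.rnDeriv μ')
    (g := fun y => ENNReal.ofReal (max (-llr ν' μ' y) 0)) μ' hg
    (((measurable_llr ν' μ').neg.max measurable_const).ennreal_ofReal)
  rw [Measure.withDensity_rnDeriv_eq ν' μ' h] at key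
  rw [key]
  have hbound : ∀ y, (ν'.rnDeriv μ' y * ENNReal.ofReal (max (-llr ν' μ' y) 0))
      ≤ ENNReal.ofReal (Real.exp (-1)) := by
    intro y
    rcases eq_or_ne (ν'.rnDeriv μ' y) ∞ with htop | htop
    · simp [llr, htop]
    · set t := (ν'.rnDeriv μ' y).toReal with hts
      have ht : 0 ≤ t := ENNReal.toReal_nonneg
      calc ν'.rnDeriv μ' y * ENNReal.ofReal (max (-llr ν' μ' y) 0)
          = ENNReal.ofReal (t * max (-Real.log t) 0) := by
            rw [ENNReal.ofReal_mul ht, ENNReal.ofReal_toReal htop]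
            rfl
        _ ≤ ENNReal.ofReal (Real.exp (-1)) :=
            ENNReal.ofReal_le_ofReal (real_mul_neg_log_le t ht)
  calc ∫⁻ y, (ν'.rnDeriv μ' y * ENNReal.ofReal (max (-llr ν' μ' y) 0)) ∂μ'
      ≤ ∫⁻ _, ENNReal.ofReal (Real.exp (-1)) ∂μ' := lintegral_mono hbound
    _ = ENNReal.ofReal (Real.exp (-1)) := by simp
    _ < ∞ := ofReal_lt_top

/-- Gibbs inequality: the relative entropy integral is nonnegative. -/
lemma integral_llr_nonneg {X : Type*} [MeasurableSpace X] (ν ω : Measure X)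
    [IsProbabilityMeasure ν] [IsProbabilityMeasure ω] (hAC : ν ≪ ω)
    (hInt : Integrable (llr ν ω) ν) : 0 ≤ ∫ x, llr ν ω x ∂ν := by
  refine gibbs_nonneg ν (measurable_llr ν ω) hInt ?_
  have hF : Measurable (ν.rnDeriv ω) := Measure.measurable_rnDeriv _ _
  have hae : ∀ᵐ x ∂ν, ENNReal.ofReal (Real.exp (-llr ν ω x)) = (ν.rnDeriv ω x)⁻¹ := by
    filter_upwards [Measure.rnDeriv_pos hAC, hAC.ae_le (Measure.rnDeriv_lt_top ν ω)]
      with x hpos hlt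
    rw [llr, ← Real.log_inv, Real.exp_log (by
      simp only [inv_pos]
      exact ENNReal.toReal_pos hpos.ne' hlt.ne), ← ENNReal.toReal_inv,
      ENNReal.ofReal_toReal (by simp [hpos.ne'])]
  rw [lintegral_congr_ae hae]
  have key := lintegral_withDensity_eq_lintegral_mul ω hF hF.inv
  rw [Measure.withDensity_rnDeriv_eq ν ω hAC] at key
  simp only [Pi.inv_apply, Pi.mul_apply] at key
  rw [key]
  have : ∀ x, ν.rnDeriv ω x * (ν.rnDeriv ω x)⁻¹ ≤ 1 := by
    intro x
    rcases eq_or_ne (ν.rnDeriv ω x) 0 with h0 | h0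
    · simp [h0]
    rcases eq_or_ne (ν.rnDeriv ω x) ∞ with ht | ht
    · simp [ht]
    · rw [ENNReal.mul_inv_cancel h0 ht]
  calc ∫⁻ x, ν.rnDeriv ω x * (ν.rnDeriv ω x)⁻¹ ∂ω ≤ ∫⁻ _, 1 ∂ω := lintegral_mono this
    _ = 1 := by simp

lemma core {A B : Type*} [MeasurableSpace A] [MeasurableSpace B]
    (μ1 : Measure A) (μ2 : Measure B) [IsProbabilityMeasure μ1] [IsProbabilityMeasure μ2]
    (ν : Measure (A × B)) [IsProbabilityMeasure ν]
    (hAC : ν ≪ μ1.prod μ2)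
    (hInt : Integrable (llr ν (μ1.prod μ2)) ν) :
    (ν.map Prod.fst ≪ μ1) ∧ (ν.map Prod.snd ≪ μ2) ∧
    Integrable (llr (ν.map Prod.fst) μ1) (ν.map Prod.fst) ∧
    Integrable (llr (ν.map Prod.snd) μ2) (ν.map Prod.snd) ∧
    (∫ y, llr (ν.map Prod.fst) μ1 y ∂(ν.map Prod.fst))
      + ∫ z, llr (ν.map Prod.snd) μ2 z ∂(ν.map Prod.snd)
      ≤ ∫ x, llr ν (μ1.prod μ2) x ∂ν := by
  set ω := μ1.prod μ2 with hω
  set ν1 := ν.map Prod.fst with hν1def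
  set ν2 := ν.map Prod.snd with hν2def
  have hprob1 : IsProbabilityMeasure ν1 := Measure.isProbabilityMeasure_map measurable_fst.aemeasurable
  have hprob2 : IsProbabilityMeasure ν2 := Measure.isProbabilityMeasure_map measurable_snd.aemeasurable
  have hmapfst : ω.map Prod.fst = μ1 := by
    rw [hω, Measure.map_fst_prod]; simp
  have hmapsnd : ω.map Prod.snd = μ2 := by
    rw [hω, Measure.map_snd_prod]; simp
  have hν1AC : ν1 ≪ μ1 := hmapfst ▸ ac_map hAC measurable_fst
  have hν2AC : ν2 ≪ μ2 := hmapsnd ▸ ac_map hAC measurable_snd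
  set F := ν.rnDeriv ω with hFdef
  set g1 := ν1.rnDeriv μ1 with hg1def
  set g2 := ν2.rnDeriv μ2 with hg2def
  have hF : Measurable F := Measure.measurable_rnDeriv _ _
  have hg1 : Measurable g1 := Measure.measurable_rnDeriv _ _
  have hg2 : Measurable g2 := Measure.measurable_rnDeriv _ _
  set D := fun x : A × B => llr ν ω x - llr ν1 μ1 x.1 - llr ν2 μ2 x.2 with hDdef
  have hDmeas : Measurable D :=
    (((measurable_llr _ _).sub ((measurable_llr _ _).comp measurable_fst)).sub
      ((measurable_llr _ _).comp measurable_snd))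
  -- a.e. positivity/finiteness
  have hFpos : ∀ᵐ x ∂ν, 0 < F x := Measure.rnDeriv_pos hAC
  have hFlt : ∀ᵐ x ∂ν, F x < ∞ := hAC.ae_le (Measure.rnDeriv_lt_top ν ω)
  have hg1pos' : ∀ᵐ x ∂ν, 0 < g1 x.1 :=
    (ae_map_iff measurable_fst.aemeasurable
      (measurableSet_lt measurable_const hg1)).mp (Measure.rnDeriv_pos hν1AC)
  have hg1lt' : ∀ᵐ x ∂ν, g1 x.1 < ∞ :=
    (ae_map_iff measurable_fst.aemeasurable
      (measurableSet_lt hg1 measurable_const)).mp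
      (hν1AC.ae_le (Measure.rnDeriv_lt_top ν1 μ1))
  have hg2pos' : ∀ᵐ x ∂ν, 0 < g2 x.2 :=
    (ae_map_iff measurable_snd.aemeasurable
      (measurableSet_lt measurable_const hg2)).mp (Measure.rnDeriv_pos hν2AC)
  have hg2lt' : ∀ᵐ x ∂ν, g2 x.2 < ∞ :=
    (ae_map_iff measurable_snd.aemeasurable
      (measurableSet_lt hg2 measurable_const)).mp
      (hν2AC.ae_le (Measure.rnDeriv_lt_top ν2 μ2))
  -- the key bound ∫ exp(-D) dν ≤ 1
  have K : ∫⁻ x, ENNReal.ofReal (Real.exp (-D x)) ∂ν ≤ 1 := by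
    have heq : ∀ᵐ x ∂ν,
        ENNReal.ofReal (Real.exp (-D x)) = g1 x.1 * g2 x.2 * (F x)⁻¹ := by
      filter_upwards [hFpos, hFlt, hg1pos', hg1lt', hg2pos', hg2lt']
        with x h1 h2 h3 h4 h5 h6
      have ht1 : (0:ℝ) < (g1 x.1).toReal := ENNReal.toReal_pos h3.ne' h4.ne
      have ht2 : (0:ℝ) < (g2 x.2).toReal := ENNReal.toReal_pos h5.ne' h6.ne
      have ht3 : (0:ℝ) < (F x).toReal := ENNReal.toReal_pos h1.ne' h2.ne
      have hnd : -D x = Real.log (g1 x.1).toReal + Real.log (g2 x.2).toReal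
          + Real.log ((F x).toReal)⁻¹ := by
        simp only [hDdef, llr, Real.log_inv]
        ring
      rw [hnd, Real.exp_add, Real.exp_add, Real.exp_log ht1, Real.exp_log ht2,
        Real.exp_log (by positivity)]
      rw [ENNReal.ofReal_mul (by positivity), ENNReal.ofReal_mul ht1.le,
        ENNReal.ofReal_toReal h4.ne, ENNReal.ofReal_toReal h6.ne,
        ← ENNReal.toReal_inv, ENNReal.ofReal_toReal (by simp [h1.ne'])]
    rw [lintegral_congr_ae heq]
    have key := lintegral_withDensity_eq_lintegral_mul (f := F)
      (g := fun x => g1 x.1 * g2 x.2 * (F x)⁻¹) ω hF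
      (((hg1.comp measurable_fst).mul (hg2.comp measurable_snd)).mul hF.inv)
    rw [hFdef, Measure.withDensity_rnDeriv_eq ν ω hAC] at key
    rw [key]
    have hb : ∀ x : A × B, (F * fun x => g1 x.1 * g2 x.2 * (F x)⁻¹) x
        ≤ g1 x.1 * g2 x.2 := by
      intro x
      simp only [Pi.mul_apply]
      rcases eq_or_ne (F x) 0 with h | h
      · simp [h]
      rcases eq_or_ne (F x) ∞ with h' | h'
      · simp [h']
      · rw [mul_comm (F x), mul_assoc, ENNReal.inv_mul_cancel h h', mul_one]
    calc ∫⁻ x, (F * fun x => g1 x.1 * g2 x.2 * (F x)⁻¹) x ∂ω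
        ≤ ∫⁻ x, g1 x.1 * g2 x.2 ∂ω := lintegral_mono hb
      _ = (∫⁻ y, g1 y ∂μ1) * ∫⁻ z, g2 z ∂μ2 :=
          lintegral_prod_mul hg1.aemeasurable hg2.aemeasurable
      _ = 1 := by
          rw [hg1def, hg2def, Measure.lintegral_rnDeriv hν1AC,
            Measure.lintegral_rnDeriv hν2AC]
          simp
  have hDneg : Integrable (fun x => max (-D x) 0) ν := gibbs_neg_int ν hDmeas K
  -- negative parts of marginal llrs
  have hn1 : Integrable (fun y => max (-llr ν1 μ1 y) 0) ν1 := integrable_neg_part_llr _ _ hν1AC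
  have hn2 : Integrable (fun z => max (-llr ν2 μ2 z) 0) ν2 := integrable_neg_part_llr _ _ hν2AC
  have hn1' : Integrable (fun x : A × B => max (-llr ν1 μ1 x.1) 0) ν := by
    have := (integrable_map_measure hn1.aestronglyMeasurable
      measurable_fst.aemeasurable).mp (by rw [← hν1def] at *; exact hn1)
    exact this
  have hn2' : Integrable (fun x : A × B => max (-llr ν2 μ2 x.2) 0) ν := by
    have := (integrable_map_measure hn2.aestronglyMeasurable
      measurable_snd.aemeasurable).mp (by rw [← hν2def] at *; exact hn2)
    exact this
  -- positive parts
  have habs : Integrable (fun x => |llr ν ω x|) ν := hInt.abs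
  have hbound : Integrable
      (fun x => |llr ν ω x| + max (-D x) 0 + (max (-llr ν1 μ1 x.1) 0 + max (-llr ν2 μ2 x.2) 0)) ν :=
    (habs.add hDneg).add (hn1'.add hn2')
  have hkey_ineq : ∀ (a b c d : ℝ), d = c - a - b →
      max a 0 ≤ |c| + max (-d) 0 + (max (-a) 0 + max (-b) 0) := by
    intro a b c d hd
    rcases le_total a 0 with h | h
    · rw [max_eq_right h]
      have := abs_nonneg c
      have := le_max_right (-d) 0
      have := le_max_right (-a) 0
      have := le_max_right (-b) 0
      linarith
    · rw [max_eq_left h]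
      have h1 := le_abs_self c
      have h2 := le_max_left (-d) 0
      have h3 := le_max_left (-b) 0
      have h4 := le_max_right (-a) 0
      linarith
  have hp1 : Integrable (fun x : A × B => max (llr ν1 μ1 x.1) 0) ν := by
    refine hbound.mono' (((measurable_llr ν1 μ1).comp measurable_fst).max
      measurable_const).aestronglyMeasurable (Filter.Eventually.of_forall fun x => ?_)
    rw [Real.norm_eq_abs, abs_of_nonneg (le_max_right _ _)]
    exact hkey_ineq _ (llr ν2 μ2 x.2) _ (D x) rfl
  have hp2 : Integrable (fun x : A × B => max (llr ν2 μ2 x.2) 0) ν := by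
    refine hbound.mono' (((measurable_llr ν2 μ2).comp measurable_snd).max
      measurable_const).aestronglyMeasurable (Filter.Eventually.of_forall fun x => ?_)
    rw [Real.norm_eq_abs, abs_of_nonneg (le_max_right _ _)]
    have h5 := hkey_ineq (llr ν2 μ2 x.2) (llr ν1 μ1 x.1) (llr ν ω x) (D x) (by simp [hDdef]; ring)
    linarith [h5]
  have hllr1' : Integrable (fun x : A × B => llr ν1 μ1 x.1) ν := by
    have : (fun x : A × B => llr ν1 μ1 x.1)
        = fun x => max (llr ν1 μ1 x.1) 0 - max (-llr ν1 μ1 x.1) 0 :=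
      funext fun x => (max_zero_sub_eq_self _).symm
    rw [this]
    exact hp1.sub hn1'
  have hllr2' : Integrable (fun x : A × B => llr ν2 μ2 x.2) ν := by
    have : (fun x : A × B => llr ν2 μ2 x.2)
        = fun x => max (llr ν2 μ2 x.2) 0 - max (-llr ν2 μ2 x.2) 0 :=
      funext fun x => (max_zero_sub_eq_self _).symm
    rw [this]
    exact hp2.sub hn2'
  have hllr1 : Integrable (llr ν1 μ1) ν1 := by
    rw [hν1def]
    exact (integrable_map_measure (stronglyMeasurable_llr _ _).aestronglyMeasurable
      measurable_fst.aemeasurable).mpr (by rw [← hν1def]; exact hllr1')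
  have hllr2 : Integrable (llr ν2 μ2) ν2 := by
    rw [hν2def]
    exact (integrable_map_measure (stronglyMeasurable_llr _ _).aestronglyMeasurable
      measurable_snd.aemeasurable).mpr (by rw [← hν2def]; exact hllr2')
  have hDint : Integrable D ν := (hInt.sub hllr1').sub hllr2'
  have hge : 0 ≤ ∫ x, D x ∂ν := gibbs_nonneg ν hDmeas hDint K
  have hsplit : ∫ x, D x ∂ν
      = ∫ x, llr ν ω x ∂ν - ∫ x, llr ν1 μ1 x.1 ∂ν - ∫ x, llr ν2 μ2 x.2 ∂ν := by
    have e2 : ∫ x, (llr ν ω x - llr ν1 μ1 x.1) ∂ν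
        = ∫ x, llr ν ω x ∂ν - ∫ x, llr ν1 μ1 x.1 ∂ν := integral_sub hInt hllr1'
    have e1 : ∫ x, (llr ν ω x - llr ν1 μ1 x.1 - llr ν2 μ2 x.2) ∂ν
        = ∫ x, (llr ν ω x - llr ν1 μ1 x.1) ∂ν - ∫ x, llr ν2 μ2 x.2 ∂ν :=
      integral_sub (hInt.sub hllr1') hllr2'
    simp only [hDdef]
    rw [e1, e2]
  have hm1 : ∫ y, llr ν1 μ1 y ∂ν1 = ∫ x, llr ν1 μ1 x.1 ∂ν := by
    rw [hν1def]
    exact integral_map measurable_fst.aemeasurable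
      (stronglyMeasurable_llr _ _).aestronglyMeasurable
  have hm2 : ∫ z, llr ν2 μ2 z ∂ν2 = ∫ x, llr ν2 μ2 x.2 ∂ν := by
    rw [hν2def]
    exact integral_map measurable_snd.aemeasurable
      (stronglyMeasurable_llr _ _).aestronglyMeasurable
  exact ⟨hν1AC, hν2AC, hllr1, hllr2, by rw [hm1, hm2]; linarith⟩

/-- Two injections of `Fin j` into `Fin n` differ by a permutation. -/
lemma exists_perm_comp {j n : ℕ} (ϕ ψ : Fin j → Fin n)
    (hϕ : Function.Injective ϕ) (hψ : Function.Injective ψ) :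
    ∃ σ : Equiv.Perm (Fin n), ∀ i, σ (ϕ i) = ψ i := by
  classical
  have hcard : Fintype.card ↥(Set.range ϕ)ᶜ = Fintype.card ↥(Set.range ψ)ᶜ := by
    rw [Fintype.card_compl_set, Fintype.card_compl_set,
      Set.card_range_of_injective hϕ, Set.card_range_of_injective hψ]
  let e1 : ↥(Set.range ϕ) ≃ ↥(Set.range ψ) :=
    (Equiv.ofInjective ϕ hϕ).symm.trans (Equiv.ofInjective ψ hψ)
  let e2 : ↥(Set.range ϕ)ᶜ ≃ ↥(Set.range ψ)ᶜ := Fintype.equivOfCardEq hcard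
  refine ⟨(Equiv.Set.sumCompl (Set.range ϕ)).symm.trans ((e1.sumCongr e2).trans
    (Equiv.Set.sumCompl (Set.range ψ))), fun i => ?_⟩
  have hmem : ϕ i ∈ Set.range ϕ := ⟨i, rfl⟩
  have h1 : (Equiv.Set.sumCompl (Set.range ϕ)).symm (ϕ i) = Sum.inl (⟨ϕ i, hmem⟩ : ↥(Set.range ϕ)) :=
    Equiv.Set.sumCompl_symm_apply_of_mem hmem
  simp only [Equiv.trans_apply, h1, Equiv.sumCongr_apply, Sum.map_inl,
    Equiv.Set.sumCompl_apply_inl]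
  have : e1 ⟨ϕ i, hmem⟩ = ⟨ψ i, ⟨i, rfl⟩⟩ := by
    simp only [e1, Equiv.trans_apply]
    rw [show (⟨ϕ i, hmem⟩ : ↥(Set.range ϕ)) = Equiv.ofInjective ϕ hϕ i from rfl]
    simp
  rw [this]

lemma measurable_comp_map {E : Type*} [MeasurableSpace E] {j n : ℕ} (ϕ : Fin j → Fin n) :
    Measurable fun (v : Fin n → E) (i : Fin j) => v (ϕ i) :=
  measurable_pi_lambda _ fun i => measurable_pi_apply _

/-- For an exchangeable measure, pushforwards along any two injections agree. -/
lemma exch_map_inj {E : Type*} [MeasurableSpace E] {n j : ℕ} (ν : Measure (Fin n → E))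
    (hexch : ∀ σ : Equiv.Perm (Fin n), ν.map (fun v i => v (σ i)) = ν)
    {ϕ ψ : Fin j → Fin n} (hϕ : Function.Injective ϕ) (hψ : Function.Injective ψ) :
    ν.map (fun v i => v (ϕ i)) = ν.map (fun v i => v (ψ i)) := by
  obtain ⟨σ, hσ⟩ := exists_perm_comp ϕ ψ hϕ hψ
  conv_lhs => rw [← hexch σ]
  rw [Measure.map_map (measurable_comp_map ϕ) (measurable_comp_map (fun i => σ i))]
  congr 1
  funext v
  funext i
  simp only [Function.comp_apply]
  rw [hσ i]

section Step

variable {E : Type*} [MeasurableSpace E]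

lemma step (μ : Measure E) [IsProbabilityMeasure μ]
    {k n : ℕ} (hkn : k ≤ n)
    (ν : Measure (Fin n → E)) [IsProbabilityMeasure ν]
    (hAC : ν ≪ Measure.pi (fun _ : Fin n => μ))
    (hInt : Integrable (llr ν (Measure.pi fun _ : Fin n => μ)) ν) :
    (ν.map (fun v (i : Fin k) => v (Fin.castLE hkn i)) ≪ Measure.pi (fun _ : Fin k => μ)) ∧
    Integrable
      (llr (ν.map (fun v (i : Fin k) => v (Fin.castLE hkn i))) (Measure.pi fun _ : Fin k => μ))
      (ν.map (fun v (i : Fin k) => v (Fin.castLE hkn i))) ∧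
    (ν.map (fun v (j : Fin (n - k)) => v (Fin.cast (Nat.add_sub_cancel' hkn) (Fin.natAdd k j)))
        ≪ Measure.pi (fun _ : Fin (n - k) => μ)) ∧
    Integrable
      (llr (ν.map (fun v (j : Fin (n - k)) => v (Fin.cast (Nat.add_sub_cancel' hkn) (Fin.natAdd k j))))
        (Measure.pi fun _ : Fin (n - k) => μ))
      (ν.map (fun v (j : Fin (n - k)) => v (Fin.cast (Nat.add_sub_cancel' hkn) (Fin.natAdd k j)))) ∧
    (∫ y, llr (ν.map (fun v (i : Fin k) => v (Fin.castLE hkn i))) (Measure.pi fun _ : Fin k => μ) y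
        ∂(ν.map (fun v (i : Fin k) => v (Fin.castLE hkn i))))
      + (∫ z, llr (ν.map (fun v (j : Fin (n - k)) => v (Fin.cast (Nat.add_sub_cancel' hkn) (Fin.natAdd k j))))
          (Measure.pi fun _ : Fin (n - k) => μ) z
          ∂(ν.map (fun v (j : Fin (n - k)) => v (Fin.cast (Nat.add_sub_cancel' hkn) (Fin.natAdd k j)))))
      ≤ ∫ x, llr ν (Measure.pi fun _ : Fin n => μ) x ∂ν := by
  set ω := Measure.pi (fun _ : Fin n => μ) with hωdef
  set μ1 := Measure.pi (fun _ : Fin k => μ) with hμ1def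
  set μ2 := Measure.pi (fun _ : Fin (n - k) => μ) with hμ2def
  set π1 := fun (v : Fin n → E) (i : Fin k) => v (Fin.castLE hkn i) with hπ1def
  set π2 := fun (v : Fin n → E) (j : Fin (n - k)) =>
    v (Fin.cast (Nat.add_sub_cancel' hkn) (Fin.natAdd k j)) with hπ2def
  set e : Fin k ⊕ Fin (n - k) ≃ Fin n :=
    finSumFinEquiv.trans (finCongr (Nat.add_sub_cancel' hkn)) with hedef
  set T : (Fin n → E) ≃ᵐ (Fin k → E) × (Fin (n - k) → E) :=
    ((MeasurableEquiv.piCongrLeft (fun _ : Fin n => E) e).symm).trans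
      (MeasurableEquiv.sumPiEquivProdPi fun _ => E) with hTdef
  have mp1 : MeasurePreserving (MeasurableEquiv.piCongrLeft (fun _ : Fin n => E) e).symm
      ω (Measure.pi fun _ : Fin k ⊕ Fin (n - k) => μ) :=
    (measurePreserving_piCongrLeft (fun _ : Fin n => μ) e).symm _
  have mp2 : MeasurePreserving (MeasurableEquiv.sumPiEquivProdPi
      (fun _ : Fin k ⊕ Fin (n - k) => E))
      (Measure.pi fun _ : Fin k ⊕ Fin (n - k) => μ) (μ1.prod μ2) :=
    measurePreserving_sumPiEquivProdPi (fun _ => μ)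
  have mpT : MeasurePreserving T ω (μ1.prod μ2) := by
    have h := mp2.comp mp1
    exact ⟨T.measurable, by rw [hTdef, MeasurableEquiv.coe_trans]; exact h.map_eq⟩
  -- pointwise description of T
  have hT1 : ∀ x : Fin n → E, (T x).1 = π1 x := by
    intro x
    funext i
    rfl
  have hT2 : ∀ x : Fin n → E, (T x).2 = π2 x := by
    intro x
    funext j
    rfl
  set νt := ν.map T with hνtdef
  have hprobt : IsProbabilityMeasure νt := Measure.isProbabilityMeasure_map T.measurable.aemeasurable
  have hACt : νt ≪ μ1.prod μ2 := mpT.map_eq ▸ ac_map hAC T.measurable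
  set F := ν.rnDeriv ω with hFdef
  have hF : Measurable F := Measure.measurable_rnDeriv _ _
  have hwd : νt = (μ1.prod μ2).withDensity (F ∘ T.symm) := by
    rw [hνtdef]
    conv_lhs => rw [← Measure.withDensity_rnDeriv_eq ν ω hAC]
    rw [withDensity_map_equiv ω T hF, mpT.map_eq]
  have hrd : νt.rnDeriv (μ1.prod μ2) =ᵐ[μ1.prod μ2] F ∘ T.symm := by
    rw [hwd]
    exact Measure.rnDeriv_withDensity (μ1.prod μ2) (hF.comp T.symm.measurable)
  have hllr_ae : llr νt (μ1.prod μ2) =ᵐ[νt] fun z => Real.log ((F (T.symm z)).toReal) := by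
    filter_upwards [hACt.ae_le hrd] with z hz
    rw [llr, hz]
    rfl
  have hcomp : (fun z => Real.log ((F (T.symm z)).toReal)) ∘ T = llr ν ω := by
    funext x
    simp [llr, Function.comp, hFdef]
  have hIntt : Integrable (llr νt (μ1.prod μ2)) νt := by
    refine Integrable.congr ?_ hllr_ae.symm
    rw [hνtdef]
    refine (integrable_map_measure ?_ T.measurable.aemeasurable).mpr ?_
    · exact ((Real.measurable_log.comp ((Measure.measurable_rnDeriv _ _).comp
        T.symm.measurable).ennreal_toReal)).aestronglyMeasurable
    · rw [hcomp]; exact hInt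
  have hIeq : ∫ z, llr νt (μ1.prod μ2) z ∂νt = ∫ x, llr ν ω x ∂ν := by
    rw [integral_congr_ae hllr_ae, hνtdef,
      integral_map T.measurable.aemeasurable]
    · rw [show (fun x => Real.log ((F (T.symm (T x))).toReal)) = llr ν ω from
        funext fun x => by simp [llr, hFdef]]
    · exact ((Real.measurable_log.comp ((Measure.measurable_rnDeriv _ _).comp
        T.symm.measurable).ennreal_toReal)).aestronglyMeasurable
  obtain ⟨c1, c2, c3, c4, c5⟩ := core μ1 μ2 νt hACt hIntt
  have hmap1 : νt.map Prod.fst = ν.map π1 := by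
    rw [hνtdef, Measure.map_map measurable_fst T.measurable]
    rfl
  have hmap2 : νt.map Prod.snd = ν.map π2 := by
    rw [hνtdef, Measure.map_map measurable_snd T.measurable]
    rfl
  rw [hmap1] at c1 c3
  rw [hmap2] at c2 c4
  rw [hmap1, hmap2, hIeq] at c5
  exact ⟨c1, c3, c2, c4, c5⟩

end Step

lemma main_ind {E : Type*} [MeasurableSpace E] (μ : Measure E) [IsProbabilityMeasure μ]
    {k : ℕ} (hk : 1 ≤ k) (m : ℕ) :
    ∀ n : ℕ, ∀ (hkn : k ≤ n), m * k ≤ n →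
      ∀ (ν : Measure (Fin n → E)), IsProbabilityMeasure ν →
      (∀ σ : Equiv.Perm (Fin n), ν.map (fun v i => v (σ i)) = ν) →
      ν ≪ Measure.pi (fun _ : Fin n => μ) →
      Integrable (llr ν (Measure.pi fun _ : Fin n => μ)) ν →
      (ν.map (fun v (i : Fin k) => v (Fin.castLE hkn i)) ≪ Measure.pi (fun _ : Fin k => μ)) ∧
      Integrable
        (llr (ν.map (fun v (i : Fin k) => v (Fin.castLE hkn i))) (Measure.pi fun _ : Fin k => μ))
        (ν.map (fun v (i : Fin k) => v (Fin.castLE hkn i))) ∧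
      (m : ℝ) * ∫ y, llr (ν.map (fun v (i : Fin k) => v (Fin.castLE hkn i)))
            (Measure.pi fun _ : Fin k => μ) y
          ∂(ν.map (fun v (i : Fin k) => v (Fin.castLE hkn i)))
        ≤ ∫ x, llr ν (Measure.pi fun _ : Fin n => μ) x ∂ν := by
  induction m with
  | zero =>
    intro n hkn _ ν hprob hexch hAC hInt
    haveI := hprob
    obtain ⟨s1, s2, _, _, _⟩ := step μ hkn ν hAC hInt
    refine ⟨s1, s2, ?_⟩
    simpa using integral_llr_nonneg ν _ hAC hInt
  | succ m ih =>
    intro n hkn hmn ν hprob hexch hAC hInt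
    haveI := hprob
    obtain ⟨s1, s2, s3, s4, s5⟩ := step μ hkn ν hAC hInt
    refine ⟨s1, s2, ?_⟩
    set ωk := Measure.pi (fun _ : Fin k => μ) with hωk
    set emb2 := fun j : Fin (n - k) => Fin.cast (Nat.add_sub_cancel' hkn) (Fin.natAdd k j)
      with hemb2
    set ν2 := ν.map (fun v (j : Fin (n - k)) => v (emb2 j)) with hν2def
    haveI hprob2 : IsProbabilityMeasure ν2 :=
      Measure.isProbabilityMeasure_map (measurable_comp_map emb2).aemeasurable
    have hemb2_inj : Function.Injective emb2 := by
      intro a b hab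
      have h := congrArg Fin.val hab
      simp only [hemb2, Fin.coe_cast, Fin.coe_natAdd] at h
      exact Fin.ext (by omega)
    -- ν2 is exchangeable
    have hexch2 : ∀ τ : Equiv.Perm (Fin (n - k)), ν2.map (fun w j => w (τ j)) = ν2 := by
      intro τ
      rw [hν2def, Measure.map_map (measurable_comp_map (fun j => τ j))
        (measurable_comp_map emb2)]
      have : ((fun (w : Fin (n - k) → E) j => w (τ j)) ∘ fun (v : Fin n → E) j => v (emb2 j))
          = fun (v : Fin n → E) j => v (emb2 (τ j)) := rfl
      rw [this]
      exact exch_map_inj ν hexch (hemb2_inj.comp τ.injective) hemb2_inj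
    have hJ : (m : ℝ) * ∫ y, llr (ν.map (fun v (i : Fin k) => v (Fin.castLE hkn i))) ωk y
        ∂(ν.map (fun v (i : Fin k) => v (Fin.castLE hkn i)))
        ≤ ∫ z, llr ν2 (Measure.pi fun _ : Fin (n - k) => μ) z ∂ν2 := by
      rcases Nat.eq_zero_or_pos m with hm0 | hmpos
      · subst hm0
        simpa using integral_llr_nonneg ν2 _ s3 s4
      · have hsm : (m + 1) * k = m * k + k := by ring
        have hkm : k ≤ m * k := Nat.le_mul_of_pos_left k hmpos
        have hkn' : k ≤ n - k := by omega
        have hmn' : m * k ≤ n - k := by omega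
        obtain ⟨_, _, hle⟩ := ih (n - k) hkn' hmn' ν2 hprob2 hexch2 s3 s4
        have hmarg : ν2.map (fun w (i : Fin k) => w (Fin.castLE hkn' i))
            = ν.map (fun v (i : Fin k) => v (Fin.castLE hkn i)) := by
          rw [hν2def, Measure.map_map (measurable_comp_map (Fin.castLE hkn'))
            (measurable_comp_map emb2)]
          have : ((fun (w : Fin (n - k) → E) (i : Fin k) => w (Fin.castLE hkn' i))
              ∘ fun (v : Fin n → E) j => v (emb2 j)) = fun (v : Fin n → E) i => v (emb2 (Fin.castLE hkn' i)) := rfl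
          rw [this]
          exact exch_map_inj ν hexch (hemb2_inj.comp (Fin.castLE_injective hkn'))
            (Fin.castLE_injective hkn)
        rw [hmarg] at hle
        exact hle
    have hcast : ((m + 1 : ℕ) : ℝ) = (m : ℝ) + 1 := by push_cast; ring
    rw [hcast, add_mul, one_mul]
    linarith

/-- For `1 ≤ k ≤ N`, an exchangeable probability measure `ν` on `E^N` and a probability
measure `μ` on `E`, the `k`-dimensional marginal of `ν` satisfies
`Ent((π_k)_*ν | μ^{⊗k}) ≤ ⌊N/k⌋⁻¹ · Ent(ν | μ^{⊗N}) ≤ (2k/N) · Ent(ν | μ^{⊗N})`. -/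
theorem ent_marginal_le_of_exchangeable
    {E : Type*} [MeasurableSpace E] {N k : ℕ} (hk : 1 ≤ k) (hkN : k ≤ N)
    (ν : Measure (Fin N → E)) [IsProbabilityMeasure ν]
    (hνexch : ∀ σ : Equiv.Perm (Fin N), ν.map (fun v i => v (σ i)) = ν)
    (μ : Measure E) [IsProbabilityMeasure μ] :
    Ent (ν.map (fun v (i : Fin k) => v (Fin.castLE hkN i))) (Measure.pi fun _ : Fin k => μ)
        ≤ ((N / k : ℕ) : ℝ≥0∞)⁻¹ * Ent ν (Measure.pi fun _ : Fin N => μ)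
      ∧ ((N / k : ℕ) : ℝ≥0∞)⁻¹ * Ent ν (Measure.pi fun _ : Fin N => μ)
        ≤ (2 * k / N : ℝ≥0∞) * Ent ν (Measure.pi fun _ : Fin N => μ) := by
  set ωN := Measure.pi (fun _ : Fin N => μ) with hωN
  set ωk := Measure.pi (fun _ : Fin k => μ) with hωk
  set m := N / k with hmdef
  have hm1 : 1 ≤ m := (Nat.one_le_div_iff (by omega)).mpr hkN
  have hm0 : (m : ℝ≥0∞) ≠ 0 := Nat.cast_ne_zero.mpr (by omega)
  have hmtop : (m : ℝ≥0∞) ≠ ∞ := natCast_ne_top m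
  constructor
  · -- first inequality
    by_cases hc : ν ≪ ωN ∧ Integrable (llr ν ωN) ν
    · obtain ⟨hACk, hIntk, hineq⟩ := main_ind μ hk m N hkN (Nat.div_mul_le_self N k) ν
        inferInstance hνexch hc.1 hc.2
      have hI0 : 0 ≤ ∫ x, llr ν ωN x ∂ν := integral_llr_nonneg ν ωN hc.1 hc.2
      have hc' : ν ≪ ωN ∧ Integrable (fun x => Real.log (ν.rnDeriv ωN x).toReal) ν := hc
      have hEntN : Ent ν ωN = ENNReal.ofReal (∫ x, llr ν ωN x ∂ν) := by
        unfold Ent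
        rw [if_pos hc']
        rfl
      have hEntk : Ent (ν.map (fun v (i : Fin k) => v (Fin.castLE hkN i))) ωk
          = ENNReal.ofReal (∫ y, llr (ν.map (fun v (i : Fin k) => v (Fin.castLE hkN i))) ωk y
            ∂(ν.map (fun v (i : Fin k) => v (Fin.castLE hkN i)))) := by
        have hck : (ν.map (fun v (i : Fin k) => v (Fin.castLE hkN i))) ≪ ωk ∧
            Integrable (fun y => Real.log
              (((ν.map (fun v (i : Fin k) => v (Fin.castLE hkN i))).rnDeriv ωk y)).toReal)
              (ν.map (fun v (i : Fin k) => v (Fin.castLE hkN i))) := ⟨hACk, hIntk⟩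
        unfold Ent
        rw [if_pos hck]
        rfl
      rw [hEntN, hEntk]
      set J := ∫ y, llr (ν.map (fun v (i : Fin k) => v (Fin.castLE hkN i))) ωk y
        ∂(ν.map (fun v (i : Fin k) => v (Fin.castLE hkN i))) with hJdef
      set I := ∫ x, llr ν ωN x ∂ν with hIdef
      rcases le_or_gt J 0 with hJ0 | hJ0
      · rw [ENNReal.ofReal_eq_zero.mpr hJ0]
        exact zero_le
      · have key : (m : ℝ≥0∞) * ENNReal.ofReal J ≤ ENNReal.ofReal I := by
          calc (m : ℝ≥0∞) * ENNReal.ofReal J = ENNReal.ofReal ((m : ℝ) * J) := by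
                rw [ENNReal.ofReal_mul (Nat.cast_nonneg m), ENNReal.ofReal_natCast]
            _ ≤ ENNReal.ofReal I := ENNReal.ofReal_le_ofReal hineq
        calc ENNReal.ofReal J = (m : ℝ≥0∞)⁻¹ * ((m : ℝ≥0∞) * ENNReal.ofReal J) := by
              rw [← mul_assoc, ENNReal.inv_mul_cancel hm0 hmtop, one_mul]
          _ ≤ (m : ℝ≥0∞)⁻¹ * ENNReal.ofReal I := mul_le_mul_right key _
    · have hc' : ¬ (ν ≪ ωN ∧ Integrable (fun x => Real.log (ν.rnDeriv ωN x).toReal) ν) :=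
        fun h => hc ⟨h.1, h.2⟩
      have hEntN : Ent ν ωN = ⊤ := by
        unfold Ent
        rw [if_neg hc']
      rw [hEntN, ENNReal.mul_top (by simp [hm0, hmtop])]
      exact le_top
  · -- second inequality: arithmetic
    refine mul_le_mul_left ?_ _
    have hN0 : (N : ℝ≥0∞) ≠ 0 := Nat.cast_ne_zero.mpr (by omega)
    have hNtop : (N : ℝ≥0∞) ≠ ∞ := natCast_ne_top N
    rw [ENNReal.le_div_iff_mul_le (Or.inl hN0) (Or.inl hNtop)]
    have hnat : N ≤ 2 * (k * m) := by
      have h1 := Nat.div_add_mod N k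
      have h2 : N % k < k := Nat.mod_lt N (by omega)
      have h3 : k ≤ k * m := Nat.le_mul_of_pos_right k (by omega)
      rw [← hmdef] at h1
      omega
    have hcast : (N : ℝ≥0∞) ≤ 2 * (k : ℝ≥0∞) * (m : ℝ≥0∞) := by
      calc (N : ℝ≥0∞) ≤ ((2 * (k * m) : ℕ) : ℝ≥0∞) := by exact_mod_cast hnat
        _ = 2 * (k : ℝ≥0∞) * (m : ℝ≥0∞) := by push_cast; ring
    calc (m : ℝ≥0∞)⁻¹ * N ≤ (m : ℝ≥0∞)⁻¹ * (2 * (k : ℝ≥0∞) * (m : ℝ≥0∞)) :=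
          mul_le_mul_right hcast _
      _ = 2 * (k : ℝ≥0∞) * ((m : ℝ≥0∞)⁻¹ * (m : ℝ≥0∞)) := by ring
      _ = 2 * (k : ℝ≥0∞) := by rw [ENNReal.inv_mul_cancel hm0 hmtop, mul_one]
end

section
/- Let A be a real m × m matrix and M a real m × d matrix, and suppose Kalman's rank condition holds for some integer 1 ≤ l ≤ m, i.e. the m × (ld) block matrix [M, AM, …, A^{l−1}M] has rank m. Then for every t > 0 the matrix Q_t := ∫₀^t (s(t−s)/t²) e^{−sA} M Mᵀ e^{−sAᵀ} ds is symmetric and positive definite; in particular Q_t is invertible. -/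
open Matrix intervalIntegral

section Aux

/-- Dot-product against a fixed pair of vectors, as a linear map on square matrices. -/
noncomputable def Ldot {m : ℕ} (r c : Fin m → ℝ) : Matrix (Fin m) (Fin m) ℝ →ₗ[ℝ] ℝ where
  toFun N := r ⬝ᵥ (N *ᵥ c)
  map_add' N₁ N₂ := by
    show r ⬝ᵥ ((N₁ + N₂) *ᵥ c) = _
    rw [Matrix.add_mulVec, dotProduct_add]
  map_smul' a N := by
    show r ⬝ᵥ ((a • N) *ᵥ c) = _
    rw [Matrix.smul_mulVec, dotProduct_smul]
    rfl

lemma aux_cont {m : ℕ} (B : Matrix (Fin m) (Fin m) ℝ) (r c : Fin m → ℝ) :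
    Continuous fun s : ℝ => r ⬝ᵥ (NormedSpace.exp (s • B) *ᵥ c) := by
  letI : SeminormedRing (Matrix (Fin m) (Fin m) ℝ) := Matrix.linftyOpSemiNormedRing
  letI : NormedRing (Matrix (Fin m) (Fin m) ℝ) := Matrix.linftyOpNormedRing
  letI : NormedAlgebra ℝ (Matrix (Fin m) (Fin m) ℝ) := Matrix.linftyOpNormedAlgebra
  have h1 : Continuous fun s : ℝ => NormedSpace.exp (s • B) :=
    (continuous_iff_continuousAt.2 fun x => (NormedSpace.exp_analytic (𝕂 := ℝ) x).continuousAt).comp (continuous_id.smul continuous_const)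
  exact ((Ldot r c).toContinuousLinearMap.continuous).comp h1

lemma aux_deriv {m : ℕ} (B : Matrix (Fin m) (Fin m) ℝ) (r c : Fin m → ℝ) (s : ℝ) :
    HasDerivAt (fun u : ℝ => r ⬝ᵥ (NormedSpace.exp (u • B) *ᵥ c))
      (r ⬝ᵥ ((B * NormedSpace.exp (s • B)) *ᵥ c)) s := by
  letI : SeminormedRing (Matrix (Fin m) (Fin m) ℝ) := Matrix.linftyOpSemiNormedRing
  letI : NormedRing (Matrix (Fin m) (Fin m) ℝ) := Matrix.linftyOpNormedRing
  letI : NormedAlgebra ℝ (Matrix (Fin m) (Fin m) ℝ) := Matrix.linftyOpNormedAlgebra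
  have h := hasDerivAt_exp_smul_const' (𝕂 := ℝ) B s
  exact ((Ldot r c).toContinuousLinearMap.hasFDerivAt).comp_hasDerivAt s h

lemma aux_rank {m : ℕ} {n : Type*} [Fintype n] (K : Matrix (Fin m) n ℝ)
    (hK : K.rank = m) {x : Fin m → ℝ} (hx : x ᵥ* K = 0) : x = 0 := by
  classical
  have h1 : Kᵀ.rank = m := by rw [Matrix.rank_transpose]; exact hK
  have hadd := LinearMap.finrank_range_add_finrank_ker (Kᵀ.mulVecLin)
  have hdom : Module.finrank ℝ (Fin m → ℝ) = m := by simp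
  rw [hdom] at hadd
  have hrange : Module.finrank ℝ (LinearMap.range Kᵀ.mulVecLin) = m := h1
  rw [hrange] at hadd
  have hker0 : Module.finrank ℝ (LinearMap.ker Kᵀ.mulVecLin) = 0 := by omega
  have hker : LinearMap.ker Kᵀ.mulVecLin = ⊥ := Submodule.finrank_eq_zero.mp hker0
  have hx' : Kᵀ.mulVecLin x = 0 := by
    rw [Matrix.mulVecLin_apply, Matrix.mulVec_transpose]; exact hx
  have : x ∈ LinearMap.ker Kᵀ.mulVecLin := hx'
  rw [hker] at this
  simpa using this

end Aux

/-- The matrix `Q_t = ∫₀ᵗ (s(t−s)/t²) e^{−sA} M Mᵀ e^{−sAᵀ} ds`, defined entrywise. -/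
noncomputable def Qmat {m d : ℕ} (A : Matrix (Fin m) (Fin m) ℝ) (M : Matrix (Fin m) (Fin d) ℝ)
    (t : ℝ) : Matrix (Fin m) (Fin m) ℝ :=
  Matrix.of fun i j => ∫ s in (0:ℝ)..t,
    (s * (t - s) / t ^ 2) *
      (NormedSpace.exp ((-s) • A) * M * Mᵀ * NormedSpace.exp ((-s) • Aᵀ)) i j

/-- If Kalman's rank condition `Rank[M, AM, …, A^{l−1}M] = m` holds for some `1 ≤ l ≤ m`,
then for every `t > 0` the matrix `Q_t` is symmetric, positive definite, and invertible. -/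
theorem qmat_posDef_of_kalman {m d : ℕ} (l : ℕ) (hl1 : 1 ≤ l) (hlm : l ≤ m)
    (A : Matrix (Fin m) (Fin m) ℝ) (M : Matrix (Fin m) (Fin d) ℝ)
    (hKalman :
      (Matrix.of fun (i : Fin m) (p : Fin l × Fin d) => (A ^ (p.1 : ℕ) * M) i p.2).rank = m) :
    ∀ t : ℝ, 0 < t → (Qmat A M t).IsSymm ∧ (Qmat A M t).PosDef ∧ IsUnit (Qmat A M t) := by
  intro t ht
  have ht2 : (0:ℝ) < t ^ 2 := by positivity
  set N : ℝ → Matrix (Fin m) (Fin m) ℝ := fun s => NormedSpace.exp ((-s) • A) with hN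
  set P : ℝ → Matrix (Fin m) (Fin d) ℝ := fun s => N s * M with hP
  set w : ℝ → ℝ := fun s => s * (t - s) / t ^ 2 with hw
  have hE : ∀ s : ℝ, NormedSpace.exp ((-s) • Aᵀ) = (N s)ᵀ := by
    intro s
    rw [hN, ← Matrix.transpose_smul, Matrix.exp_transpose]
  -- entrywise formula for Qmat
  have hQentry : ∀ i j, Qmat A M t i j = ∫ s in (0:ℝ)..t, w s * (P s * (P s)ᵀ) i j := by
    intro i j
    show (∫ s in (0:ℝ)..t, (s * (t - s) / t ^ 2) *
        (NormedSpace.exp ((-s) • A) * M * Mᵀ * NormedSpace.exp ((-s) • Aᵀ)) i j) = _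
    congr 1
    funext s
    have h2 : NormedSpace.exp ((-s) • A) * M * Mᵀ * NormedSpace.exp ((-s) • Aᵀ)
        = P s * (P s)ᵀ := by
      rw [hE]
      show N s * M * Mᵀ * (N s)ᵀ = (N s * M) * (N s * M)ᵀ
      rw [Matrix.transpose_mul, ← Matrix.mul_assoc]
    rw [h2]
  -- continuity facts
  have hNc : Continuous N := by
    letI : SeminormedRing (Matrix (Fin m) (Fin m) ℝ) := Matrix.linftyOpSemiNormedRing
    letI : NormedRing (Matrix (Fin m) (Fin m) ℝ) := Matrix.linftyOpNormedRing
    letI : NormedAlgebra ℝ (Matrix (Fin m) (Fin m) ℝ) := Matrix.linftyOpNormedAlgebra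
    exact (continuous_iff_continuousAt.2 fun x => (NormedSpace.exp_analytic (𝕂 := ℝ) x).continuousAt).comp (continuous_neg.smul continuous_const)
  have hPc : Continuous P := hNc.matrix_mul continuous_const
  have hwc : Continuous w := by
    apply Continuous.div_const
    exact continuous_id.mul (continuous_const.sub continuous_id)
  have hGc : ∀ i j, Continuous fun s => w s * (P s * (P s)ᵀ) i j := fun i j =>
    hwc.mul ((hPc.matrix_mul hPc.matrix_transpose).matrix_elem i j)
  have hquad : ∀ (x : Fin m → ℝ) (s : ℝ),
      x ⬝ᵥ ((P s * (P s)ᵀ) *ᵥ x) = ∑ k, (x ᵥ* P s) k ^ 2 := by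
    intro x s
    rw [← Matrix.mulVec_mulVec, Matrix.dotProduct_mulVec, Matrix.mulVec_transpose]
    simp [dotProduct, sq]
  -- the quadratic form as an integral
  have key : ∀ x : Fin m → ℝ, x ⬝ᵥ (Qmat A M t *ᵥ x)
      = ∫ s in (0:ℝ)..t, w s * ∑ k, (x ᵥ* P s) k ^ 2 := by
    intro x
    have step1 : x ⬝ᵥ (Qmat A M t *ᵥ x)
        = ∑ i, ∑ j, ∫ s in (0:ℝ)..t, x i * (w s * (P s * (P s)ᵀ) i j) * x j := by
      calc x ⬝ᵥ (Qmat A M t *ᵥ x) = ∑ i, ∑ j, x i * Qmat A M t i j * x j := by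
            simp [dotProduct, Matrix.mulVec, Finset.mul_sum, mul_assoc]
        _ = ∑ i, ∑ j, ∫ s in (0:ℝ)..t, x i * (w s * (P s * (P s)ᵀ) i j) * x j := by
            refine Finset.sum_congr rfl fun i _ => Finset.sum_congr rfl fun j _ => ?_
            rw [hQentry i j, ← intervalIntegral.integral_const_mul,
              ← intervalIntegral.integral_mul_const]
    rw [step1]
    have step2 : ∀ i : Fin m,
        (∑ j, ∫ s in (0:ℝ)..t, x i * (w s * (P s * (P s)ᵀ) i j) * x j)
          = ∫ s in (0:ℝ)..t, ∑ j, x i * (w s * (P s * (P s)ᵀ) i j) * x j := by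
      intro i
      refine (intervalIntegral.integral_finset_sum fun j _ => ?_).symm
      exact ((continuous_const.mul (hGc i j)).mul continuous_const).intervalIntegrable _ _
    rw [Finset.sum_congr rfl fun i _ => step2 i]
    have hintsum : ∀ i ∈ (Finset.univ : Finset (Fin m)), IntervalIntegrable
        (fun s => ∑ j, x i * (w s * (P s * (P s)ᵀ) i j) * x j) MeasureTheory.volume 0 t :=
      fun i _ => Continuous.intervalIntegrable
        (continuous_finset_sum _ fun j _ =>
          (continuous_const.mul (hGc i j)).mul continuous_const) _ _
    rw [← intervalIntegral.integral_finset_sum hintsum]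
    congr 1
    funext s
    have h1 : ∑ i, ∑ j, x i * (w s * (P s * (P s)ᵀ) i j) * x j
        = w s * (x ⬝ᵥ ((P s * (P s)ᵀ) *ᵥ x)) := by
      simp only [dotProduct, Matrix.mulVec, Finset.mul_sum]
      refine Finset.sum_congr rfl fun i _ => Finset.sum_congr rfl fun j _ => ?_
      ring
    rw [h1, hquad]
  -- continuity of the scalar integrand
  have hfc : ∀ x : Fin m → ℝ, Continuous fun s => w s * ∑ k, (x ᵥ* P s) k ^ 2 := by
    intro x
    apply hwc.mul
    apply continuous_finset_sum
    intro k _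
    have h1 : Continuous fun s => x ᵥ* P s := continuous_const.matrix_vecMul hPc
    exact ((continuous_apply k).comp h1).pow 2
  -- nonnegativity of the weight on [0, t]
  have hwnn : ∀ s ∈ Set.Icc (0:ℝ) t, 0 ≤ w s := by
    intro s hs
    have h1 : 0 ≤ s * (t - s) := mul_nonneg hs.1 (by linarith [hs.2])
    positivity
  -- positivity of the quadratic form
  have hpos : ∀ x : Fin m → ℝ, x ≠ 0 → 0 < x ⬝ᵥ (Qmat A M t *ᵥ x) := by
    intro x hx
    rw [key x]
    refine intervalIntegral.integral_pos ht ((hfc x).continuousOn) ?_ ?_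
    · intro s hs
      have h1 : 0 ≤ w s := hwnn s ⟨le_of_lt hs.1, hs.2⟩
      exact mul_nonneg h1 (Finset.sum_nonneg fun k _ => sq_nonneg _)
    · by_contra hno
      push_neg at hno
      -- the integrand vanishes identically on (0, t)
      have hvan : ∀ s ∈ Set.Ioo (0:ℝ) t, ∀ k, (x ᵥ* P s) k = 0 := by
        intro s hs k
        have hle := hno s ⟨le_of_lt hs.1, le_of_lt hs.2⟩
        have hwpos : 0 < w s := by
          have h1 : 0 < s * (t - s) := mul_pos hs.1 (by linarith [hs.2])
          positivity
        have hsumnn : 0 ≤ ∑ k, (x ᵥ* P s) k ^ 2 :=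
          Finset.sum_nonneg fun k _ => sq_nonneg _
        have hsum0 : ∑ k, (x ᵥ* P s) k ^ 2 = 0 := by
          rcases lt_or_eq_of_le hsumnn with h | h
          · exact absurd (mul_pos hwpos h) (not_lt.mpr hle)
          · exact h.symm
        have := (Finset.sum_eq_zero_iff_of_nonneg fun k _ => sq_nonneg ((x ᵥ* P s) k)).mp
          hsum0 k (Finset.mem_univ k)
        exact pow_eq_zero_iff (two_ne_zero) |>.mp this
      -- translate into the exponential form with B = -Aᵀ
      set B : Matrix (Fin m) (Fin m) ℝ := -Aᵀ with hB
      have hFs : ∀ s : ℝ, NormedSpace.exp (s • B) = (N s)ᵀ := by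
        intro s
        rw [← hE s]
        congr 1
        rw [hB, neg_smul, smul_neg]
      -- base case: for each column r_k of M
      have hbase : ∀ s ∈ Set.Ioo (0:ℝ) t, ∀ k : Fin d,
          ((fun i => M i k) ᵥ* B ^ 0) ⬝ᵥ (NormedSpace.exp (s • B) *ᵥ x) = 0 := by
        intro s hs k
        rw [pow_zero, Matrix.vecMul_one, hFs, Matrix.mulVec_transpose]
        have h2 : (fun i => M i k) ⬝ᵥ (x ᵥ* N s) = (x ᵥ* P s) k := by
          rw [hP, dotProduct_comm, ← Matrix.vecMul_vecMul]
          simp [Matrix.vecMul, dotProduct]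
        rw [h2]
        exact hvan s hs k
      -- induction: all powers vanish on (0, t)
      have hind : ∀ p : ℕ, ∀ s ∈ Set.Ioo (0:ℝ) t, ∀ k : Fin d,
          ((fun i => M i k) ᵥ* B ^ p) ⬝ᵥ (NormedSpace.exp (s • B) *ᵥ x) = 0 := by
        intro p
        induction p with
        | zero => exact hbase
        | succ p ih =>
          intro s hs k
          have hd := aux_deriv B ((fun i => M i k) ᵥ* B ^ p) x s
          have h0 : HasDerivAt
              (fun u : ℝ => ((fun i => M i k) ᵥ* B ^ p) ⬝ᵥ (NormedSpace.exp (u • B) *ᵥ x))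
              0 s := by
            refine (hasDerivAt_const s (0:ℝ)).congr_of_eventuallyEq ?_
            filter_upwards [Ioo_mem_nhds hs.1 hs.2] with u hu
            exact ih u hu k
          have hval := h0.unique hd
          rw [← Matrix.mulVec_mulVec, Matrix.dotProduct_mulVec, Matrix.vecMul_vecMul,
            ← pow_succ] at hval
          exact hval.symm
      -- pass to the boundary point s = 0
      have hzero : ∀ p : ℕ, ∀ k : Fin d, ((fun i => M i k) ᵥ* B ^ p) ⬝ᵥ x = 0 := by
        intro p k
        have hcont := aux_cont B ((fun i => M i k) ᵥ* B ^ p) x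
        have heq : Set.EqOn
            (fun s : ℝ => ((fun i => M i k) ᵥ* B ^ p) ⬝ᵥ (NormedSpace.exp (s • B) *ᵥ x))
            (fun _ => (0:ℝ)) (Set.Ioo 0 t) := fun s hs => hind p s hs k
        have hcl := heq.closure hcont continuous_const
        have h0mem : (0:ℝ) ∈ closure (Set.Ioo (0:ℝ) t) := by
          rw [closure_Ioo (ne_of_lt ht)]
          exact ⟨le_refl 0, le_of_lt ht⟩
        have := hcl h0mem
        simpa [NormedSpace.exp_zero] using this
      -- deduce that x annihilates the Kalman matrix
      have hxK : x ᵥ* (Matrix.of fun (i : Fin m) (p : Fin l × Fin d) =>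
          (A ^ (p.1 : ℕ) * M) i p.2) = 0 := by
        funext pk
        obtain ⟨p, k⟩ := pk
        have h1 := hzero (p : ℕ) k
        rw [← Matrix.dotProduct_mulVec] at h1
        have hBp : B ^ (p : ℕ) = ((-1 : ℝ) ^ (p : ℕ)) • ((A ^ (p : ℕ))ᵀ) := by
          rw [hB, ← neg_one_smul ℝ Aᵀ, smul_pow, Matrix.transpose_pow]
        rw [hBp, Matrix.smul_mulVec, dotProduct_smul, smul_eq_mul,
          Matrix.mulVec_transpose] at h1
        have h2 : (fun i => M i k) ⬝ᵥ (x ᵥ* A ^ (p : ℕ)) = (x ᵥ* (A ^ (p : ℕ) * M)) k := by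
          rw [dotProduct_comm, ← Matrix.vecMul_vecMul]
          simp [Matrix.vecMul, dotProduct]
        rw [h2] at h1
        have h3 : (x ᵥ* (A ^ (p : ℕ) * M)) k = 0 := by
          have hne : ((-1:ℝ) ^ (p : ℕ)) ≠ 0 := by
            simp [pow_ne_zero]
          exact (mul_eq_zero.mp h1).resolve_left hne
        have h4 : (x ᵥ* Matrix.of fun (i : Fin m) (q : Fin l × Fin d) =>
            (A ^ (q.1 : ℕ) * M) i q.2) ⟨p, k⟩ = (x ᵥ* (A ^ (p : ℕ) * M)) k := by
          simp [Matrix.vecMul, dotProduct]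
        rw [Pi.zero_apply, h4, h3]
      exact hx (aux_rank _ hKalman hxK)
  -- symmetry
  have hsymm : (Qmat A M t).IsSymm := by
    unfold Matrix.IsSymm
    ext i j
    rw [Matrix.transpose_apply, hQentry i j, hQentry j i]
    congr 1
    funext s
    have h1 : (P s * (P s)ᵀ)ᵀ = P s * (P s)ᵀ := by
      rw [Matrix.transpose_mul, Matrix.transpose_transpose]
    have h2 : (P s * (P s)ᵀ) j i = (P s * (P s)ᵀ) i j := by
      conv_lhs => rw [← h1]
      rw [Matrix.transpose_apply]
    rw [h2]
  have hherm : (Qmat A M t).IsHermitian := by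
    unfold Matrix.IsHermitian
    ext i j
    rw [Matrix.conjTranspose_apply, star_trivial]
    have := congrFun (congrFun hsymm i) j
    rw [Matrix.transpose_apply] at this
    exact this
  have hposdef : (Qmat A M t).PosDef := by
    refine Matrix.PosDef.of_dotProduct_mulVec_pos hherm fun x hx => ?_
    have := hpos x hx
    simpa [star_trivial] using this
  exact ⟨hsymm, hposdef, hposdef.isUnit⟩
end

section
/- Let A be a real m × m matrix, M a real m × d matrix, t₀ > 0, and suppose the matrix Q_{t₀} := ∫₀^{t₀} (s(t₀−s)/t₀²) e^{−sA} M Mᵀ e^{−sAᵀ} ds is invertible. Let v¹ ∈ ℝ^m, v² ∈ ℝ^d, and let φ : [0, t₀] → ℝ^d be continuous with φ(0) = 0. Define V := ∫₀^{t₀} e^{−rA} M [ ((t₀−r)/t₀) v² − (r/t₀) φ(t₀) + φ(r) ] dr and α(s) := (s/t₀)(−φ(t₀) − v²) − (s(t₀−s)/t₀²) Mᵀ e^{−sAᵀ} Q_{t₀}^{−1} (v¹ + V) for s ∈ [0, t₀]. Then v² + α(t₀) + φ(t₀) = 0 and e^{A t₀} v¹ + ∫₀^{t₀} e^{A(t₀−s)}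 M [ v² + α(s) + φ(s) ] ds = 0. -/
open Matrix intervalIntegral

section auxlemmas

attribute [local instance] Matrix.linftyOpNormedRing Matrix.linftyOpNormedAlgebra

lemma cont_exp_neg_smul {m : ℕ} (A : Matrix (Fin m) (Fin m) ℝ) :
    Continuous fun s : ℝ => NormedSpace.exp ((-s) • A) :=
  NormedSpace.exp_continuous.comp (continuous_id.neg.smul continuous_const)

lemma exp_smul_sub {m : ℕ} (A : Matrix (Fin m) (Fin m) ℝ) (t s : ℝ) :
    NormedSpace.exp ((t - s) • A) =
      NormedSpace.exp (t • A) * NormedSpace.exp ((-s) • A) := by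
  rw [sub_smul, sub_eq_add_neg, ← neg_smul, Matrix.exp_add_of_commute]
  exact ((Commute.refl A).smul_left t).smul_right (-s)

end auxlemmas

lemma contOn_mulVec {n p : ℕ} {B : ℝ → Matrix (Fin n) (Fin p) ℝ} {v : ℝ → Fin p → ℝ}
    {s : Set ℝ} (hB : ContinuousOn B s) (hv : ContinuousOn v s) :
    ContinuousOn (fun r => (B r).mulVec (v r)) s := by
  apply continuousOn_pi.2
  intro i
  simp only [Matrix.mulVec, dotProduct]
  refine continuousOn_finset_sum _ (fun j _ => ?_)
  exact (((continuous_apply j).comp (continuous_apply i)).comp_continuousOn hB).mul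
    ((continuous_apply j).comp_continuousOn hv)

/-- With `Q_{t₀}` invertible, `v¹ ∈ ℝ^m`, `v² ∈ ℝ^d`, `φ : [0,t₀] → ℝ^d` continuous with
`φ(0) = 0`, and
`V := ∫₀^{t₀} e^{−rA} M [((t₀−r)/t₀) v² − (r/t₀) φ(t₀) + φ(r)] dr`,
`α(s) := (s/t₀)(−φ(t₀) − v²) − (s(t₀−s)/t₀²) Mᵀ e^{−sAᵀ} Q_{t₀}^{−1}(v¹ + V)`,
one has `v² + α(t₀) + φ(t₀) = 0` and
`e^{At₀}v¹ + ∫₀^{t₀} e^{A(t₀−s)} M [v² + α(s) + φ(s)] ds = 0`. -/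
theorem control_identity {m d : ℕ}
    (A : Matrix (Fin m) (Fin m) ℝ) (M : Matrix (Fin m) (Fin d) ℝ)
    (t₀ : ℝ) (ht₀ : 0 < t₀) (hQ : IsUnit (Qmat A M t₀))
    (v1 : Fin m → ℝ) (v2 : Fin d → ℝ)
    (φ : ℝ → Fin d → ℝ) (hφ : ContinuousOn φ (Set.Icc 0 t₀)) (hφ0 : φ 0 = 0)
    (V : Fin m → ℝ)
    (hV : V = ∫ r in (0:ℝ)..t₀, (NormedSpace.exp ((-r) • A) * M).mulVec
        (((t₀ - r) / t₀) • v2 - (r / t₀) • φ t₀ + φ r))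
    (α : ℝ → Fin d → ℝ)
    (hα : ∀ s : ℝ, α s = (s / t₀) • (-φ t₀ - v2) -
        (s * (t₀ - s) / t₀ ^ 2) •
          (Mᵀ * NormedSpace.exp ((-s) • Aᵀ) * (Qmat A M t₀)⁻¹).mulVec (v1 + V)) :
    v2 + α t₀ + φ t₀ = 0 ∧
    (NormedSpace.exp (t₀ • A)).mulVec v1 +
        (∫ s in (0:ℝ)..t₀,
          (NormedSpace.exp ((t₀ - s) • A) * M).mulVec (v2 + α s + φ s)) = 0 := by
  have ht₀' : t₀ ≠ 0 := ht₀.ne'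
  have hdet : IsUnit (Qmat A M t₀).det := (Matrix.isUnit_iff_isUnit_det _).mp hQ
  have part1 : v2 + α t₀ + φ t₀ = 0 := by
    rw [hα t₀, div_self ht₀', sub_self, mul_zero, zero_div, zero_smul, sub_zero, one_smul]
    abel
  refine ⟨part1, ?_⟩
  set Q := Qmat A M t₀ with hQdef
  set w : Fin m → ℝ := (Q⁻¹).mulVec (v1 + V) with hw
  set E : ℝ → Matrix (Fin m) (Fin m) ℝ := fun s => NormedSpace.exp ((-s) • A) with hE
  set Eu : ℝ → Matrix (Fin m) (Fin m) ℝ := fun s => NormedSpace.exp ((-s) • Aᵀ) with hEu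
  have hcE : Continuous E := cont_exp_neg_smul A
  have hcEu : Continuous Eu := cont_exp_neg_smul Aᵀ
  set Et := NormedSpace.exp (t₀ • A) with hEt
  have hsplit : ∀ s : ℝ, NormedSpace.exp ((t₀ - s) • A) = Et * E s :=
    fun s => exp_smul_sub A t₀ s
  set f1 : ℝ → Fin m → ℝ := fun r => (E r * M).mulVec
      (((t₀ - r) / t₀) • v2 - (r / t₀) • φ t₀ + φ r) with hf1
  set c : ℝ → ℝ := fun s => s * (t₀ - s) / t₀ ^ 2 with hc
  set F : ℝ → Matrix (Fin m) (Fin m) ℝ := fun s => E s * M * Mᵀ * Eu s with hF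
  set f2 : ℝ → Fin m → ℝ := fun s => c s • (F s).mulVec w with hf2
  have hcF : Continuous F := ((hcE.matrix_mul continuous_const).matrix_mul
    continuous_const).matrix_mul hcEu
  have hcc : Continuous c := by
    apply Continuous.div_const
    exact continuous_id.mul (continuous_const.sub continuous_id)
  -- pointwise identity for the integrand
  have key : ∀ s : ℝ, (NormedSpace.exp ((t₀ - s) • A) * M).mulVec (v2 + α s + φ s)
      = Et.mulVec (f1 s) - Et.mulVec (f2 s) := by
    intro s
    have hv : v2 + α s + φ s =
        (((t₀ - s) / t₀) • v2 - (s / t₀) • φ t₀ + φ s)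
          - c s • (Mᵀ * Eu s * Q⁻¹).mulVec (v1 + V) := by
      rw [hα s]
      simp only [hEu]
      generalize (Mᵀ * NormedSpace.exp ((-s) • Aᵀ) * Q⁻¹).mulVec (v1 + V) = x
      funext i
      simp only [Pi.add_apply, Pi.sub_apply, Pi.smul_apply, Pi.neg_apply, smul_eq_mul, hc]
      field_simp
      ring
    rw [hsplit s, hv, Matrix.mulVec_sub, Matrix.mulVec_smul]
    congr 1
    · rw [Matrix.mulVec_mulVec, Matrix.mul_assoc]
    · rw [Matrix.mulVec_mulVec, Matrix.mulVec_smul, Matrix.mulVec_mulVec,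
        Matrix.mulVec_mulVec]
      congr 2
      simp only [hF, Matrix.mul_assoc]
  -- continuity / integrability
  have hφ' : ContinuousOn φ (Set.uIcc 0 t₀) := by
    rwa [Set.uIcc_of_le ht₀.le]
  have hcont_f1 : ContinuousOn f1 (Set.uIcc 0 t₀) := by
    refine contOn_mulVec (hcE.matrix_mul continuous_const).continuousOn ?_
    refine ContinuousOn.add (ContinuousOn.sub ?_ ?_) hφ'
    · exact (((continuous_const.sub continuous_id).div_const t₀).smul
        continuous_const).continuousOn
    · exact ((continuous_id.div_const t₀).smul continuous_const).continuousOn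
  have hcont_f2 : Continuous f2 :=
    hcc.smul (hcF.matrix_mulVec continuous_const)
  have hint_f1 : IntervalIntegrable f1 MeasureTheory.volume 0 t₀ :=
    hcont_f1.intervalIntegrable
  have hint_f2 : IntervalIntegrable f2 MeasureTheory.volume 0 t₀ :=
    (hcont_f2.intervalIntegrable 0 t₀)
  -- continuous linear map given by Et
  set L : (Fin m → ℝ) →L[ℝ] (Fin m → ℝ) :=
    LinearMap.toContinuousLinearMap (Matrix.mulVecLin Et) with hL
  have hLapp : ∀ x, L x = Et.mulVec x := by
    intro x
    rw [hL, LinearMap.coe_toContinuousLinearMap', Matrix.mulVecLin_apply]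
  -- the integral of f2 is Q *ᵥ w
  have hf2int : (∫ s in (0:ℝ)..t₀, f2 s) = Q.mulVec w := by
    funext i
    have hproj := (ContinuousLinearMap.proj (R := ℝ)
      (φ := fun _ : Fin m => ℝ) i).intervalIntegral_comp_comm hint_f2
    simp only [ContinuousLinearMap.proj_apply] at hproj
    rw [← hproj]
    have : ∀ s : ℝ, f2 s i = ∑ j, (c s * F s i j) * w j := by
      intro s
      simp only [hf2, Pi.smul_apply, smul_eq_mul, Matrix.mulVec, dotProduct,
        Finset.mul_sum]
      exact Finset.sum_congr rfl fun j _ => by ring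
    simp only [this]
    rw [intervalIntegral.integral_finset_sum]
    · have hQij : ∀ j, (∫ s in (0:ℝ)..t₀, c s * F s i j) = Q i j := fun j => rfl
      simp only [Matrix.mulVec, dotProduct]
      refine Finset.sum_congr rfl fun j _ => ?_
      rw [intervalIntegral.integral_mul_const, hQij j]
    · intro j _
      refine Continuous.intervalIntegrable ?_ 0 t₀
      exact ((hcc.mul (((continuous_apply j).comp (continuous_apply i)).comp hcF)).mul
        continuous_const)
  -- main computation
  have hmain : (∫ s in (0:ℝ)..t₀,
      (NormedSpace.exp ((t₀ - s) • A) * M).mulVec (v2 + α s + φ s))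
      = Et.mulVec V - Et.mulVec (v1 + V) := by
    calc (∫ s in (0:ℝ)..t₀, (NormedSpace.exp ((t₀ - s) • A) * M).mulVec (v2 + α s + φ s))
        = ∫ s in (0:ℝ)..t₀, (Et.mulVec (f1 s) - Et.mulVec (f2 s)) := by
          exact intervalIntegral.integral_congr fun s _ => key s
      _ = (∫ s in (0:ℝ)..t₀, L (f1 s)) - (∫ s in (0:ℝ)..t₀, L (f2 s)) := by
          simp only [hLapp]
          exact intervalIntegral.integral_sub
            ((contOn_mulVec continuousOn_const hcont_f1).intervalIntegrable)
            ((continuous_const.matrix_mulVec hcont_f2).intervalIntegrable 0 t₀)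
      _ = L (∫ s in (0:ℝ)..t₀, f1 s) - L (∫ s in (0:ℝ)..t₀, f2 s) := by
          rw [L.intervalIntegral_comp_comm hint_f1, L.intervalIntegral_comp_comm hint_f2]
      _ = Et.mulVec V - Et.mulVec (v1 + V) := by
          have hQw : Q.mulVec w = v1 + V := by
            rw [hw, Matrix.mulVec_mulVec, Matrix.mul_nonsing_inv _ hdet, Matrix.one_mulVec]
          rw [hLapp, hLapp, hf2int, hQw, ← hV]
  rw [hmain, Matrix.mulVec_add]
  abel
end
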